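/- arXiv:2304.10046 — 9 statements merged into one kernel-verified Lean document; each statement's English description precedes it below -/
import Mathlib

section
/- For every integer d ≥ 1 and every even integer q ≥ 2, the variational problem of minimizing B_{d,q}(G)^{2(d+2)} · V_{d,1}(G)^{2q} over all differentiable G : [0,∞) → ℝ that satisfy the q-th order radial moment condition and have V_{d,1}(G) < ∞ has no solution: the objective value is strictly positive at every such feasible G, and yet for every ε > 0 there exists a feasible G whose objective value is less than ε (so the infimum of the objective over the feasible set equals 0 and is not attained). -/
open MeasureTheory Set Filter Topology

/-- Radial moment `B_{d,i}(G) = ∫₀^∞ x^{d−1+i} G(x) dx`. -/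
noncomputable def Bmom (d i : ℕ) (G : ℝ → ℝ) : ℝ :=
  ∫ x in Ioi (0 : ℝ), x ^ (d - 1 + i) * G x

/-- `V_{d,1}(G) = ∫₀^∞ x^{d−1} (G′(x))² dx`. -/
noncomputable def V1 (d : ℕ) (G : ℝ → ℝ) : ℝ :=
  ∫ x in Ioi (0 : ℝ), x ^ (d - 1) * (deriv G x) ^ 2

/-- `b_d = 2 π^{d/2} / Γ(d/2)`. -/
noncomputable def bconst (d : ℕ) : ℝ :=
  2 * Real.pi ^ ((d : ℝ) / 2) / Real.Gamma ((d : ℝ) / 2)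

/-- The `q`-th order radial moment condition, with all integrals converging absolutely:
`B_{d,0}(G) = 1/b_d`, `B_{d,i}(G) = 0` for even `2 ≤ i ≤ q−2`, and `B_{d,q}(G) ≠ 0`. -/
def MomentCond (d q : ℕ) (G : ℝ → ℝ) : Prop :=
  (∀ i, Even i → i ≤ q → IntegrableOn (fun x => x ^ (d - 1 + i) * G x) (Ioi 0)) ∧
  Bmom d 0 G = (bconst d)⁻¹ ∧
  (∀ i, Even i → 2 ≤ i → i ≤ q - 2 → Bmom d i G = 0) ∧
  Bmom d q G ≠ 0

/-- `g` changes its sign (exactly) `k` times on `[0,∞)`: there are points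
`0 = x₀ < x₁ < ⋯ < x_{k+1} = ∞` such that on each `[x_{j−1}, x_j]` the function has a
constant weak sign `s_j ∈ {±1}`, is not identically zero there, and consecutive signs
alternate. -/
def ChangesSign (g : ℝ → ℝ) (k : ℕ) : Prop :=
  ∃ (t : Fin (k + 2) → EReal) (s : Fin (k + 1) → ℝ),
    StrictMono t ∧ t 0 = 0 ∧ t (Fin.last (k + 1)) = ⊤ ∧
    (∀ j, s j = 1 ∨ s j = -1) ∧
    (∀ j : Fin k, s j.succ = - s j.castSucc) ∧
    ∀ j : Fin (k + 1),
      (∀ x : ℝ, t j.castSucc ≤ (x : EReal) → (x : EReal) ≤ t j.succ → 0 ≤ s j * g x) ∧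
      (∃ x : ℝ, t j.castSucc ≤ (x : EReal) ∧ (x : EReal) ≤ t j.succ ∧ 0 < s j * g x)

/-- Coefficients of the optimal kernel `G^B_{d,q}`. -/
noncomputable def cB (d q i : ℕ) : ℝ :=
  (-1 : ℝ) ^ (i / 2) * Real.Gamma (((d : ℝ) + q + 4) / 2) * Real.Gamma (((d : ℝ) + q + i) / 2) /
    (Real.pi ^ ((d : ℝ) / 2) * Real.Gamma ((q : ℝ) / 2) * Real.Gamma ((2 + (i : ℝ)) / 2) *
      Real.Gamma (((d : ℝ) + 2 + i) / 2) * Real.Gamma (((q : ℝ) + 4 - i) / 2))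

/-- The optimal radial kernel `G^B_{d,q}(x) = (∑_{i ∈ {0,2,…,q+2}} c_{d,q,i} x^i)·𝟙[x ≤ 1]`. -/
noncomputable def GB (d q : ℕ) : ℝ → ℝ := fun x =>
  if x ≤ 1 then ∑ i ∈ Finset.range (q / 2 + 2), cB d q (2 * i) * x ^ (2 * i) else 0

/-! ### Auxiliary machinery -/

section VP1Aux

open Polynomial

noncomputable def pgF (p : ℝ[X]) : ℝ → ℝ := fun x => p.eval x * Real.exp (-x ^ 2)

lemma pgF_def (p : ℝ[X]) : pgF p = fun x => p.eval x * Real.exp (-x ^ 2) := rfl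

lemma pgF_hasDerivAt (p : ℝ[X]) (x : ℝ) :
    HasDerivAt (pgF p) (pgF (derivative p - 2 * X * p) x) x := by
  have h1 : HasDerivAt (fun y : ℝ => p.eval y) (p.derivative.eval x) x := p.hasDerivAt x
  have h2 : HasDerivAt (fun y : ℝ => Real.exp (-y ^ 2)) (Real.exp (-x ^ 2) * (-(2 * x))) x := by
    have : HasDerivAt (fun y : ℝ => -y ^ 2) (-(2 * x)) x := by
      exact (hasDerivAt_pow 2 x).neg.congr_deriv (by norm_num)
    exact (Real.hasDerivAt_exp _).comp x this
  have h : HasDerivAt (fun y => p.eval y * Real.exp (-y ^ 2)) _ x := h1.mul h2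
  refine h.congr_deriv ?_
  simp [pgF]
  ring

lemma pgF_deriv (p : ℝ[X]) : deriv (pgF p) = pgF (derivative p - 2 * X * p) :=
  funext fun x => (pgF_hasDerivAt p x).deriv

lemma pgF_diff (p : ℝ[X]) (x : ℝ) : DifferentiableAt ℝ (pgF p) x :=
  (pgF_hasDerivAt p x).differentiableAt

lemma integ_aux (n : ℕ) (p : ℝ[X]) {b : ℝ} (hb : 0 < b) :
    IntegrableOn (fun x : ℝ => x ^ n * (p.eval x * Real.exp (-b * x ^ 2))) (Ioi 0) := by
  have key : ∀ m : ℕ, IntegrableOn (fun x : ℝ => x ^ m * Real.exp (-b * x ^ 2)) (Ioi 0) := by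
    intro m
    have h := integrableOn_rpow_mul_exp_neg_mul_sq hb
      (s := m) (by exact_mod_cast neg_one_lt_zero.trans_le (Nat.cast_nonneg m))
    apply h.congr_fun _ measurableSet_Ioi
    intro x hx
    simp [Real.rpow_natCast]
  have heq : EqOn (fun x : ℝ => ∑ i ∈ Finset.range (p.natDegree + 1),
      p.coeff i * (x ^ (n + i) * Real.exp (-b * x ^ 2)))
      (fun x : ℝ => x ^ n * (p.eval x * Real.exp (-b * x ^ 2))) (Ioi 0) := by
    intro x _
    simp only
    rw [Polynomial.eval_eq_sum_range, Finset.sum_mul, Finset.mul_sum]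
    refine Finset.sum_congr rfl fun i _ => ?_
    rw [pow_add]; ring
  refine IntegrableOn.congr_fun ?_ heq measurableSet_Ioi
  exact integrable_finset_sum _ fun i _ => ((key (n + i)).const_mul _)

lemma base_integ (n : ℕ) : IntegrableOn (fun x : ℝ => x ^ n * Real.exp (-x ^ 2)) (Ioi 0) := by
  have := integ_aux n 1 one_pos
  simpa using this

lemma pgF_integrableOn (n : ℕ) (p : ℝ[X]) :
    IntegrableOn (fun x : ℝ => x ^ n * pgF p x) (Ioi 0) := by
  have := integ_aux n p one_pos
  simpa [pgF] using this

lemma pgF_sq_integrableOn (n : ℕ) (p : ℝ[X]) :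
    IntegrableOn (fun x : ℝ => x ^ n * (pgF p x) ^ 2) (Ioi 0) := by
  have h := integ_aux n (p ^ 2) (by norm_num : (0:ℝ) < 2)
  refine IntegrableOn.congr_fun h ?_ measurableSet_Ioi
  intro x _
  have hexp : Real.exp (-(2:ℝ) * x ^ 2) = Real.exp (-x ^ 2) ^ 2 := by
    rw [show Real.exp (-x ^ 2) ^ 2 = Real.exp (-x ^ 2) * Real.exp (-x ^ 2) from sq _,
      ← Real.exp_add]
    congr 1; ring
  simp only [pgF, eval_pow, hexp]
  ring

noncomputable def cpoly {N : ℕ} (c : Fin N → ℝ) : ℝ[X] :=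
  ∑ i : Fin N, Polynomial.monomial (2 * (i : ℕ)) (c i)

lemma cpoly_eval {N : ℕ} (c : Fin N → ℝ) (x : ℝ) :
    (cpoly c).eval x = ∑ i, c i * x ^ (2 * (i : ℕ)) := by
  simp [cpoly, eval_finset_sum]

lemma cpoly_add_smul {N : ℕ} (a v : Fin N → ℝ) (δ : ℝ) :
    cpoly (a + δ • v) = cpoly a + δ • cpoly v := by
  unfold cpoly
  rw [Finset.smul_sum, ← Finset.sum_add_distrib]
  refine Finset.sum_congr rfl fun i _ => ?_
  simp [smul_monomial, Pi.add_apply, Pi.smul_apply, smul_eq_mul, map_add]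

noncomputable def momT (d N : ℕ) : (Fin N → ℝ) →ₗ[ℝ] (Fin N → ℝ) where
  toFun c := fun j => ∑ i : Fin N,
    (∫ x in Ioi (0 : ℝ), x ^ (d - 1 + 2 * (j : ℕ) + 2 * (i : ℕ)) * Real.exp (-x ^ 2)) * c i
  map_add' a b := by
    funext j
    simp [mul_add, Finset.sum_add_distrib]
  map_smul' r a := by
    funext j
    simp [Finset.mul_sum, mul_left_comm]

lemma Bmom_pg (d N : ℕ) (c : Fin N → ℝ) (j : Fin N) :
    Bmom d (2 * (j : ℕ)) (pgF (cpoly c)) = momT d N c j := by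
  unfold Bmom momT
  simp only [LinearMap.coe_mk, AddHom.coe_mk]
  have heq : (fun x : ℝ => x ^ (d - 1 + 2 * (j : ℕ)) * pgF (cpoly c) x)
      = fun x => ∑ i : Fin N,
        (x ^ (d - 1 + 2 * (j : ℕ) + 2 * (i : ℕ)) * Real.exp (-x ^ 2)) * c i := by
    funext x
    rw [pgF_def]
    simp only [cpoly_eval]
    rw [Finset.sum_mul, Finset.mul_sum]
    refine Finset.sum_congr rfl fun i _ => ?_
    rw [pow_add]; ring
  rw [heq, integral_finset_sum _ fun i _ => ((base_integ _).mul_const _)]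
  refine Finset.sum_congr rfl fun i _ => ?_
  rw [integral_mul_const]

lemma momT_inj (d N : ℕ) : Function.Injective (momT d N) := by
  refine (injective_iff_map_eq_zero _).mpr fun c hc => ?_
  set P := cpoly c with hP
  have hzero : ∫ x in Ioi (0 : ℝ),
      x ^ (d - 1) * ((P ^ 2).eval x * Real.exp (-(1:ℝ) * x ^ 2)) = 0 := by
    have h1 : (fun x : ℝ => x ^ (d - 1) * ((P ^ 2).eval x * Real.exp (-(1:ℝ) * x ^ 2)))
        = fun x => ∑ j : Fin N, c j * (x ^ (d - 1 + 2 * (j : ℕ)) * pgF P x) := by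
      funext x
      rw [pgF_def]
      simp only [eval_pow, neg_mul, one_mul, hP, cpoly_eval]
      rw [Finset.sum_congr rfl (fun j (_ : j ∈ (Finset.univ : Finset (Fin N))) =>
        show c j * (x ^ (d - 1 + 2 * (j : ℕ)) *
            ((∑ i : Fin N, c i * x ^ (2 * (i : ℕ))) * Real.exp (-x ^ 2)))
          = (c j * x ^ (2 * (j : ℕ))) * (x ^ (d - 1) *
            ((∑ i : Fin N, c i * x ^ (2 * (i : ℕ))) * Real.exp (-x ^ 2)))
        from by rw [pow_add]; ring), ← Finset.sum_mul]
      ring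
    rw [h1, integral_finset_sum _ fun j _ => ((pgF_integrableOn _ P).const_mul _)]
    refine Finset.sum_eq_zero fun j _ => ?_
    rw [integral_const_mul]
    have hb := Bmom_pg d N c j
    unfold Bmom at hb
    rw [hb, hc]
    simp
  have hint := integ_aux (d - 1) (P ^ 2) one_pos
  have hnonneg : 0 ≤ᵐ[volume.restrict (Ioi (0:ℝ))]
      fun x : ℝ => x ^ (d - 1) * ((P ^ 2).eval x * Real.exp (-(1:ℝ) * x ^ 2)) := by
    refine (ae_restrict_iff' measurableSet_Ioi).mpr (Eventually.of_forall fun x hx => ?_)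
    have hx0 : (0:ℝ) < x := hx
    simp only [eval_pow, Pi.zero_apply]
    positivity
  have hae := (integral_eq_zero_iff_of_nonneg_ae hnonneg hint).mp hzero
  have hS : ∀ᵐ x ∂(volume.restrict (Ioi (0:ℝ))), P.eval x = 0 := by
    filter_upwards [hae, ae_restrict_mem measurableSet_Ioi] with x hx hx0
    have hx0' : (0:ℝ) < x := hx0
    simp only [Pi.zero_apply] at hx
    rcases mul_eq_zero.mp hx with h | h
    · exact absurd h (pow_ne_zero _ hx0'.ne')
    rcases mul_eq_zero.mp h with h | h
    · rw [eval_pow] at h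
      exact pow_eq_zero_iff (two_ne_zero) |>.mp h
    · exact absurd h (Real.exp_pos _).ne'
  have hm : MeasurableSet {x : ℝ | ¬ P.eval x = 0} :=
    ((isClosed_eq (P.continuous_aeval) continuous_const).measurableSet).compl
  have hmeas : volume ({x : ℝ | ¬ P.eval x = 0} ∩ Ioi 0) = 0 := by
    have h := hS
    rw [ae_iff, Measure.restrict_apply hm] at h
    exact h
  have hPzero : P = 0 := by
    apply Polynomial.eq_zero_of_infinite_isRoot
    have hsub : {x : ℝ | P.eval x = 0} ∩ Ioi 0 ⊆ {x | P.IsRoot x} := fun x hx => hx.1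
    refine Set.Infinite.mono hsub ?_
    intro hfin
    have h0 : volume ({x : ℝ | P.eval x = 0} ∩ Ioi 0) = 0 := hfin.measure_zero _
    have hsub2 : Ioi (0:ℝ) ⊆
        ({x : ℝ | P.eval x = 0} ∩ Ioi 0) ∪ ({x : ℝ | ¬ P.eval x = 0} ∩ Ioi 0) := by
      intro x hx
      by_cases h : P.eval x = 0
      · exact Or.inl ⟨h, hx⟩
      · exact Or.inr ⟨h, hx⟩
    have := (measure_mono (μ := volume) hsub2).trans (measure_union_le _ _)
    rw [h0, hmeas, Real.volume_Ioi] at this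
    simp at this
  funext i
  have hco := congrArg (fun p : ℝ[X] => p.coeff (2 * (i : ℕ))) hPzero
  simp only [hP, cpoly, finset_sum_coeff, coeff_monomial, coeff_zero] at hco
  simp only [mul_right_inj' (by norm_num : (2:ℕ) ≠ 0), Fin.val_eq_val, Finset.sum_ite_eq',
    Finset.mem_univ, if_true] at hco
  simpa using hco

end VP1Aux

set_option maxHeartbeats 2000000 in
/-- The type-1 variational problem has no solution: among differentiable `G` on `[0,∞)`
satisfying the `q`-th order radial moment condition with `V_{d,1}(G) < ∞`, the objective
`B_{d,q}(G)^{2(d+2)}·V_{d,1}(G)^{2q}` is strictly positive everywhere on the feasible set,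
yet its infimum over the feasible set is `0` (it gets below any `ε > 0`), so it is not
attained. -/



theorem type1_problem_no_solution (d q : ℕ) (hd : 1 ≤ d) (hq : 2 ≤ q) (hqe : Even q) :
    (∀ G : ℝ → ℝ, (∀ x ∈ Ici (0 : ℝ), DifferentiableAt ℝ G x) → MomentCond d q G →
      IntegrableOn (fun x => x ^ (d - 1) * (deriv G x) ^ 2) (Ioi 0) →
      0 < Bmom d q G ^ (2 * (d + 2)) * V1 d G ^ (2 * q)) ∧
    (∀ ε : ℝ, 0 < ε →
      ∃ G : ℝ → ℝ, (∀ x ∈ Ici (0 : ℝ), DifferentiableAt ℝ G x) ∧ MomentCond d q G ∧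
        IntegrableOn (fun x => x ^ (d - 1) * (deriv G x) ^ 2) (Ioi 0) ∧
        Bmom d q G ^ (2 * (d + 2)) * V1 d G ^ (2 * q) < ε) := by
  constructor
  · rintro G hdiff ⟨hint, hB0, hBmid, hBq⟩ hV
    have hV1ne : V1 d G ≠ 0 := by
      intro h0
      have hnonneg : 0 ≤ᵐ[volume.restrict (Ioi (0:ℝ))]
          fun x : ℝ => x ^ (d - 1) * (deriv G x) ^ 2 := by
        refine (ae_restrict_iff' measurableSet_Ioi).mpr (Eventually.of_forall fun x hx => ?_)
        have hx0 : (0:ℝ) < x := hx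
        simp only [Pi.zero_apply]
        positivity
      have hae := (integral_eq_zero_iff_of_nonneg_ae hnonneg hV).mp h0
      have hder : ∀ᵐ x ∂(volume.restrict (Ioi (0:ℝ))), deriv G x = 0 := by
        filter_upwards [hae, ae_restrict_mem measurableSet_Ioi] with x hx hx0
        have hx0' : (0:ℝ) < x := hx0
        simp only [Pi.zero_apply] at hx
        rcases mul_eq_zero.mp hx with h | h
        · exact absurd h (pow_ne_zero _ hx0'.ne')
        · exact pow_eq_zero_iff (two_ne_zero) |>.mp h
      have hconst : ∀ a b : ℝ, 0 < a → a ≤ b → G b = G a := by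
        intro a b ha hab
        have hsub : Set.uIoc a b ⊆ Ioi 0 := by
          rw [Set.uIoc_of_le hab]
          exact fun x hx => lt_trans ha hx.1
        have hder' : ∀ᵐ x ∂(volume.restrict (Set.uIoc a b)), deriv G x = 0 :=
          ae_restrict_of_ae_restrict_of_subset hsub hder
        have hII : IntervalIntegrable (deriv G) volume a b := by
          rw [intervalIntegrable_iff]
          exact (integrable_zero _ _ _).congr
            (by filter_upwards [hder'] with x hx; rw [hx]; rfl)
        have hmem : ∀ x ∈ Set.uIcc a b, HasDerivAt G (deriv G x) x := by
          intro x hx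
          refine (hdiff x ?_).hasDerivAt
          rcases hx with ⟨h1, _⟩
          have : min a b ≤ x := h1
          have hmin : (0:ℝ) < min a b := lt_min ha (lt_of_lt_of_le ha hab)
          exact le_of_lt (lt_of_lt_of_le hmin this)
        have hftc := intervalIntegral.integral_eq_sub_of_hasDerivAt hmem hII
        have hzero : ∫ x in a..b, deriv G x = 0 := by
          rw [intervalIntegral.integral_of_le hab]
          apply integral_eq_zero_of_ae
          have : Ioc a b = Set.uIoc a b := (Set.uIoc_of_le hab).symm
          rw [this]
          exact hder'
        rw [hzero] at hftc
        linarith [hftc]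
      have hGc : ∀ x : ℝ, 0 < x → G x = G 1 := by
        intro x hx
        rcases le_total x 1 with h | h
        · exact (hconst x 1 hx h).symm
        · exact hconst 1 x one_pos h
      have hc0 : G 1 = 0 := by
        by_contra hc
        have hq' := hint q hqe le_rfl
        have h1 : IntegrableOn (fun x : ℝ => x ^ (d - 1 + q) * G x) (Ioi 1) :=
          hq'.mono_set (Ioi_subset_Ioi (by norm_num))
        have h2 : IntegrableOn (fun _ : ℝ => G 1) (Ioi 1) := by
          apply Integrable.mono h1 aestronglyMeasurable_const
          refine (ae_restrict_iff' measurableSet_Ioi).mpr (Eventually.of_forall fun x hx => ?_)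
          have hx1 : (1:ℝ) < x := hx
          have hx0 : (0:ℝ) < x := lt_trans one_pos hx1
          rw [hGc x hx0, norm_mul, norm_pow, Real.norm_eq_abs x, abs_of_pos hx0]
          exact le_mul_of_one_le_left (norm_nonneg _) (one_le_pow₀ hx1.le)
        rw [integrableOn_const_iff] at h2
        rcases h2 with h | h
        · exact hc (enorm_eq_zero.mp h)
        · rw [Real.volume_Ioi] at h; simp at h
      apply hBq
      unfold Bmom
      rw [setIntegral_congr_fun measurableSet_Ioi (g := fun _ : ℝ => (0:ℝ))
        (fun x hx => by rw [hGc x hx, hc0, mul_zero]), integral_zero]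
    have h1 : 0 < Bmom d q G ^ (2 * (d + 2)) := by
      rw [pow_mul]
      exact pow_pos (pow_two_pos_of_ne_zero hBq) _
    have h2 : 0 < V1 d G ^ (2 * q) := by
      rw [pow_mul]
      exact pow_pos (pow_two_pos_of_ne_zero hV1ne) _
    exact mul_pos h1 h2
  · intro ε hε
    obtain ⟨halfq, hhalfq⟩ := hqe
    set m := q / 2 with hm
    have hq2 : q = 2 * m := by omega
    have hm1 : 1 ≤ m := by omega
    have hsurj : Function.Surjective (momT d (m + 1)) :=
      LinearMap.injective_iff_surjective.mp (momT_inj d (m + 1))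
    obtain ⟨a, ha⟩ := hsurj (fun j => if j = 0 then (bconst d)⁻¹ else 0)
    obtain ⟨v, hv⟩ := hsurj (fun j => if j = Fin.last m then 1 else 0)
    set Qa := Polynomial.derivative (cpoly a) - 2 * Polynomial.X * cpoly a with hQa
    set Qv := Polynomial.derivative (cpoly v) - 2 * Polynomial.X * cpoly v with hQv
    set Ia := ∫ x in Ioi (0:ℝ), x ^ (d - 1) * (pgF Qa x) ^ 2 with hIa
    set Iv := ∫ x in Ioi (0:ℝ), x ^ (d - 1) * (pgF Qv x) ^ 2 with hIv
    have hIa0 : 0 ≤ Ia := by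
      rw [hIa]
      exact setIntegral_nonneg measurableSet_Ioi fun x hx => by
        have hx0 : (0:ℝ) < x := hx; positivity
    have hIv0 : 0 ≤ Iv := by
      rw [hIv]
      exact setIntegral_nonneg measurableSet_Ioi fun x hx => by
        have hx0 : (0:ℝ) < x := hx; positivity
    set K := 2 * Ia + 2 * Iv with hK
    have hK0 : 0 ≤ K := by positivity
    set C := K ^ (2 * q) + 1 with hC
    have hCpos : 0 < C := by positivity
    set δ := min 1 (ε / (2 * C)) with hδ
    have hδpos : 0 < δ := lt_min one_pos (by positivity)
    have hδ1 : δ ≤ 1 := min_le_left _ _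
    set c := a + δ • v with hc
    set P := cpoly c with hP
    have hTc : momT d (m + 1) c
        = (fun j : Fin (m + 1) => if j = 0 then (bconst d)⁻¹ else 0)
          + δ • (fun j : Fin (m + 1) => if j = Fin.last m then (1:ℝ) else 0) := by
      rw [hc, map_add, LinearMap.map_smul, ha, hv]
    have hlast0 : (Fin.last m : Fin (m + 1)) ≠ 0 := by
      simp [Fin.ext_iff]
      omega
    have hB0v : Bmom d 0 (pgF P) = (bconst d)⁻¹ := by
      have h0 : (0 : ℕ) = 2 * ((0 : Fin (m + 1)) : ℕ) := by simp
      rw [h0, hP, Bmom_pg, hTc]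
      simp [hlast0.symm]
    have hBmidv : ∀ i, Even i → 2 ≤ i → i ≤ q - 2 → Bmom d i (pgF P) = 0 := by
      intro i hie h2i hiq
      obtain ⟨k, hk⟩ := hie
      have hkN : k < m + 1 := by omega
      have hkval : i = 2 * (((⟨k, hkN⟩ : Fin (m + 1)) : ℕ)) := by simp; omega
      rw [hkval, hP, Bmom_pg, hTc]
      have h1 : (⟨k, hkN⟩ : Fin (m + 1)) ≠ 0 := by
        simp [Fin.ext_iff]; omega
      have h2 : (⟨k, hkN⟩ : Fin (m + 1)) ≠ Fin.last m := by
        simp [Fin.ext_iff, Fin.last]; omega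
      simp [h1, h2]
    have hBqv : Bmom d q (pgF P) = δ := by
      have hqval : q = 2 * ((Fin.last m : Fin (m + 1)) : ℕ) := by
        simp [Fin.last]; omega
      rw [hqval, hP, Bmom_pg, hTc]
      simp [hlast0]
    have hQ : Polynomial.derivative P - 2 * Polynomial.X * P = Qa + δ • Qv := by
      rw [hP, hc, cpoly_add_smul, hQa, hQv]
      simp only [map_add, Polynomial.derivative_smul, mul_add, mul_smul_comm, smul_sub]
      abel
    have hderivP : deriv (pgF P) = pgF (Qa + δ • Qv) := by
      rw [pgF_deriv, hQ]
    have hpg : ∀ x : ℝ, pgF (Qa + δ • Qv) x = pgF Qa x + δ * pgF Qv x := by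
      intro x
      simp only [pgF_def, Polynomial.eval_add, Polynomial.eval_smul, smul_eq_mul]
      ring
    have hVint : IntegrableOn (fun x : ℝ => x ^ (d - 1) * (deriv (pgF P) x) ^ 2) (Ioi 0) := by
      rw [hderivP]
      exact pgF_sq_integrableOn _ _
    refine ⟨pgF P, fun x _ => pgF_diff P x,
      ⟨fun i _ _ => pgF_integrableOn (d - 1 + i) P, hB0v, hBmidv, by rw [hBqv]; exact hδpos.ne'⟩,
      hVint, ?_⟩
    have hVnonneg : 0 ≤ V1 d (pgF P) := by
      unfold V1
      exact setIntegral_nonneg measurableSet_Ioi fun x hx => by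
        have hx0 : (0:ℝ) < x := hx; positivity
    have hVbound : V1 d (pgF P) ≤ K := by
      unfold V1
      rw [hderivP]
      have step1 : ∫ x in Ioi (0:ℝ), x ^ (d - 1) * (pgF (Qa + δ • Qv) x) ^ 2
          ≤ ∫ x in Ioi (0:ℝ),
            (2 * (x ^ (d - 1) * (pgF Qa x) ^ 2) + (2 * δ ^ 2) * (x ^ (d - 1) * (pgF Qv x) ^ 2)) := by
        apply setIntegral_mono_on (pgF_sq_integrableOn _ _)
          (((pgF_sq_integrableOn _ Qa).const_mul 2).add
            ((pgF_sq_integrableOn _ Qv).const_mul (2 * δ ^ 2))) measurableSet_Ioi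
        intro x hx
        simp only [Pi.add_apply]
        have hx0 : (0:ℝ) < x := hx
        rw [hpg]
        have hxp : (0:ℝ) ≤ x ^ (d - 1) := le_of_lt (pow_pos hx0 _)
        nlinarith [sq_nonneg (pgF Qa x - δ * pgF Qv x), mul_nonneg hxp (sq_nonneg (pgF Qa x - δ * pgF Qv x))]
      have step2 : ∫ x in Ioi (0:ℝ),
            (2 * (x ^ (d - 1) * (pgF Qa x) ^ 2) + (2 * δ ^ 2) * (x ^ (d - 1) * (pgF Qv x) ^ 2))
          = 2 * Ia + (2 * δ ^ 2) * Iv := by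
        rw [integral_add ((pgF_sq_integrableOn _ Qa).const_mul 2)
          ((pgF_sq_integrableOn _ Qv).const_mul (2 * δ ^ 2)), integral_const_mul, integral_const_mul]
      have hδ2 : δ ^ 2 ≤ 1 := by nlinarith
      calc ∫ x in Ioi (0:ℝ), x ^ (d - 1) * (pgF (Qa + δ • Qv) x) ^ 2
          ≤ 2 * Ia + (2 * δ ^ 2) * Iv := by rw [← step2]; exact step1
        _ ≤ K := by rw [hK]; nlinarith
    rw [hBqv]
    have hKpow : V1 d (pgF P) ^ (2 * q) ≤ K ^ (2 * q) := pow_le_pow_left₀ hVnonneg hVbound _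
    calc δ ^ (2 * (d + 2)) * V1 d (pgF P) ^ (2 * q)
        ≤ δ ^ 2 * K ^ (2 * q) :=
          mul_le_mul (pow_le_pow_of_le_one hδpos.le hδ1 (by omega)) hKpow
            (pow_nonneg hVnonneg _) (by positivity)
      _ ≤ δ * K ^ (2 * q) :=
          mul_le_mul_of_nonneg_right (by nlinarith : δ ^ 2 ≤ δ) (pow_nonneg hK0 _)
      _ < δ * C := by
          apply mul_lt_mul_of_pos_left _ hδpos
          rw [hC]; linarith
      _ ≤ (ε / (2 * C)) * C := mul_le_mul_of_nonneg_right (min_le_right _ _) hCpos.le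
      _ < ε := by
          rw [div_mul_eq_mul_div, mul_comm]
          rw [show C * ε / (2 * C) = ε / 2 by field_simp]
          linarith
end

section
/- Let q ≥ 2 be an even integer and d ≥ q+1. Let a₁, …, a_{q+1} ∈ ℝ^d be linearly independent vectors and let p : ℝ^d → ℝ be the polynomial p(u) = ∏_{i=1}^{q+1} (a_iᵀu). Then there exists a symmetric positive definite d×d real matrix Q such that ∇(∇ᵀQ∇)^{q/2} p vanishes identically on ℝ^d. -/
open scoped RealInnerProductSpace Matrix

/-- Partial derivative in coordinate `j` of a function on `ℝ^d`. -/
noncomputable def pd {d : ℕ} (j : Fin d) (f : EuclideanSpace ℝ (Fin d) → ℝ) :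
    EuclideanSpace ℝ (Fin d) → ℝ :=
  fun x => fderiv ℝ f x (EuclideanSpace.single j 1)

/-- The differential operator `∇ᵀQ∇ = ∑ i j, Q i j ∂_i ∂_j`. -/
noncomputable def LQ {d : ℕ} (Q : Matrix (Fin d) (Fin d) ℝ)
    (f : EuclideanSpace ℝ (Fin d) → ℝ) : EuclideanSpace ℝ (Fin d) → ℝ :=
  fun x => ∑ i, ∑ j, Q i j * pd i (pd j f) x

lemma hasFDerivAt_prod_inner {d n : ℕ} (c : Fin n → EuclideanSpace ℝ (Fin d))
    (s : Finset (Fin n)) (x : EuclideanSpace ℝ (Fin d)) :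
    HasFDerivAt (fun v => ∏ m ∈ s, ⟪c m, v⟫)
      (∑ k ∈ s, (∏ m ∈ s.erase k, ⟪c m, x⟫) • (innerSL ℝ (c k))) x :=
  HasFDerivAt.finset_prod (fun k _ => (innerSL ℝ (c k)).hasFDerivAt)

lemma pd_prod {d n : ℕ} (c : Fin n → EuclideanSpace ℝ (Fin d)) (s : Finset (Fin n))
    (j : Fin d) :
    pd j (fun v => ∏ m ∈ s, ⟪c m, v⟫)
      = fun x => ∑ k ∈ s, (∏ m ∈ s.erase k, ⟪c m, x⟫) * (c k) j := by
  funext x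
  rw [pd, (hasFDerivAt_prod_inner c s x).fderiv]
  simp [real_inner_comm, EuclideanSpace.inner_single_left, EuclideanSpace.inner_single_right]

lemma pd_pd_prod {d n : ℕ} (c : Fin n → EuclideanSpace ℝ (Fin d)) (s : Finset (Fin n))
    (i j : Fin d) (x : EuclideanSpace ℝ (Fin d)) :
    pd i (pd j (fun v => ∏ m ∈ s, ⟪c m, v⟫)) x
      = ∑ k ∈ s, (∑ l ∈ s.erase k, (∏ m ∈ (s.erase k).erase l, ⟪c m, x⟫) * (c l) i) * (c k) j := by
  rw [pd_prod]
  have h : HasFDerivAt (fun x : EuclideanSpace ℝ (Fin d) =>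
      ∑ k ∈ s, (∏ m ∈ s.erase k, ⟪c m, x⟫) * (c k) j)
      (∑ k ∈ s, (c k) j • (∑ l ∈ s.erase k,
        (∏ m ∈ (s.erase k).erase l, ⟪c m, x⟫) • (innerSL ℝ (c l)))) x := by
    refine HasFDerivAt.fun_sum (fun k _ => ?_)
    have := (hasFDerivAt_prod_inner c (s.erase k) x).mul_const ((c k) j)
    simpa [smul_smul, mul_comm] using this
  rw [pd, h.fderiv]
  simp only [ContinuousLinearMap.coe_sum', Finset.sum_apply, ContinuousLinearMap.coe_smul',
    Pi.smul_apply, smul_eq_mul, Finset.sum_mul, Finset.mul_sum]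
  refine Finset.sum_congr rfl fun k _ => Finset.sum_congr rfl fun l _ => ?_
  rw [show ((innerSL ℝ) (c l)) (EuclideanSpace.single i 1) = (c l) i by
    simp [EuclideanSpace.inner_single_right]]
  ring

lemma LQ_prod_eq_zero {d n : ℕ} (c : Fin n → EuclideanSpace ℝ (Fin d))
    (Q : Matrix (Fin d) (Fin d) ℝ)
    (horth : ∀ k l : Fin n, k ≠ l → ∑ i, ∑ j, Q i j * (c l) i * (c k) j = 0) :
    LQ Q (fun v => ∏ m, ⟪c m, v⟫) = fun _ => 0 := by
  funext x
  simp only [LQ, pd_pd_prod]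
  have : ∀ i j : Fin d, Q i j * (∑ k, (∑ l ∈ Finset.univ.erase k,
        (∏ m ∈ (Finset.univ.erase k).erase l, ⟪c m, x⟫) * (c l) i) * (c k) j)
      = ∑ k, ∑ l ∈ Finset.univ.erase k,
        (∏ m ∈ (Finset.univ.erase k).erase l, ⟪c m, x⟫) * (Q i j * (c l) i * (c k) j) := by
    intro i j
    rw [Finset.mul_sum]
    refine Finset.sum_congr rfl fun k _ => ?_
    rw [Finset.sum_mul, Finset.mul_sum]
    exact Finset.sum_congr rfl fun l _ => by ring
  simp only [this]
  have h1 : ∀ i : Fin d, (∑ j : Fin d, ∑ k : Fin n, ∑ l ∈ Finset.univ.erase k,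
        (∏ m ∈ (Finset.univ.erase k).erase l, ⟪c m, x⟫) * (Q i j * (c l) i * (c k) j))
      = ∑ k : Fin n, ∑ j : Fin d, ∑ l ∈ Finset.univ.erase k,
        (∏ m ∈ (Finset.univ.erase k).erase l, ⟪c m, x⟫) * (Q i j * (c l) i * (c k) j) :=
    fun i => Finset.sum_comm
  simp only [h1]
  rw [Finset.sum_comm]
  refine Finset.sum_eq_zero fun k _ => ?_
  have h2 : ∀ i : Fin d, (∑ j : Fin d, ∑ l ∈ Finset.univ.erase k,
        (∏ m ∈ (Finset.univ.erase k).erase l, ⟪c m, x⟫) * (Q i j * (c l) i * (c k) j))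
      = ∑ l ∈ Finset.univ.erase k, ∑ j : Fin d,
        (∏ m ∈ (Finset.univ.erase k).erase l, ⟪c m, x⟫) * (Q i j * (c l) i * (c k) j) :=
    fun i => Finset.sum_comm
  simp only [h2]
  rw [Finset.sum_comm]
  refine Finset.sum_eq_zero fun l hl => ?_
  have hkl : k ≠ l := (Finset.ne_of_mem_erase hl).symm
  simp only [← Finset.mul_sum]
  rw [horth k l hkl, mul_zero]

lemma exists_good_Q (d n : ℕ) (hd : n ≤ d) (a : Fin n → EuclideanSpace ℝ (Fin d))
    (ha : LinearIndependent ℝ a) :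
    ∃ Q : Matrix (Fin d) (Fin d) ℝ, Q.PosDef ∧
      ∀ k l : Fin n, k ≠ l → ∑ i, ∑ j, Q i j * (a l) i * (a k) j = 0 := by
  classical
  have hs : LinearIndepOn ℝ id (Set.range a) := (linearIndepOn_id_range_iff ha.injective).mpr ha
  let b : Module.Basis (hs.extend (Set.subset_univ _)) ℝ (EuclideanSpace ℝ (Fin d)) := Module.Basis.extend hs
  haveI : Fintype (hs.extend (Set.subset_univ (Set.range a))) :=
    FiniteDimensional.fintypeBasisIndex b
  have hcard : Fintype.card (hs.extend (Set.subset_univ (Set.range a))) = d := by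
    rw [← Module.finrank_eq_card_basis b, finrank_euclideanSpace_fin]
  let e := Fintype.equivFinOfCardEq hcard
  let b' : Module.Basis (Fin d) ℝ (EuclideanSpace ℝ (Fin d)) := b.reindex e
  let g : EuclideanSpace ℝ (Fin d) ≃ₗ[ℝ] (Fin d → ℝ) := b'.equivFun
  let σ : Fin n → Fin d := fun k =>
    e ⟨a k, hs.subset_extend (Set.subset_univ _) ⟨k, rfl⟩⟩
  have hσinj : Function.Injective σ := by
    intro k l h
    have := congrArg Subtype.val (e.injective h)
    exact ha.injective this
  have hga : ∀ k, g (a k) = Pi.single (σ k) 1 := by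
    intro k
    have hb : b' (σ k) = a k := by
      simp only [b', σ, Module.Basis.reindex_apply, Equiv.symm_apply_apply]
      exact Module.Basis.extend_apply_self hs _
    funext r
    rw [← hb]
    simp [g, Module.Basis.equivFun_self, Pi.single_apply, eq_comm]
  -- decomposition of vectors
  have hdec : ∀ x : EuclideanSpace ℝ (Fin d), g x = ∑ i, x i • g (EuclideanSpace.single i 1) := by
    intro x
    have hx : x = ∑ i, x i • EuclideanSpace.single i (1:ℝ) := by
      have := (EuclideanSpace.basisFun (Fin d) ℝ).toBasis.sum_repr x
      simpa [EuclideanSpace.basisFun_apply] using this.symm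
    conv_lhs => rw [hx]
    rw [map_sum]
    simp only [map_smul]
  have hkey : ∀ x y : EuclideanSpace ℝ (Fin d),
      ∑ i, ∑ j, (∑ r, g (EuclideanSpace.single i 1) r * g (EuclideanSpace.single j 1) r)
          * x i * y j
        = ∑ r, g x r * g y r := by
    intro x y
    conv_rhs => rw [hdec x, hdec y]
    simp only [Finset.sum_apply, Pi.smul_apply, smul_eq_mul]
    have h2 : ∀ r : Fin d, (∑ i : Fin d, x i * g (EuclideanSpace.single i 1) r)
          * (∑ j : Fin d, y j * g (EuclideanSpace.single j 1) r)
        = ∑ i : Fin d, ∑ j : Fin d,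
          g (EuclideanSpace.single i 1) r * g (EuclideanSpace.single j 1) r * x i * y j := by
      intro r
      rw [Finset.sum_mul_sum]
      exact Finset.sum_congr rfl fun i _ => Finset.sum_congr rfl fun j _ => by ring
    simp only [h2]
    have hL : ∀ i j : Fin d, (∑ r : Fin d,
          g (EuclideanSpace.single i 1) r * g (EuclideanSpace.single j 1) r) * x i * y j
        = ∑ r : Fin d,
          g (EuclideanSpace.single i 1) r * g (EuclideanSpace.single j 1) r * x i * y j := by
      intro i j
      rw [Finset.sum_mul, Finset.sum_mul]
    simp only [hL]
    have h1 : ∀ i : Fin d, (∑ j : Fin d, ∑ r : Fin d,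
          g (EuclideanSpace.single i 1) r * g (EuclideanSpace.single j 1) r * x i * y j)
        = ∑ r : Fin d, ∑ j : Fin d,
          g (EuclideanSpace.single i 1) r * g (EuclideanSpace.single j 1) r * x i * y j :=
      fun i => Finset.sum_comm
    simp only [h1]
    rw [Finset.sum_comm]
  refine ⟨Matrix.of fun i j => ∑ r, g (EuclideanSpace.single i 1) r * g (EuclideanSpace.single j 1) r, Matrix.PosDef.of_dotProduct_mulVec_pos ?_ ?_, ?_⟩
  · ext i j
    simp only [Matrix.conjTranspose_apply, Matrix.of_apply, star_trivial]
    exact Finset.sum_congr rfl fun r _ => mul_comm _ _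
  · intro x hx
    set x' : EuclideanSpace ℝ (Fin d) := (WithLp.equiv 2 (Fin d → ℝ)).symm x with hx'def
    have hx'0 : x' ≠ 0 := by rw [hx'def]; simpa using hx
    have hgx : g x' ≠ 0 := fun h => hx'0 (g.map_eq_zero_iff.mp h)
    obtain ⟨r, hr⟩ := Function.ne_iff.mp hgx
    have hdp : star x ⬝ᵥ ((Matrix.of fun i j => ∑ r, g (EuclideanSpace.single i 1) r
          * g (EuclideanSpace.single j 1) r) *ᵥ x)
        = ∑ i, ∑ j, (∑ r, g (EuclideanSpace.single i 1) r * g (EuclideanSpace.single j 1) r)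
          * x' i * x' j := by
      simp only [dotProduct, Matrix.mulVec, star_trivial, Matrix.of_apply]
      have hx'i : ∀ i, x' i = x i := fun _ => rfl
      refine Finset.sum_congr rfl fun i _ => ?_
      rw [Finset.mul_sum]
      refine Finset.sum_congr rfl fun j _ => ?_
      rw [hx'i, hx'i]
      ring
    rw [hdp, hkey x' x']
    refine Finset.sum_pos' (fun r _ => mul_self_nonneg _)
      ⟨r, Finset.mem_univ r, mul_self_pos.mpr (by simpa using hr)⟩
  · intro k l hkl
    simp only [Matrix.of_apply]
    rw [hkey (a l) (a k), hga, hga]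
    have hσ : σ l ≠ σ k := fun h => hkl (hσinj h).symm
    have hσ2 : σ k ≠ σ l := fun h => hσ h.symm
    simp [Pi.single_apply, hσ, hσ2]

lemma LQ_zero {d : ℕ} (Q : Matrix (Fin d) (Fin d) ℝ) :
    LQ Q (fun _ => (0:ℝ)) = fun _ => 0 := by
  have hp : ∀ j : Fin d, pd j (fun _ : EuclideanSpace ℝ (Fin d) => (0:ℝ)) = fun _ => 0 := by
    intro j
    funext x
    simp [pd, fderiv_const]
  funext x
  simp [LQ, hp]

/-- If `a₁, …, a_{q+1}` are linearly independent vectors in `ℝ^d` with `d ≥ q+1`, then there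
is a symmetric positive definite matrix `Q` such that `∇(∇ᵀQ∇)^{q/2} ∏ᵢ (aᵢᵀu)` vanishes
identically. -/
theorem exists_posDef_gradient_iterate_prod_linear_eq_zero (d q : ℕ) (hq : 2 ≤ q)
    (hqe : Even q) (hd : q + 1 ≤ d)
    (a : Fin (q + 1) → EuclideanSpace ℝ (Fin d)) (ha : LinearIndependent ℝ a) :
    ∃ Q : Matrix (Fin d) (Fin d) ℝ, Q.PosDef ∧
      ∀ u, gradient ((LQ Q)^[q / 2] fun v => ∏ i, ⟪a i, v⟫) u = 0 := by
  obtain ⟨Q, hQpd, horth⟩ := exists_good_Q d (q + 1) hd a ha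
  refine ⟨Q, hQpd, ?_⟩
  have h1 : LQ Q (fun v => ∏ i, ⟪a i, v⟫) = fun _ => 0 := LQ_prod_eq_zero a Q horth
  have h2 : ∀ m, (LQ Q)^[m] (fun _ => (0:ℝ)) = fun _ => 0 := by
    intro m
    induction m with
    | zero => rfl
    | succ m ih => rw [Function.iterate_succ_apply, LQ_zero, ih]
  obtain ⟨m, hm⟩ : ∃ m, q / 2 = m + 1 := ⟨q / 2 - 1, by omega⟩
  intro u
  rw [hm, Function.iterate_succ_apply, h1, h2]
  exact gradient_const u 0
end

section
/- Let q ≥ 2 be an even integer and d ≥ q. Let a₁, …, a_{q+1} ∈ ℝ^d be vectors that span a q-dimensional subspace of ℝ^d, and suppose there exist real numbers s₁, …, s_{q+1}, all nonzero, with Σ_{i=1}^{q+1} s_i a_i = 0. Let p : ℝ^d → ℝ be the polynomial p(u) = ∏_{i=1}^{q+1} (a_iᵀu). Then there exists a symmetric positive definite d×d real matrix Q such that ∇(∇ᵀQ∇)^{q/2} p vanishes identically on ℝ^d. -/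
open scoped RealInnerProductSpace Matrix

section Aux
variable {d n : ℕ} (a : Fin n → EuclideanSpace ℝ (Fin d))

/-- product of linear forms over a finset -/
noncomputable def Fp (T : Finset (Fin n)) : EuclideanSpace ℝ (Fin d) → ℝ :=
  fun x => ∏ i ∈ T, ⟪a i, x⟫

lemma hasFDerivAt_Fp (T : Finset (Fin n)) (x : EuclideanSpace ℝ (Fin d)) :
    HasFDerivAt (Fp a T) (∑ i ∈ T, Fp a (T.erase i) x • (innerSL ℝ (a i))) x := by
  have h : ∀ i ∈ T, HasFDerivAt (fun y => ⟪a i, y⟫) (innerSL ℝ (a i)) x :=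
    fun i _ => (innerSL ℝ (a i)).hasFDerivAt
  exact HasFDerivAt.finset_prod h

lemma pd_Fp (j : Fin d) (T : Finset (Fin n)) :
    pd j (Fp a T) = fun x => ∑ i ∈ T, a i j * Fp a (T.erase i) x := by
  funext x
  rw [pd, (hasFDerivAt_Fp a T x).fderiv]
  simp [mul_comm, real_inner_smul_left, EuclideanSpace.inner_single_right]

variable {ι : Type*}

lemma pd_sumF (A : Finset ι) (c : ι → ℝ) (S : ι → Finset (Fin n)) (j : Fin d) :
    pd j (fun y => ∑ i ∈ A, c i * Fp a (S i) y) =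
      fun x => ∑ i ∈ A, c i * ∑ k ∈ S i, a k j * Fp a ((S i).erase k) x := by
  funext x
  have h : HasFDerivAt (fun y => ∑ i ∈ A, c i * Fp a (S i) y)
      (∑ i ∈ A, c i • (∑ k ∈ S i, Fp a ((S i).erase k) x • innerSL ℝ (a k))) x :=
    HasFDerivAt.fun_sum (fun i _ => ((hasFDerivAt_Fp a (S i) x).const_mul (c i)))
  rw [pd, h.fderiv]
  simp [Finset.mul_sum, mul_comm, mul_left_comm, real_inner_smul_left,
    EuclideanSpace.inner_single_right]

lemma pd_pd_sumF (A : Finset ι) (c : ι → ℝ) (S : ι → Finset (Fin n)) (i j : Fin d) :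
    pd i (pd j (fun y => ∑ t ∈ A, c t * Fp a (S t) y)) =
      fun x => ∑ t ∈ A, c t * ∑ k ∈ S t, ∑ l ∈ (S t).erase k,
        a k j * a l i * Fp a (((S t).erase k).erase l) x := by
  rw [pd_sumF]
  have e1 : (fun y => ∑ t ∈ A, c t * ∑ k ∈ S t, a k j * Fp a ((S t).erase k) y) =
      fun y => ∑ p ∈ A.sigma S, (c p.1 * a p.2 j) * Fp a ((S p.1).erase p.2) y := by
    funext y
    simp_rw [Finset.mul_sum, ← mul_assoc]
    rw [Finset.sum_sigma']
  rw [e1, pd_sumF]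
  funext x
  rw [Finset.sum_sigma]
  congr 1; funext t
  rw [Finset.mul_sum]
  congr 1; funext k
  rw [Finset.mul_sum, Finset.mul_sum]
  congr 1; funext l
  ring

lemma sum_swap5 {β γ : Type*} [Fintype β] (A : Finset ι) (S : ι → Finset γ)
    (T : ι → γ → Finset γ) (f : ι → γ → γ → β → β → ℝ) :
    ∑ i : β, ∑ j : β, ∑ t ∈ A, ∑ k ∈ S t, ∑ l ∈ T t k, f t k l i j
      = ∑ t ∈ A, ∑ k ∈ S t, ∑ l ∈ T t k, ∑ i : β, ∑ j : β, f t k l i j :=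
  calc ∑ i : β, ∑ j : β, ∑ t ∈ A, ∑ k ∈ S t, ∑ l ∈ T t k, f t k l i j
      = ∑ i : β, ∑ t ∈ A, ∑ j : β, ∑ k ∈ S t, ∑ l ∈ T t k, f t k l i j :=
        Finset.sum_congr rfl fun _ _ => Finset.sum_comm
    _ = ∑ t ∈ A, ∑ i : β, ∑ j : β, ∑ k ∈ S t, ∑ l ∈ T t k, f t k l i j := Finset.sum_comm
    _ = ∑ t ∈ A, ∑ i : β, ∑ k ∈ S t, ∑ j : β, ∑ l ∈ T t k, f t k l i j :=
        Finset.sum_congr rfl fun _ _ => Finset.sum_congr rfl fun _ _ => Finset.sum_comm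
    _ = ∑ t ∈ A, ∑ k ∈ S t, ∑ i : β, ∑ j : β, ∑ l ∈ T t k, f t k l i j :=
        Finset.sum_congr rfl fun _ _ => Finset.sum_comm
    _ = ∑ t ∈ A, ∑ k ∈ S t, ∑ i : β, ∑ l ∈ T t k, ∑ j : β, f t k l i j :=
        Finset.sum_congr rfl fun _ _ => Finset.sum_congr rfl fun _ _ =>
          Finset.sum_congr rfl fun _ _ => Finset.sum_comm
    _ = ∑ t ∈ A, ∑ k ∈ S t, ∑ l ∈ T t k, ∑ i : β, ∑ j : β, f t k l i j :=
        Finset.sum_congr rfl fun _ _ => Finset.sum_congr rfl fun _ _ => Finset.sum_comm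

lemma LQ_sumF (Q : Matrix (Fin d) (Fin d) ℝ) (A : Finset ι) (c : ι → ℝ)
    (S : ι → Finset (Fin n)) :
    LQ Q (fun y => ∑ t ∈ A, c t * Fp a (S t) y) =
      fun x => ∑ t ∈ A, ∑ k ∈ S t, ∑ l ∈ (S t).erase k,
        (c t * ∑ i, ∑ j, Q i j * a l i * a k j) * Fp a (((S t).erase k).erase l) x := by
  funext x
  show ∑ i, ∑ j, Q i j * pd i (pd j _) x = _
  simp only [pd_pd_sumF a A c S]
  calc ∑ i, ∑ j, Q i j * ∑ t ∈ A, c t * ∑ k ∈ S t, ∑ l ∈ (S t).erase k,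
        a k j * a l i * Fp a (((S t).erase k).erase l) x
      = ∑ i, ∑ j, ∑ t ∈ A, ∑ k ∈ S t, ∑ l ∈ (S t).erase k,
          Q i j * (c t * (a k j * a l i * Fp a (((S t).erase k).erase l) x)) := by
        simp_rw [Finset.mul_sum]
    _ = ∑ t ∈ A, ∑ k ∈ S t, ∑ l ∈ (S t).erase k, ∑ i, ∑ j,
          Q i j * (c t * (a k j * a l i * Fp a (((S t).erase k).erase l) x)) :=
        sum_swap5 A S (fun t k => (S t).erase k) _
    _ = _ := by
        refine Finset.sum_congr rfl fun t _ => Finset.sum_congr rfl fun k _ =>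
          Finset.sum_congr rfl fun l _ => ?_
        simp only [Finset.mul_sum, Finset.sum_mul]
        refine Finset.sum_congr rfl fun i _ => Finset.sum_congr rfl fun j _ => ?_
        ring

lemma LQ_Phi (Q : Matrix (Fin d) (Fin d) ℝ) (s : Fin n → ℝ)
    (t0 C : ℝ)
    (hG : ∀ k l : Fin n, k ≠ l → (∑ i, ∑ j, Q i j * a k i * a l j) = t0 * (s k)⁻¹ * (s l)⁻¹)
    (r : ℕ) :
    LQ Q (fun y => ∑ T ∈ Finset.powersetCard (r+2) (Finset.univ : Finset (Fin n)),
        (C * ∏ j ∈ Tᶜ, (s j)⁻¹) * Fp a T y) =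
      fun x => ∑ T ∈ Finset.powersetCard r (Finset.univ : Finset (Fin n)),
        ((((n-r)*(n-r-1) : ℕ) * (C * t0)) * ∏ j ∈ Tᶜ, (s j)⁻¹) * Fp a T x := by
  rw [LQ_sumF a Q _ (fun T => C * ∏ j ∈ Tᶜ, (s j)⁻¹) (fun T => T)]
  funext x
  set g : Finset (Fin n) → ℝ :=
    fun U => (C * t0 * ∏ j ∈ Uᶜ, (s j)⁻¹) * Fp a U x with hg
  have key : ∀ T ∈ Finset.powersetCard (r+2) (Finset.univ : Finset (Fin n)),
      ∀ k ∈ T, ∀ l ∈ T.erase k,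
      ((C * ∏ j ∈ Tᶜ, (s j)⁻¹) * ∑ i, ∑ j, Q i j * a l i * a k j)
          * Fp a ((T.erase k).erase l) x
        = g ((T.erase k).erase l) := by
    intro T _ k hk l hl
    have hlk : l ≠ k := Finset.ne_of_mem_erase hl
    have hlT : l ∈ T := Finset.mem_of_mem_erase hl
    have hkc : k ∉ Tᶜ := by simpa using hk
    have hlc : l ∉ insert k Tᶜ := by simp [hlk, hlT]
    have hcompl : ((T.erase k).erase l)ᶜ = insert l (insert k Tᶜ) := by
      rw [Finset.compl_erase, Finset.compl_erase]
    rw [hG l k hlk]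
    simp only [hg]
    rw [hcompl, Finset.prod_insert hlc, Finset.prod_insert hkc]
    ring
  rw [Finset.sum_congr rfl (fun T hT => Finset.sum_congr rfl (fun k hk =>
    Finset.sum_congr rfl (fun l hl => key T hT k hk l hl)))]
  have reindex :
      ∑ T ∈ Finset.powersetCard (r+2) (Finset.univ : Finset (Fin n)),
        ∑ k ∈ T, ∑ l ∈ T.erase k, g ((T.erase k).erase l)
      = ∑ T ∈ Finset.powersetCard r (Finset.univ : Finset (Fin n)),
        ∑ k ∈ Tᶜ, ∑ l ∈ Tᶜ.erase k, g T := by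
    rw [Finset.sum_sigma', Finset.sum_sigma', Finset.sum_sigma', Finset.sum_sigma']
    refine Finset.sum_nbij'
      (fun p => ⟨⟨(p.1.1.erase p.1.2).erase p.2, p.1.2⟩, p.2⟩)
      (fun p => ⟨⟨insert p.1.2 (insert p.2 p.1.1), p.1.2⟩, p.2⟩) ?_ ?_ ?_ ?_ ?_
    · rintro ⟨⟨T, k⟩, l⟩ hp
      simp only [Finset.mem_sigma, Finset.mem_powersetCard_univ] at hp ⊢
      obtain ⟨⟨hT, hk⟩, hl⟩ := hp
      have hlk : l ≠ k := Finset.ne_of_mem_erase hl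
      have hlT : l ∈ T := Finset.mem_of_mem_erase hl
      refine ⟨⟨?_, ?_⟩, ?_⟩
      · rw [Finset.card_erase_of_mem hl, Finset.card_erase_of_mem hk, hT]
        omega
      · simp [hlk]
      · simp [Finset.mem_erase, hlk, hlT]
    · rintro ⟨⟨T, k⟩, l⟩ hp
      simp only [Finset.mem_sigma, Finset.mem_powersetCard_univ] at hp ⊢
      obtain ⟨⟨hT, hk⟩, hl⟩ := hp
      have hlk : l ≠ k := Finset.ne_of_mem_erase hl
      have hlc : l ∈ Tᶜ := Finset.mem_of_mem_erase hl
      have hkT : k ∉ T := by simpa using hk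
      have hlT : l ∉ T := by simpa using hlc
      refine ⟨⟨?_, ?_⟩, ?_⟩
      · rw [Finset.card_insert_of_notMem, Finset.card_insert_of_notMem hlT, hT]
        simp [hkT, Ne.symm hlk]
      · simp
      · simp [Finset.mem_erase, hlk]
    · rintro ⟨⟨T, k⟩, l⟩ hp
      simp only [Finset.mem_sigma, Finset.mem_powersetCard_univ] at hp
      obtain ⟨⟨hT, hk⟩, hl⟩ := hp
      have hlk : l ≠ k := Finset.ne_of_mem_erase hl
      have hlT : l ∈ T := Finset.mem_of_mem_erase hl
      simp only [Sigma.mk.inj_iff, heq_eq_eq]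
      rw [Finset.insert_erase hl, Finset.insert_erase hk]
      simp
    · rintro ⟨⟨T, k⟩, l⟩ hp
      simp only [Finset.mem_sigma, Finset.mem_powersetCard_univ] at hp
      obtain ⟨⟨hT, hk⟩, hl⟩ := hp
      have hlk : l ≠ k := Finset.ne_of_mem_erase hl
      have hlc : l ∈ Tᶜ := Finset.mem_of_mem_erase hl
      have hkT : k ∉ T := by simpa using hk
      have hlT : l ∉ T := by simpa using hlc
      simp only [Sigma.mk.inj_iff, heq_eq_eq]
      rw [Finset.erase_insert, Finset.erase_insert hlT]
      · simp
      · simp [hkT, Ne.symm hlk]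
    · rintro ⟨⟨T, k⟩, l⟩ hp
      rfl
  rw [reindex]
  refine Finset.sum_congr rfl fun T hT => ?_
  have hTc : Tᶜ.card = n - r := by
    rw [Finset.card_compl, Finset.mem_powersetCard_univ.mp hT]
    simp
  calc ∑ k ∈ Tᶜ, ∑ l ∈ Tᶜ.erase k, g T
      = ∑ k ∈ Tᶜ, (Tᶜ.card - 1) • g T := Finset.sum_congr rfl fun k hk => by
        rw [Finset.sum_const, Finset.card_erase_of_mem hk]
    _ = Tᶜ.card • ((Tᶜ.card - 1) • g T) := Finset.sum_const _
    _ = _ := by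
        rw [hTc]
        simp only [hg, smul_smul, nsmul_eq_mul]
        push_cast
        ring

lemma master {d q : ℕ} (hq : 2 ≤ q) (hqe : Even q)
    (a : Fin (q+1) → EuclideanSpace ℝ (Fin d))
    (Q : Matrix (Fin d) (Fin d) ℝ) (s : Fin (q+1) → ℝ) (hs : ∀ i, s i ≠ 0)
    (hrel : ∑ i, s i • a i = 0) (t0 : ℝ)
    (hG : ∀ k l : Fin (q+1), k ≠ l →
      (∑ i, ∑ j, Q i j * a k i * a l j) = t0 * (s k)⁻¹ * (s l)⁻¹) :
    ∀ u, gradient ((LQ Q)^[q / 2] fun v => ∏ i, ⟪a i, v⟫) u = 0 := by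
  have h0 : (fun v => ∏ i, ⟪a i, v⟫) =
      fun y => ∑ T ∈ Finset.powersetCard (q+1) (Finset.univ : Finset (Fin (q+1))),
        ((1:ℝ) * ∏ j ∈ Tᶜ, (s j)⁻¹) * Fp a T y := by
    funext y
    have : Finset.powersetCard (q+1) (Finset.univ : Finset (Fin (q+1))) =
        {(Finset.univ : Finset (Fin (q+1)))} := by
      have := Finset.powersetCard_self (Finset.univ : Finset (Fin (q+1)))
      simpa using this
    rw [this, Finset.sum_singleton]
    simp [Fp]
  have main : ∀ m, 2*m ≤ q → ∃ C : ℝ,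
      (LQ Q)^[m] (fun v => ∏ i, ⟪a i, v⟫) =
        fun y => ∑ T ∈ Finset.powersetCard (q+1-2*m) (Finset.univ : Finset (Fin (q+1))),
          (C * ∏ j ∈ Tᶜ, (s j)⁻¹) * Fp a T y := by
    intro m
    induction m with
    | zero => intro _; exact ⟨1, by simpa using h0⟩
    | succ m ih =>
      intro hm
      obtain ⟨C, hC⟩ := ih (by omega)
      have hr : q+1-2*m = (q+1-2*(m+1))+2 := by omega
      rw [hr] at hC
      refine ⟨(((q+1) - (q+1-2*(m+1)))*((q+1) - (q+1-2*(m+1))-1) : ℕ) * (C * t0), ?_⟩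
      rw [Function.iterate_succ_apply', hC, LQ_Phi a Q s t0 C hG (q+1-2*(m+1))]
  obtain ⟨C, hC⟩ := main (q/2) (by omega)
  have hq2 : q+1-2*(q/2) = 1 := by
    obtain ⟨t, ht⟩ := hqe; omega
  rw [hq2] at hC
  have h1 : (fun y => ∑ T ∈ Finset.powersetCard 1 (Finset.univ : Finset (Fin (q+1))),
      (C * ∏ j ∈ Tᶜ, (s j)⁻¹) * Fp a T y) = fun _ => (0:ℝ) := by
    funext y
    rw [Finset.powersetCard_one]
    rw [Finset.sum_map]
    have hterm : ∀ k : Fin (q+1),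
        (C * ∏ j ∈ ({k} : Finset (Fin (q+1)))ᶜ, (s j)⁻¹) * Fp a {k} y
          = (C * ∏ j, (s j)⁻¹) * (s k * ⟪a k, y⟫) := by
      intro k
      have h2 : (s k)⁻¹ * ∏ j ∈ Finset.univ.erase k, (s j)⁻¹ = ∏ j, (s j)⁻¹ :=
        Finset.mul_prod_erase Finset.univ (fun j => (s j)⁻¹) (Finset.mem_univ k)
      have h3 : ∏ j ∈ ({k} : Finset (Fin (q+1)))ᶜ, (s j)⁻¹ = s k * ∏ j, (s j)⁻¹ := by
        rw [Finset.compl_singleton, ← h2, ← mul_assoc, mul_inv_cancel₀ (hs k), one_mul]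
      rw [h3, Fp, Finset.prod_singleton]
      ring
    simp only [Function.Embedding.coeFn_mk]
    calc ∑ k, (C * ∏ j ∈ ({k} : Finset (Fin (q+1)))ᶜ, (s j)⁻¹) * Fp a {k} y
        = ∑ k, (C * ∏ j, (s j)⁻¹) * (s k * ⟪a k, y⟫) :=
          Finset.sum_congr rfl fun k _ => hterm k
      _ = (C * ∏ j, (s j)⁻¹) * ⟪∑ k, s k • a k, y⟫ := by
          rw [sum_inner, Finset.mul_sum]
          exact Finset.sum_congr rfl fun k _ => by rw [real_inner_smul_left]
      _ = 0 := by rw [hrel, inner_zero_left, mul_zero]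
  rw [hC, h1]
  intro u
  exact gradient_const u 0

section Construct

lemma exists_Q {d q : ℕ} (a : Fin (q+1) → EuclideanSpace ℝ (Fin d))
    (hspan : Module.finrank ℝ ↥(Submodule.span ℝ (Set.range a)) = q)
    (s : Fin (q + 1) → ℝ) (hs : ∀ i, s i ≠ 0) (hrel : ∑ i, s i • a i = 0) :
    ∃ Q : Matrix (Fin d) (Fin d) ℝ, Q.PosDef ∧ ∀ k l : Fin (q+1), k ≠ l →
      (∑ i, ∑ j, Q i j * a k i * a l j) = (-(q+1:ℝ)⁻¹) * (s k)⁻¹ * (s l)⁻¹ := by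
  classical
  have hq1 : (q+1:ℝ) ≠ 0 := by positivity
  set φ : (Fin (q+1) → ℝ) →ₗ[ℝ] EuclideanSpace ℝ (Fin d) :=
    Fintype.linearCombination ℝ a with hφdef
  set ones : EuclideanSpace ℝ (Fin (q+1)) := ∑ k, EuclideanSpace.single k (1:ℝ) with hones
  set w : Fin (q+1) → EuclideanSpace ℝ (Fin (q+1)) := fun i =>
    (s i)⁻¹ • (EuclideanSpace.single i 1 - ((q+1:ℝ))⁻¹ • ones) with hw
  set χ : (Fin (q+1) → ℝ) →ₗ[ℝ] EuclideanSpace ℝ (Fin (q+1)) :=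
    Fintype.linearCombination ℝ w with hχdef
  have hφapp : ∀ c, φ c = ∑ i, c i • a i := by
    intro c; rw [hφdef, Fintype.linearCombination_apply]
  have hχapp : ∀ c, χ c = ∑ i, c i • w i := by
    intro c; rw [hχdef, Fintype.linearCombination_apply]
  have hφs : φ s = 0 := by rw [hφapp]; exact hrel
  -- inner product facts
  have hA : ∀ j i : Fin (q+1), ⟪EuclideanSpace.single j (1:ℝ), EuclideanSpace.single i 1⟫
      = if j = i then (1:ℝ) else 0 := by
    intro j i
    rw [EuclideanSpace.inner_single_left]
    simp [EuclideanSpace.single_apply, eq_comm]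
  have hB : ∀ j : Fin (q+1), ⟪EuclideanSpace.single j (1:ℝ), ones⟫ = 1 := by
    intro j
    rw [hones, inner_sum]
    simp [hA]
  have hC : ⟪ones, ones⟫ = (q+1 : ℝ) := by
    rw [hones, sum_inner]
    simp [← hones, hB]
  have hwinner : ∀ j i : Fin (q+1), ⟪EuclideanSpace.single j (1:ℝ), w i⟫
      = (s i)⁻¹ * ((if j = i then (1:ℝ) else 0) - (q+1:ℝ)⁻¹) := by
    intro j i
    rw [hw]
    simp only []
    rw [real_inner_smul_right, inner_sub_right, real_inner_smul_right, hA, hB]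
    ring
  have hz : ∀ k l : Fin (q+1), k ≠ l →
      ⟪(EuclideanSpace.single k (1:ℝ) - (q+1:ℝ)⁻¹ • ones),
        (EuclideanSpace.single l 1 - (q+1:ℝ)⁻¹ • ones)⟫ = -(q+1:ℝ)⁻¹ := by
    intro k l hkl
    rw [inner_sub_left, inner_sub_right, inner_sub_right, real_inner_smul_left,
      real_inner_smul_left, real_inner_smul_right, real_inner_smul_right, hA, hB, hC,
      real_inner_comm (EuclideanSpace.single l 1) ones, hB, if_neg hkl]
    field_simp
    ring
  have hww : ∀ k l : Fin (q+1), k ≠ l →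
      ⟪w k, w l⟫ = (-(q+1:ℝ)⁻¹) * (s k)⁻¹ * (s l)⁻¹ := by
    intro k l hkl
    rw [hw]
    simp only []
    rw [real_inner_smul_left, real_inner_smul_right, hz k l hkl]
    ring
  -- kernel of φ
  have hranφ : LinearMap.range φ = Submodule.span ℝ (Set.range a) := by
    rw [hφdef]; exact Fintype.range_linearCombination ℝ a
  have hs0 : s ≠ 0 := fun h => hs 0 (by rw [h]; rfl)
  have hrk : Module.finrank ℝ (LinearMap.range φ) = q := by rw [hranφ]; exact hspan
  have hrn := LinearMap.finrank_range_add_finrank_ker φ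
  have hdom : Module.finrank ℝ (Fin (q+1) → ℝ) = q+1 := by
    simp [Module.finrank_fintype_fun_eq_card]
  have hkerfr : Module.finrank ℝ (LinearMap.ker φ) = 1 := by
    rw [hrk, hdom] at hrn; omega
  have hsle : (ℝ ∙ s) ≤ LinearMap.ker φ := by
    rw [Submodule.span_singleton_le_iff_mem]; exact hφs
  have hker : (ℝ ∙ s) = LinearMap.ker φ := by
    apply Submodule.eq_of_le_of_finrank_le hsle
    rw [hkerfr, finrank_span_singleton hs0]
  -- χ kills s
  have hχs : χ s = 0 := by
    rw [hχapp, hw]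
    simp only []
    have : ∀ i : Fin (q+1), s i • ((s i)⁻¹ • (EuclideanSpace.single i 1 - ((q+1:ℝ))⁻¹ • ones))
        = EuclideanSpace.single i (1:ℝ) - ((q+1:ℝ))⁻¹ • ones := by
      intro i
      rw [smul_smul, mul_inv_cancel₀ (hs i), one_smul]
    rw [Finset.sum_congr rfl fun i _ => this i, Finset.sum_sub_distrib, ← hones,
      Finset.sum_const, Finset.card_univ, Fintype.card_fin]
    rw [← Nat.cast_smul_eq_nsmul ℝ, smul_smul]
    have hcast : ((q+1:ℕ):ℝ) * ((q:ℝ)+1)⁻¹ = 1 := by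
      push_cast; field_simp
    rw [hcast, one_smul, sub_self]
  have hkerle : LinearMap.ker φ ≤ LinearMap.ker χ := by
    rw [← hker]
    intro x hx
    obtain ⟨t, rfl⟩ := Submodule.mem_span_singleton.mp hx
    rw [LinearMap.mem_ker, map_smul, hχs, smul_zero]
  let e := φ.quotKerEquivRange
  let χbar := (LinearMap.ker φ).liftQ χ hkerle
  let ψ₀ : LinearMap.range φ →ₗ[ℝ] EuclideanSpace ℝ (Fin (q+1)) := χbar ∘ₗ e.symm.toLinearMap
  obtain ⟨ψ, hψ⟩ := ψ₀.exists_extend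
  have hfact : ∀ c, ψ (φ c) = χ c := by
    intro c
    have h1 : ψ (φ c) = ψ₀ ⟨φ c, LinearMap.mem_range_self φ c⟩ := by
      rw [← hψ]; rfl
    rw [h1]
    show χbar (e.symm ⟨φ c, LinearMap.mem_range_self φ c⟩) = χ c
    rw [show (⟨φ c, LinearMap.mem_range_self φ c⟩ : LinearMap.range φ)
        = ⟨φ c, LinearMap.mem_range_self φ c⟩ from rfl,
      LinearMap.quotKerEquivRange_symm_apply_image, Submodule.mkQ_apply,
      Submodule.liftQ_apply]
  set V : Submodule ℝ (EuclideanSpace ℝ (Fin d)) := Submodule.span ℝ (Set.range a) with hV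
  let P : EuclideanSpace ℝ (Fin d) →ₗ[ℝ] EuclideanSpace ℝ (Fin d) :=
    Vᗮ.subtype ∘ₗ (Vᗮ.orthogonalProjectionOnto :
      EuclideanSpace ℝ (Fin d) →L[ℝ] Vᗮ).toLinearMap
  have hPzero : ∀ v, v ∈ V → P v = 0 := by
    intro v hv
    have h0 : Vᗮ.orthogonalProjectionOnto v = 0 :=
      Submodule.orthogonalProjectionOnto_eq_zero_iff.mpr (V.le_orthogonal_orthogonal hv)
    show (Vᗮ.subtype) (Vᗮ.orthogonalProjectionOnto v) = 0
    rw [h0]; rfl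
  have hPker : ∀ v, P v = 0 → v ∈ V := by
    intro v hv
    have h0 : Vᗮ.orthogonalProjectionOnto v = 0 := Submodule.coe_eq_zero.mp hv
    have h1 := Submodule.orthogonalProjectionOnto_eq_zero_iff.mp h0
    rwa [Submodule.orthogonal_orthogonal] at h1
  have hinj : ∀ v : EuclideanSpace ℝ (Fin d), ψ v = 0 → P v = 0 → v = 0 := by
    intro v hψv hPv
    have hvV : v ∈ LinearMap.range φ := by rw [hranφ]; exact hPker v hPv
    obtain ⟨c, hc⟩ := hvV
    have hχc : χ c = 0 := by rw [← hfact c, hc]; exact hψv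
    have hcoord : ∀ j, c j * (s j)⁻¹ = (q+1:ℝ)⁻¹ * (∑ i, c i * (s i)⁻¹) := by
      intro j
      have h1 : ⟪EuclideanSpace.single j (1:ℝ), χ c⟫ = 0 := by
        rw [hχc, inner_zero_right]
      rw [hχapp, inner_sum] at h1
      simp_rw [real_inner_smul_right, hwinner] at h1
      simp only [mul_sub, mul_ite, mul_one, mul_zero, Finset.sum_sub_distrib] at h1
      rw [sub_eq_zero, Finset.sum_ite_eq] at h1
      simp only [Finset.mem_univ, if_true] at h1
      rw [h1, Finset.mul_sum]
      exact Finset.sum_congr rfl fun i _ => by ring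
    have hcs : c = ((q+1:ℝ)⁻¹ * (∑ i, c i * (s i)⁻¹)) • s := by
      funext j
      have h2 := hcoord j
      have h3 : c j * (s j)⁻¹ * s j = (q+1:ℝ)⁻¹ * (∑ i, c i * (s i)⁻¹) * s j := by
        rw [h2]
      rw [mul_assoc, inv_mul_cancel₀ (hs j), mul_one] at h3
      simpa [Pi.smul_apply, smul_eq_mul] using h3
    rw [← hc, hcs, map_smul, hφs, smul_zero]
  set Q : Matrix (Fin d) (Fin d) ℝ := fun i j =>
    ⟪ψ (EuclideanSpace.single i 1), ψ (EuclideanSpace.single j 1)⟫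
      + ⟪P (EuclideanSpace.single i 1), P (EuclideanSpace.single j 1)⟫ with hQ
  have hdec : ∀ v : EuclideanSpace ℝ (Fin d), ∑ i, v i • EuclideanSpace.single i (1:ℝ) = v := by
    intro v
    have h := (EuclideanSpace.basisFun (Fin d) ℝ).sum_repr v
    simpa [EuclideanSpace.basisFun_apply, EuclideanSpace.basisFun_repr] using h
  have hbil : ∀ (x y : EuclideanSpace ℝ (Fin d)),
      ∑ i, ∑ j, Q i j * x i * y j = ⟪ψ x, ψ y⟫ + ⟪P x, P y⟫ := by
    intro x y
    conv_rhs => rw [← hdec x, ← hdec y]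
    rw [map_sum ψ, map_sum ψ, map_sum P, map_sum P]
    simp only [map_smul, sum_inner, inner_sum, real_inner_smul_left, real_inner_smul_right]
    rw [show ∑ i, ∑ j, Q i j * x i * y j = ∑ j, ∑ i, Q i j * x i * y j from Finset.sum_comm]
    rw [← Finset.sum_add_distrib]
    refine Finset.sum_congr rfl fun j _ => ?_
    rw [← Finset.sum_add_distrib]
    refine Finset.sum_congr rfl fun i _ => ?_
    simp only [hQ]
    ring
  refine ⟨Q, Matrix.posDef_iff_dotProduct_mulVec.mpr ⟨?_, ?_⟩, ?_⟩
  · show Qᴴ = Q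
    ext i j
    rw [Matrix.conjTranspose_apply, star_trivial]
    simp only [hQ]
    rw [real_inner_comm (ψ (EuclideanSpace.single j 1)),
      real_inner_comm (P (EuclideanSpace.single j 1))]
  · intro x hx
    set y : EuclideanSpace ℝ (Fin d) := (WithLp.equiv 2 (Fin d → ℝ)).symm x with hy
    have hy0 : y ≠ 0 := fun h => hx (by
      have := congrArg (WithLp.equiv 2 (Fin d → ℝ)) h
      simpa [hy] using this)
    have hsum : (star x) ⬝ᵥ (Q *ᵥ x) = ∑ i, ∑ j, Q i j * y i * y j := by
      simp only [star_trivial, dotProduct, Matrix.mulVec, Finset.mul_sum]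
      refine Finset.sum_congr rfl fun i _ => Finset.sum_congr rfl fun j _ => ?_
      show x i * (Q i j * x j) = Q i j * y i * y j
      have h1 : y i = x i := rfl
      have h2 : y j = x j := rfl
      rw [h1, h2]; ring
    rw [hsum, hbil y y]
    have h1 : 0 ≤ ⟪ψ y, ψ y⟫ := real_inner_self_nonneg
    have h2 : 0 ≤ ⟪P y, P y⟫ := real_inner_self_nonneg
    rcases eq_or_lt_of_le (add_nonneg h1 h2) with heq | hlt
    · exfalso
      have h3 : ⟪ψ y, ψ y⟫ = 0 := by linarith
      have h4 : ⟪P y, P y⟫ = 0 := by linarith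
      exact hy0 (hinj y (inner_self_eq_zero.mp h3) (inner_self_eq_zero.mp h4))
    · exact hlt
  · intro k l hkl
    have h1 := hbil (a k) (a l)
    have hak : ∀ m, ψ (a m) = w m := by
      intro m
      have hφm : φ (Pi.single m 1) = a m := by
        rw [hφdef, Fintype.linearCombination_apply_single, one_smul]
      have hχm : χ (Pi.single m 1) = w m := by
        rw [hχdef, Fintype.linearCombination_apply_single, one_smul]
      rw [← hφm, hfact, hχm]
    have haP : ∀ m, P (a m) = 0 := fun m =>
      hPzero _ (Submodule.subset_span (Set.mem_range_self m))
    rw [h1, hak, hak, haP, haP, inner_zero_left, add_zero]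
    exact hww k l hkl

end Construct

/-- If `a₁, …, a_{q+1}` span a `q`-dimensional subspace of `ℝ^d` (`d ≥ q`) and admit a linear
relation `∑ sᵢ aᵢ = 0` with all `sᵢ ≠ 0`, then there is a symmetric positive definite matrix
`Q` such that `∇(∇ᵀQ∇)^{q/2} ∏ᵢ (aᵢᵀu)` vanishes identically. -/
theorem exists_posDef_gradient_iterate_prod_linear_eq_zero' (d q : ℕ) (hq : 2 ≤ q)
    (hqe : Even q) (hd : q ≤ d)
    (a : Fin (q + 1) → EuclideanSpace ℝ (Fin d))
    (hspan : Module.finrank ℝ ↥(Submodule.span ℝ (Set.range a)) = q)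
    (s : Fin (q + 1) → ℝ) (hs : ∀ i, s i ≠ 0) (hrel : ∑ i, s i • a i = 0) :
    ∃ Q : Matrix (Fin d) (Fin d) ℝ, Q.PosDef ∧
      ∀ u, gradient ((LQ Q)^[q / 2] fun v => ∏ i, ⟪a i, v⟫) u = 0 := by
  obtain ⟨Q, hPD, hG⟩ := exists_Q a hspan s hs hrel
  exact ⟨Q, hPD, master hq hqe a Q s hs hrel (-(q+1:ℝ)⁻¹) hG⟩
end Aux
end

section
/- Let d ≥ 1, let a ∈ ℝ^d be a nonzero vector, let R be a symmetric positive definite d×d real matrix, and let p : ℝ^d → ℝ be the cubic polynomial p(u) = (½ uᵀR u)(aᵀu). Then for every symmetric positive definite d×d real matrix Q one has the identity ∇(∇ᵀQ∇) p = (2RQ + tr(RQ)·I_d) a (a vector constant in u), and this vector is nonzero; hence ∇(∇ᵀQ∇)p cannot be made to vanish by any choice of positive definite Q. -/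
open scoped RealInnerProductSpace Matrix

section Aux

variable {d : ℕ}

lemma pd_of_hasFDerivAt {f : EuclideanSpace ℝ (Fin d) → ℝ}
    {f' : EuclideanSpace ℝ (Fin d) →L[ℝ] ℝ} {x : EuclideanSpace ℝ (Fin d)}
    (h : HasFDerivAt f f' x) (j : Fin d) :
    pd j f x = f' (EuclideanSpace.single j 1) := by
  simp only [pd, h.fderiv]

lemma hasFDerivAt_coord (k : Fin d) (x : EuclideanSpace ℝ (Fin d)) :
    HasFDerivAt (fun v : EuclideanSpace ℝ (Fin d) => v k)
      ((EuclideanSpace.proj k : EuclideanSpace ℝ (Fin d) →L[ℝ] ℝ)) x := by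
  have h : (fun v : EuclideanSpace ℝ (Fin d) => v k)
      = ⇑(EuclideanSpace.proj k : EuclideanSpace ℝ (Fin d) →L[ℝ] ℝ) := by
    funext v; simp
  rw [h]; exact (EuclideanSpace.proj k : EuclideanSpace ℝ (Fin d) →L[ℝ] ℝ).hasFDerivAt

lemma hasFDerivAt_inner_right (a x : EuclideanSpace ℝ (Fin d)) :
    HasFDerivAt (fun v : EuclideanSpace ℝ (Fin d) => ⟪a, v⟫) (innerSL ℝ a) x := by
  have h : (fun v : EuclideanSpace ℝ (Fin d) => ⟪a, v⟫) = ⇑(innerSL ℝ a) := by funext v; simp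
  rw [h]; exact (innerSL ℝ a).hasFDerivAt

lemma hasFDerivAt_quad (R : Matrix (Fin d) (Fin d) ℝ) (x : EuclideanSpace ℝ (Fin d)) :
    HasFDerivAt (fun v : EuclideanSpace ℝ (Fin d) => 1 / 2 * ∑ k, ∑ l, v k * R k l * v l)
      ((1 / 2 : ℝ) • ∑ k : Fin d, ∑ l : Fin d,
        ((x k * R k l) • (EuclideanSpace.proj l : EuclideanSpace ℝ (Fin d) →L[ℝ] ℝ)
          + x l • (R k l • (EuclideanSpace.proj k : EuclideanSpace ℝ (Fin d) →L[ℝ] ℝ)))) x := by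
  refine HasFDerivAt.const_mul ?_ _
  refine HasFDerivAt.fun_sum fun k _ => HasFDerivAt.fun_sum fun l _ => ?_
  exact ((hasFDerivAt_coord k x).mul_const (R k l)).mul (hasFDerivAt_coord l x)

lemma hasFDerivAt_lin (c : Fin d → ℝ) (x : EuclideanSpace ℝ (Fin d)) :
    HasFDerivAt (fun v : EuclideanSpace ℝ (Fin d) => ∑ l, c l * v l)
      (∑ l : Fin d, c l • (EuclideanSpace.proj l : EuclideanSpace ℝ (Fin d) →L[ℝ] ℝ)) x :=
  HasFDerivAt.fun_sum fun l _ => (hasFDerivAt_coord l x).const_mul (c l)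

lemma quadDeriv_apply (R : Matrix (Fin d) (Fin d) ℝ) (hR' : ∀ i j, R i j = R j i)
    (x : EuclideanSpace ℝ (Fin d)) (j : Fin d) :
    (∑ k : Fin d, ∑ l : Fin d,
        ((x k * R k l) • (EuclideanSpace.proj l : EuclideanSpace ℝ (Fin d) →L[ℝ] ℝ)
          + x l • (R k l • (EuclideanSpace.proj k : EuclideanSpace ℝ (Fin d) →L[ℝ] ℝ))))
      (EuclideanSpace.single j 1) = 2 * ∑ l, R j l * x l := by
  simp only [ContinuousLinearMap.sum_apply, ContinuousLinearMap.add_apply,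
    ContinuousLinearMap.smul_apply, PiLp.proj_apply, EuclideanSpace.single_apply,
    smul_eq_mul, mul_ite, mul_one, mul_zero, Finset.sum_add_distrib, Finset.sum_ite_eq',
    Finset.mem_univ, if_true]
  have h1 : ∑ k : Fin d, x k * R k j = ∑ k : Fin d, R j k * x k :=
    Finset.sum_congr rfl fun k _ => by rw [hR' k j]; ring
  have hB : ∑ k : Fin d, ∑ l : Fin d, (if k = j then x l * R k l else 0)
      = ∑ l : Fin d, R j l * x l := by
    rw [Finset.sum_comm]
    refine Finset.sum_congr rfl fun l _ => ?_
    simp [Finset.sum_ite_eq', mul_comm]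
  rw [h1, hB]
  ring

lemma linDeriv_apply (c : Fin d → ℝ) (i : Fin d) :
    (∑ l : Fin d, c l • (EuclideanSpace.proj l : EuclideanSpace ℝ (Fin d) →L[ℝ] ℝ))
      (EuclideanSpace.single i 1) = c i := by
  simp [EuclideanSpace.single_apply]

lemma innerSL_single (a : EuclideanSpace ℝ (Fin d)) (j : Fin d) :
    innerSL ℝ a (EuclideanSpace.single j 1) = a j := by
  simp [EuclideanSpace.inner_single_right]

lemma pd_p (a : EuclideanSpace ℝ (Fin d)) (R : Matrix (Fin d) (Fin d) ℝ)
    (hR' : ∀ i j, R i j = R j i) (j : Fin d) (x : EuclideanSpace ℝ (Fin d)) :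
    pd j (fun v => (1 / 2 * ∑ k, ∑ l, v k * R k l * v l) * ⟪a, v⟫) x
      = (1 / 2 * ∑ k, ∑ l, x k * R k l * x l) * a j + ⟪a, x⟫ * ∑ l, R j l * x l := by
  rw [pd_of_hasFDerivAt ((hasFDerivAt_quad R x).fun_mul (hasFDerivAt_inner_right a x)) j]
  rw [ContinuousLinearMap.add_apply, ContinuousLinearMap.smul_apply,
    ContinuousLinearMap.smul_apply, ContinuousLinearMap.smul_apply, innerSL_single,
    quadDeriv_apply R hR' x j]
  simp only [smul_eq_mul]
  ring

lemma pd_pd_p (a : EuclideanSpace ℝ (Fin d)) (R : Matrix (Fin d) (Fin d) ℝ)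
    (hR' : ∀ i j, R i j = R j i) (i j : Fin d) (x : EuclideanSpace ℝ (Fin d)) :
    pd i (pd j (fun v => (1 / 2 * ∑ k, ∑ l, v k * R k l * v l) * ⟪a, v⟫)) x
      = (∑ l, R i l * x l) * a j + a i * ∑ l, R j l * x l + ⟪a, x⟫ * R j i := by
  have hfun : pd j (fun v : EuclideanSpace ℝ (Fin d) =>
      (1 / 2 * ∑ k, ∑ l, v k * R k l * v l) * ⟪a, v⟫)
      = fun x => (1 / 2 * ∑ k, ∑ l, x k * R k l * x l) * a j + ⟪a, x⟫ * ∑ l, R j l * x l :=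
    funext (pd_p a R hR' j)
  rw [hfun]
  have h1 : HasFDerivAt (fun x : EuclideanSpace ℝ (Fin d) =>
      (1 / 2 * ∑ k, ∑ l, x k * R k l * x l) * a j + ⟪a, x⟫ * ∑ l, R j l * x l)
      ((a j) • ((1 / 2 : ℝ) • ∑ k : Fin d, ∑ l : Fin d,
        ((x k * R k l) • (EuclideanSpace.proj l : EuclideanSpace ℝ (Fin d) →L[ℝ] ℝ)
          + x l • (R k l • (EuclideanSpace.proj k : EuclideanSpace ℝ (Fin d) →L[ℝ] ℝ))))
       + (⟪a, x⟫ • (∑ l : Fin d, (R j l) • (EuclideanSpace.proj l : EuclideanSpace ℝ (Fin d) →L[ℝ] ℝ))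
          + (∑ l, R j l * x l) • innerSL ℝ a)) x :=
    ((hasFDerivAt_quad R x).mul_const (a j)).add
      ((hasFDerivAt_inner_right a x).mul (hasFDerivAt_lin (fun l => R j l) x))
  rw [pd_of_hasFDerivAt h1 i]
  rw [ContinuousLinearMap.add_apply, ContinuousLinearMap.add_apply,
    ContinuousLinearMap.smul_apply, ContinuousLinearMap.smul_apply,
    ContinuousLinearMap.smul_apply, ContinuousLinearMap.smul_apply,
    quadDeriv_apply R hR' x i, linDeriv_apply, innerSL_single]
  simp only [smul_eq_mul]
  ring

lemma hasGradientAt_inner_right (w u : EuclideanSpace ℝ (Fin d)) :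
    HasGradientAt (fun v : EuclideanSpace ℝ (Fin d) => ⟪w, v⟫) w u := by
  rw [hasGradientAt_iff_hasFDerivAt]
  have h : (fun v : EuclideanSpace ℝ (Fin d) => ⟪w, v⟫) = ⇑(innerSL ℝ w) := by funext v; simp
  have h2 : ((InnerProductSpace.toDual ℝ (EuclideanSpace ℝ (Fin d))) w
      : EuclideanSpace ℝ (Fin d) →L[ℝ] ℝ) = innerSL ℝ w := by
    ext v; simp [InnerProductSpace.toDual_apply_apply]
  rw [h, h2]; exact (innerSL ℝ w).hasFDerivAt

lemma sum3_rot (f : Fin d → Fin d → Fin d → ℝ) :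
    ∑ i, ∑ j, ∑ l, f i j l = ∑ l, ∑ i, ∑ j, f i j l := by
  calc ∑ i, ∑ j, ∑ l, f i j l = ∑ i, ∑ l, ∑ j, f i j l :=
        Finset.sum_congr rfl fun i _ => Finset.sum_comm
    _ = ∑ l, ∑ i, ∑ j, f i j l := Finset.sum_comm

lemma sum3_swap13 (f : Fin d → Fin d → Fin d → ℝ) :
    ∑ i, ∑ j, ∑ l, f i j l = ∑ l, ∑ j, ∑ i, f i j l := by
  calc ∑ i, ∑ j, ∑ l, f i j l = ∑ j, ∑ i, ∑ l, f i j l := Finset.sum_comm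
    _ = ∑ j, ∑ l, ∑ i, f i j l := Finset.sum_congr rfl fun j _ => Finset.sum_comm
    _ = ∑ l, ∑ j, ∑ i, f i j l := Finset.sum_comm

lemma trace_nonneg_of_posSemidef {N : Matrix (Fin d) (Fin d) ℝ}
    (h : N.PosSemidef) : 0 ≤ N.trace := by
  rw [Matrix.trace]
  refine Finset.sum_nonneg fun i _ => ?_
  exact h.diag_nonneg

open scoped MatrixOrder in
lemma trace_RQ_nonneg {R Q : Matrix (Fin d) (Fin d) ℝ}
    (hR : R.PosDef) (hQ : Q.PosDef) : 0 ≤ Matrix.trace (R * Q) := by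
  set S := CFC.sqrt R with hS
  have hSS : S * S = R := CFC.sqrt_mul_sqrt_self R hR.posSemidef.nonneg
  have hherm : Sᴴ = S := (Matrix.nonneg_iff_posSemidef.mp (CFC.sqrt_nonneg R)).isHermitian
  have hpos : (S * Q * S).PosSemidef := by
    have := hQ.posSemidef.conjTranspose_mul_mul_same S
    rwa [hherm] at this
  have htr : Matrix.trace (R * Q) = Matrix.trace (S * Q * S) := by
    rw [Matrix.trace_mul_cycle S Q S, hSS]
  rw [htr]
  exact trace_nonneg_of_posSemidef hpos

end Aux

/-- For the cubic `p(u) = (½ uᵀRu)(aᵀu)` with `a ≠ 0` and `R` positive definite, and any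
positive definite `Q`, one has `∇(∇ᵀQ∇)p = (2RQ + tr(RQ)·I) a` everywhere, and this
vector is nonzero. -/
theorem gradient_LQ_quadratic_mul_linear (d : ℕ) (hd : 1 ≤ d)
    (a : EuclideanSpace ℝ (Fin d)) (ha : a ≠ 0)
    (R : Matrix (Fin d) (Fin d) ℝ) (hR : R.PosDef)
    (Q : Matrix (Fin d) (Fin d) ℝ) (hQ : Q.PosDef) :
    (∀ u, gradient
        (LQ Q fun v => (1 / 2 * ∑ k, ∑ l, v k * R k l * v l) * ⟪a, v⟫) u
        = (EuclideanSpace.equiv (Fin d) ℝ).symm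
            ((((2 : ℝ) • (R * Q) + Matrix.trace (R * Q) • (1 : Matrix (Fin d) (Fin d) ℝ)).mulVec
              (fun k => a k)))) ∧
    (EuclideanSpace.equiv (Fin d) ℝ).symm
        ((((2 : ℝ) • (R * Q) + Matrix.trace (R * Q) • (1 : Matrix (Fin d) (Fin d) ℝ)).mulVec
          (fun k => a k))) ≠ 0 := by
  have hR' : ∀ i j, R i j = R j i := fun i j => by
    conv_lhs => rw [← hR.isHermitian]
    simp [Matrix.conjTranspose_apply]
  have hQ' : ∀ i j, Q i j = Q j i := fun i j => by
    conv_lhs => rw [← hQ.isHermitian]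
    simp [Matrix.conjTranspose_apply]
  set a' : Fin d → ℝ := fun k => a k with ha'def
  set t : ℝ := Matrix.trace (R * Q) with htdef
  set M : Matrix (Fin d) (Fin d) ℝ :=
    (2 : ℝ) • (R * Q) + t • (1 : Matrix (Fin d) (Fin d) ℝ) with hMdef
  set w : EuclideanSpace ℝ (Fin d) := (EuclideanSpace.equiv (Fin d) ℝ).symm (M.mulVec a')
    with hwdef
  have hwk : ∀ k, w k = M.mulVec a' k := fun k => rfl
  have htrace : t = ∑ i, ∑ j, R i j * Q j i := by
    rw [htdef]
    simp [Matrix.trace, Matrix.diag, Matrix.mul_apply]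
  have key : (LQ Q fun v => (1 / 2 * ∑ k, ∑ l, v k * R k l * v l) * ⟪a, v⟫)
      = fun v => ⟪w, v⟫ := by
    funext v
    rw [LQ]
    have hinner : ∀ b : EuclideanSpace ℝ (Fin d), ⟪b, v⟫ = ∑ k, b k * v k := fun b => by
      simp [PiLp.inner_apply, RCLike.inner_apply, mul_comm]
    set S0 : ℝ := ∑ k, a k * v k with hS0
    set K : ℝ := ∑ k, ∑ j, ∑ m, R k j * Q j m * a m * v k with hK
    have hterm : ∀ i j : Fin d,
        Q i j * pd i (pd j (fun v => (1 / 2 * ∑ k, ∑ l, v k * R k l * v l) * ⟪a, v⟫)) v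
        = (∑ l, Q i j * (R i l * v l * a j)) + (∑ l, Q i j * (a i * (R j l * v l)))
            + Q i j * R j i * S0 := by
      intro i j
      rw [pd_pd_p a R hR' i j v, hinner a, ← hS0]
      have e1 : (∑ l, R i l * v l) * a j = ∑ l, R i l * v l * a j := by
        rw [Finset.sum_mul]
      have e2 : a i * (∑ l, R j l * v l) = ∑ l, a i * (R j l * v l) := by
        rw [Finset.mul_sum]
      rw [mul_add, mul_add, e1, e2, Finset.mul_sum, Finset.mul_sum]
      ring
    rw [Finset.sum_congr rfl fun i _ => Finset.sum_congr rfl fun j _ => hterm i j]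
    simp only [Finset.sum_add_distrib]
    have hT1 : ∑ i : Fin d, ∑ j : Fin d, ∑ l : Fin d, Q i j * (R i l * v l * a j) = K := by
      rw [sum3_rot fun i j l => Q i j * (R i l * v l * a j), hK]
      exact Finset.sum_congr rfl fun k _ => Finset.sum_congr rfl fun i _ =>
        Finset.sum_congr rfl fun j _ => by rw [hR' i k]; ring
    have hT2 : ∑ i : Fin d, ∑ j : Fin d, ∑ l : Fin d, Q i j * (a i * (R j l * v l)) = K := by
      rw [sum3_swap13 fun i j l => Q i j * (a i * (R j l * v l)), hK]
      exact Finset.sum_congr rfl fun k _ => Finset.sum_congr rfl fun j _ =>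
        Finset.sum_congr rfl fun m _ => by rw [hQ' m j, hR' j k]; ring
    have hT3 : ∑ i : Fin d, ∑ j : Fin d, Q i j * R j i * S0 = t * S0 := by
      have e3 : ∑ i : Fin d, ∑ j : Fin d, Q i j * R j i * S0
          = (∑ i : Fin d, ∑ j : Fin d, Q i j * R j i) * S0 := by
        rw [Finset.sum_mul]
        exact Finset.sum_congr rfl fun i _ => (Finset.sum_mul _ _ _).symm
      rw [e3]
      have e4 : ∑ i : Fin d, ∑ j : Fin d, Q i j * R j i = t := by
        rw [htrace, Finset.sum_comm]
        exact Finset.sum_congr rfl fun i _ => Finset.sum_congr rfl fun j _ => mul_comm _ _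
      rw [e4]
    rw [hT1, hT2, hT3, hinner w]
    have hwk2 : ∀ k, w k * v k
        = 2 * (∑ j, ∑ m, R k j * Q j m * a m * v k) + t * (a k * v k) := by
      intro k
      rw [hwk k, hMdef]
      have hMv : ((2 : ℝ) • (R * Q) + t • (1 : Matrix (Fin d) (Fin d) ℝ)).mulVec a' k
          = ∑ m, (2 * ((R * Q) k m) + t * (if k = m then 1 else 0)) * a m := by
        simp [Matrix.mulVec, dotProduct, Matrix.add_apply, Matrix.smul_apply,
          Matrix.one_apply, smul_eq_mul, ha'def]
      rw [hMv]
      have hsplit : ∑ m, (2 * ((R * Q) k m) + t * (if k = m then 1 else 0)) * a m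
          = (∑ m, 2 * ((R * Q) k m) * a m) + t * a k := by
        simp [add_mul, Finset.sum_add_distrib, mul_ite, ite_mul, Finset.sum_ite_eq,
          mul_assoc]
      rw [hsplit, add_mul, Finset.sum_mul]
      have hsum : ∑ m, 2 * ((R * Q) k m) * a m * v k
          = 2 * ∑ j, ∑ m, R k j * Q j m * a m * v k := by
        calc ∑ m, 2 * ((R * Q) k m) * a m * v k
            = ∑ m : Fin d, ∑ j : Fin d, 2 * (R k j * Q j m) * a m * v k :=
              Finset.sum_congr rfl fun m _ => by
                rw [Matrix.mul_apply, Finset.mul_sum, Finset.sum_mul, Finset.sum_mul]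
          _ = ∑ j : Fin d, ∑ m : Fin d, 2 * (R k j * Q j m) * a m * v k := Finset.sum_comm
          _ = 2 * ∑ j, ∑ m, R k j * Q j m * a m * v k := by
              rw [Finset.mul_sum]
              refine Finset.sum_congr rfl fun j _ => ?_
              rw [Finset.mul_sum]
              exact Finset.sum_congr rfl fun m _ => by ring
      rw [hsum]
      ring
    rw [Finset.sum_congr rfl fun k _ => hwk2 k]
    rw [Finset.sum_add_distrib, ← Finset.mul_sum, ← Finset.mul_sum, ← hK, ← hS0]
    ring
  constructor
  · intro u
    rw [key]
    exact (hasGradientAt_inner_right w u).gradient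
  · intro hw0
    have hM0 : M.mulVec a' = 0 := by
      have h0 : (EuclideanSpace.equiv (Fin d) ℝ) w = (EuclideanSpace.equiv (Fin d) ℝ) 0 := by
        rw [hw0]
      simpa [hwdef] using h0
    have ha0 : a' ≠ 0 := by
      intro h
      apply ha
      ext k
      exact congrFun h k
    have hQa : 0 < dotProduct a' (Q.mulVec a') := by
      have := hQ.dotProduct_mulVec_pos ha0
      simpa using this
    set b : Fin d → ℝ := Q.mulVec a' with hbdef
    have hb0 : b ≠ 0 := by
      intro h
      rw [h] at hQa
      simp at hQa
    have hRb : 0 < dotProduct b (R.mulVec b) := by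
      have := hR.dotProduct_mulVec_pos hb0
      simpa using this
    have hc : 0 ≤ t := trace_RQ_nonneg hR hQ
    have heq : (2 : ℝ) • R.mulVec b + t • a' = 0 := by
      have h1 := hM0
      rw [hMdef, Matrix.add_mulVec, Matrix.smul_mulVec, Matrix.smul_mulVec,
        Matrix.one_mulVec, ← Matrix.mulVec_mulVec] at h1
      exact h1
    have hdot : dotProduct b ((2 : ℝ) • R.mulVec b + t • a') = 0 := by
      rw [heq]; simp
    rw [dotProduct_add, dotProduct_smul, dotProduct_smul] at hdot
    have hba : dotProduct b a' = dotProduct a' (Q.mulVec a') := by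
      rw [hbdef, dotProduct_comm]
    rw [hba] at hdot
    simp only [smul_eq_mul] at hdot
    have h2 : (0:ℝ) ≤ t * dotProduct a' (Q.mulVec a') := mul_nonneg hc hQa.le
    linarith
end

section
/- Let p : ℝ² → ℝ be a homogeneous polynomial of degree 3. Then there exists a symmetric positive definite 2×2 real matrix Q with ∇(∇ᵀQ∇) p identically zero on ℝ² if and only if either p is identically zero, or p(u) = ∏_{i=1}^{3} (a_iᵀu) for some vectors a₁, a₂, a₃ ∈ ℝ², any two of which are linearly independent. -/
set_option maxHeartbeats 1000000

open scoped RealInnerProductSpace Matrix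

abbrev E2 := EuclideanSpace ℝ (Fin 2)

lemma proj_apply' (i : Fin 2) (w : E2) : EuclideanSpace.proj (𝕜:=ℝ) i w = w i := rfl

lemma hasFDerivAt_coord_s8 (i : Fin 2) (u : E2) :
    HasFDerivAt (𝕜 := ℝ) (fun v : E2 => v i) (EuclideanSpace.proj i) u :=
  (EuclideanSpace.proj (𝕜 := ℝ) i).hasFDerivAt

lemma hasFDerivAt_cubic (c0 c1 c2 c3 : ℝ) (u : E2) :
    HasFDerivAt (𝕜 := ℝ) (fun v : E2 => c0*v 0^3 + c1*v 0^2*v 1 + c2*v 0*v 1^2 + c3*v 1^3)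
      ((3*c0*u 0^2 + 2*c1*u 0*u 1 + c2*u 1^2) • EuclideanSpace.proj 0
        + (c1*u 0^2 + 2*c2*u 0*u 1 + 3*c3*u 1^2) • EuclideanSpace.proj 1) u := by
  have h0 := hasFDerivAt_coord_s8 0 u
  have h1 := hasFDerivAt_coord_s8 1 u
  have H := (((((h0.mul h0).mul h0).const_mul c0).add
      (((h0.mul h0).mul h1).const_mul c1)).add
      (((h0.mul h1).mul h1).const_mul c2)).add
      ((((h1.mul h1).mul h1)).const_mul c3)
  refine (H.congr_fderiv ?_).congr_of_eventuallyEq (Filter.Eventually.of_forall fun v => ?_)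
  · ext v
    simp [ContinuousLinearMap.add_apply, ContinuousLinearMap.smul_apply, smul_eq_mul, proj_apply']
    ring
  · simp only [Pi.add_apply, Pi.mul_apply]
    ring

lemma hasFDerivAt_quad_s8 (f0 f1 f2 : ℝ) (u : E2) :
    HasFDerivAt (𝕜 := ℝ) (fun v : E2 => f0*v 0^2 + f1*v 0*v 1 + f2*v 1^2)
      ((2*f0*u 0 + f1*u 1) • EuclideanSpace.proj 0
        + (f1*u 0 + 2*f2*u 1) • EuclideanSpace.proj 1) u := by
  have h0 := hasFDerivAt_coord_s8 0 u
  have h1 := hasFDerivAt_coord_s8 1 u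
  have H := (((h0.mul h0).const_mul f0).add ((h0.mul h1).const_mul f1)).add
      ((h1.mul h1).const_mul f2)
  refine (H.congr_fderiv ?_).congr_of_eventuallyEq (Filter.Eventually.of_forall fun v => ?_)
  · ext v
    simp [ContinuousLinearMap.add_apply, ContinuousLinearMap.smul_apply, smul_eq_mul, proj_apply']
    ring
  · simp only [Pi.add_apply, Pi.mul_apply]
    ring

lemma hasFDerivAt_lin_s8 (A B : ℝ) (u : E2) :
    HasFDerivAt (𝕜 := ℝ) (fun v : E2 => A*v 0 + B*v 1)
      (A • EuclideanSpace.proj 0 + B • EuclideanSpace.proj 1) u := by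
  have h0 := hasFDerivAt_coord_s8 0 u
  have h1 := hasFDerivAt_coord_s8 1 u
  exact (h0.const_mul A).add (h1.const_mul B)

lemma pd_cubic_0 (c0 c1 c2 c3 : ℝ) (u : E2) :
    pd 0 (fun v : E2 => c0*v 0^3 + c1*v 0^2*v 1 + c2*v 0*v 1^2 + c3*v 1^3) u
      = 3*c0*u 0^2 + 2*c1*u 0*u 1 + c2*u 1^2 := by
  unfold pd
  rw [(hasFDerivAt_cubic c0 c1 c2 c3 u).fderiv]
  simp [ContinuousLinearMap.add_apply, ContinuousLinearMap.smul_apply, smul_eq_mul,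
    proj_apply', EuclideanSpace.single_apply]

lemma pd_cubic_1 (c0 c1 c2 c3 : ℝ) (u : E2) :
    pd 1 (fun v : E2 => c0*v 0^3 + c1*v 0^2*v 1 + c2*v 0*v 1^2 + c3*v 1^3) u
      = c1*u 0^2 + 2*c2*u 0*u 1 + 3*c3*u 1^2 := by
  unfold pd
  rw [(hasFDerivAt_cubic c0 c1 c2 c3 u).fderiv]
  simp [ContinuousLinearMap.add_apply, ContinuousLinearMap.smul_apply, smul_eq_mul,
    proj_apply', EuclideanSpace.single_apply]

lemma pd_quad_0 (f0 f1 f2 : ℝ) (u : E2) :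
    pd 0 (fun v : E2 => f0*v 0^2 + f1*v 0*v 1 + f2*v 1^2) u = 2*f0*u 0 + f1*u 1 := by
  unfold pd
  rw [(hasFDerivAt_quad_s8 f0 f1 f2 u).fderiv]
  simp [ContinuousLinearMap.add_apply, ContinuousLinearMap.smul_apply, smul_eq_mul,
    proj_apply', EuclideanSpace.single_apply]

lemma pd_quad_1 (f0 f1 f2 : ℝ) (u : E2) :
    pd 1 (fun v : E2 => f0*v 0^2 + f1*v 0*v 1 + f2*v 1^2) u = f1*u 0 + 2*f2*u 1 := by
  unfold pd
  rw [(hasFDerivAt_quad_s8 f0 f1 f2 u).fderiv]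
  simp [ContinuousLinearMap.add_apply, ContinuousLinearMap.smul_apply, smul_eq_mul,
    proj_apply', EuclideanSpace.single_apply]

lemma hasGradientAt_lin (A B : ℝ) (u : E2) :
    HasGradientAt (fun v : E2 => A*v 0 + B*v 1)
      (A • EuclideanSpace.single 0 1 + B • EuclideanSpace.single 1 1) u := by
  rw [hasGradientAt_iff_hasFDerivAt]
  refine (hasFDerivAt_lin_s8 A B u).congr_fderiv ?_
  ext v
  simp [InnerProductSpace.toDual_apply_apply, PiLp.inner_apply, RCLike.inner_apply,
    Fin.sum_univ_two, ContinuousLinearMap.add_apply, ContinuousLinearMap.smul_apply,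
    smul_eq_mul, proj_apply', EuclideanSpace.single_apply, PiLp.add_apply, PiLp.smul_apply]

lemma grad_iff (Q : Matrix (Fin 2) (Fin 2) ℝ) (c : Fin 4 → ℝ) (p : E2 → ℝ)
    (hc : ∀ u : E2, p u = c 0 * u 0 ^ 3 + c 1 * u 0 ^ 2 * u 1 + c 2 * u 0 * u 1 ^ 2 + c 3 * u 1 ^ 3) :
    (∀ u, gradient (LQ Q p) u = 0) ↔
      (3*c 0*Q 0 0 + c 1*(Q 0 1 + Q 1 0) + c 2*Q 1 1 = 0 ∧
       c 1*Q 0 0 + c 2*(Q 0 1 + Q 1 0) + 3*c 3*Q 1 1 = 0) := by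
  have hp' : p = fun v : E2 => c 0*v 0^3 + c 1*v 0^2*v 1 + c 2*v 0*v 1^2 + c 3*v 1^3 := by
    funext v; rw [hc v]
  subst hp'
  have hpd0 : pd 0 (fun v : E2 => c 0*v 0^3 + c 1*v 0^2*v 1 + c 2*v 0*v 1^2 + c 3*v 1^3)
      = fun v : E2 => (3*c 0)*v 0^2 + (2*c 1)*v 0*v 1 + (c 2)*v 1^2 := by
    funext v
    rw [pd_cubic_0 (c 0) (c 1) (c 2) (c 3) v]
  have hpd1 : pd 1 (fun v : E2 => c 0*v 0^3 + c 1*v 0^2*v 1 + c 2*v 0*v 1^2 + c 3*v 1^3)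
      = fun v : E2 => (c 1)*v 0^2 + (2*c 2)*v 0*v 1 + (3*c 3)*v 1^2 := by
    funext v
    rw [pd_cubic_1 (c 0) (c 1) (c 2) (c 3) v]
  obtain ⟨A, hA⟩ : ∃ A : ℝ, A = 2*(3*c 0*Q 0 0 + c 1*(Q 0 1 + Q 1 0) + c 2*Q 1 1) := ⟨_, rfl⟩
  obtain ⟨B, hB⟩ : ∃ B : ℝ, B = 2*(c 1*Q 0 0 + c 2*(Q 0 1 + Q 1 0) + 3*c 3*Q 1 1) := ⟨_, rfl⟩
  have hLQ : LQ Q (fun v : E2 => c 0*v 0^3 + c 1*v 0^2*v 1 + c 2*v 0*v 1^2 + c 3*v 1^3)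
      = fun x : E2 => A*x 0 + B*x 1 := by
    funext x
    show (∑ i, ∑ j, Q i j * pd i (pd j (fun v : E2 => c 0*v 0^3 + c 1*v 0^2*v 1 + c 2*v 0*v 1^2 + c 3*v 1^3)) x) = A*x 0 + B*x 1
    rw [Fin.sum_univ_two, Fin.sum_univ_two, Fin.sum_univ_two, hpd0, hpd1,
      pd_quad_0 (3*c 0) (2*c 1) (c 2) x, pd_quad_1 (3*c 0) (2*c 1) (c 2) x,
      pd_quad_0 (c 1) (2*c 2) (3*c 3) x, pd_quad_1 (c 1) (2*c 2) (3*c 3) x, hA, hB]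
    ring
  have hgrad : ∀ u : E2, gradient (LQ Q (fun v : E2 => c 0*v 0^3 + c 1*v 0^2*v 1 + c 2*v 0*v 1^2 + c 3*v 1^3)) u
      = A • EuclideanSpace.single 0 1 + B • EuclideanSpace.single 1 1 := by
    intro u
    rw [hLQ]
    exact (hasGradientAt_lin A B u).gradient
  constructor
  · intro h
    have h0 := h 0
    rw [hgrad 0] at h0
    have hA0 : (A • EuclideanSpace.single 0 1 + B • EuclideanSpace.single 1 1 : E2) 0 = (0 : E2) 0 := by rw [h0]
    have hB0 : (A • EuclideanSpace.single 0 1 + B • EuclideanSpace.single 1 1 : E2) 1 = (0 : E2) 1 := by rw [h0]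
    simp only [PiLp.add_apply, PiLp.smul_apply, EuclideanSpace.single_apply, smul_eq_mul,
      PiLp.zero_apply] at hA0 hB0
    norm_num at hA0 hB0
    constructor
    · rw [hA] at hA0; linarith
    · rw [hB] at hB0; linarith
  · intro ⟨h1, h2⟩
    intro u
    rw [hgrad u]
    have hA0 : A = 0 := by rw [hA, h1]; ring
    have hB0 : B = 0 := by rw [hB, h2]; ring
    rw [hA0, hB0]
    simp


lemma kill (a b d x y z : ℝ) (ha : 0 < a) (hdet : 0 < a*d - b*b)
    (htr : x*a + 2*y*b + z*d = 0) (hS : y*y ≤ x*z) : x = 0 ∧ y = 0 ∧ z = 0 := by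
  have hd : 0 < d := by nlinarith [sq_nonneg b]
  have hxz : 0 ≤ x*z := le_trans (mul_self_nonneg y) hS
  have hlin : x*a + z*d = -(2*y*b) := by linarith
  have h2 : (x*a+z*d)^2 = 4*(y*y)*(b*b) := by rw [hlin]; ring
  have hx : x = 0 := by
    rcases lt_trichotomy x 0 with h | h | h
    · exfalso
      have hz : z ≤ 0 := by nlinarith
      rcases eq_or_lt_of_le hz with hz0 | hz0
      · have hxz0 : x*z = 0 := by rw [hz0]; ring
        have h1 : y*y ≤ 0 := by linarith
        have hy : y = 0 := mul_self_eq_zero.mp (le_antisymm h1 (mul_self_nonneg y))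
        have e1 : 2*y*b = 0 := by rw [hy]; ring
        have e2 : z*d = 0 := by rw [hz0]; ring
        have e3 : x*a < 0 := mul_neg_of_neg_of_pos h ha
        linarith
      · nlinarith [h2, sq_nonneg (x*a - z*d), mul_pos (neg_pos.2 h) (neg_pos.2 hz0), mul_self_nonneg b, hS, hdet]
    · exact h
    · exfalso
      have hz : 0 ≤ z := by nlinarith
      rcases eq_or_lt_of_le hz with hz0 | hz0
      · have hxz0 : x*z = 0 := by rw [← hz0]; ring
        have h1 : y*y ≤ 0 := by linarith
        have hy : y = 0 := mul_self_eq_zero.mp (le_antisymm h1 (mul_self_nonneg y))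
        have e1 : 2*y*b = 0 := by rw [hy]; ring
        have e2 : z*d = 0 := by rw [← hz0]; ring
        have e3 : 0 < x*a := mul_pos h ha
        linarith
      · nlinarith [h2, sq_nonneg (x*a - z*d), mul_pos h hz0, mul_self_nonneg b, hS, hdet]
  have hxz0 : x*z = 0 := by rw [hx]; ring
  have h1 : y*y ≤ 0 := by linarith
  have hy : y = 0 := mul_self_eq_zero.mp (le_antisymm h1 (mul_self_nonneg y))
  refine ⟨hx, hy, ?_⟩
  rw [hx, hy] at htr
  have : z * d = 0 := by linarith
  rcases mul_eq_zero.mp this with h | h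
  · exact h
  · exact absurd h (ne_of_gt hd)

noncomputable def disc (c0 c1 c2 c3 : ℝ) : ℝ :=
  18*c0*c1*c2*c3 - 4*c1^3*c3 + c1^2*c2^2 - 4*c0*c2^3 - 27*c0^2*c3^2

lemma alg_forward (a b d c0 c1 c2 c3 : ℝ) (ha : 0 < a) (hdet : 0 < a*d - b*b)
    (e1 : 3*c0*a + 2*c1*b + c2*d = 0) (e2 : c1*a + 2*c2*b + 3*c3*d = 0)
    (hc : ¬(c0 = 0 ∧ c1 = 0 ∧ c2 = 0 ∧ c3 = 0)) : 0 < disc c0 c1 c2 c3 := by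
  set A' : ℝ := 3*c0*c2 - c1^2 with hA'
  set C' : ℝ := 3*c1*c3 - c2^2 with hC'
  set B : ℝ := c1*c2 - 9*c0*c3 with hB
  have hAneg : A' < 0 := by
    by_contra hA
    push_neg at hA
    obtain ⟨h1, h2, h3⟩ := kill a b d (3*c0) c1 c2 ha hdet (by linarith) (by nlinarith)
    have hc0 : c0 = 0 := by linarith
    have hc3 : c3 ≠ 0 := fun h => hc ⟨hc0, h2, h3, h⟩
    obtain ⟨_, _, h6⟩ := kill a b d c1 c2 (3*c3) ha hdet (by linarith) (by rw [h2, h3]; nlinarith)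
    exact hc3 (by linarith)
  have hCneg : C' < 0 := by
    by_contra hC
    push_neg at hC
    obtain ⟨h1, h2, h3⟩ := kill a b d c1 c2 (3*c3) ha hdet (by linarith) (by nlinarith)
    have hc3 : c3 = 0 := by linarith
    have hc0 : c0 ≠ 0 := fun h => hc ⟨h, h1, h2, hc3⟩
    obtain ⟨h4, _, _⟩ := kill a b d (3*c0) c1 c2 ha hdet (by linarith) (by rw [h1, h2]; nlinarith)
    exact hc0 (by linarith)
  -- apply kill to S = B • N1 + (2A') • N2
  by_cases hkey : (B*c1 + 2*A'*c2)*(B*c1 + 2*A'*c2) ≤ (B*(3*c0) + 2*A'*c1)*(B*c2 + 2*A'*(3*c3))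
  · exfalso
    obtain ⟨h1, h2, h3⟩ := kill a b d (B*(3*c0) + 2*A'*c1) (B*c1 + 2*A'*c2) (B*c2 + 2*A'*(3*c3))
      ha hdet (by linear_combination B*e1 + 2*A'*e2) hkey
    have hA0 : A'^2 = 0 := by
      rw [hA'] at h1 h2 ⊢
      rw [hB] at h1 h2
      linear_combination (3*c0/2)*h2 - (c1/2)*h1
    have : A' = 0 := by
      have := sq_nonneg A'
      nlinarith
    linarith
  · push_neg at hkey
    have hid : (B*(3*c0) + 2*A'*c1)*(B*c2 + 2*A'*(3*c3)) - (B*c1 + 2*A'*c2)*(B*c1 + 2*A'*c2)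
        = A'*(4*A'*C' - B^2) := by rw [hA', hC', hB]; ring
    have h4 : 0 < 4*A'*C' - B^2 := by nlinarith
    have h3d : 4*A'*C' - B^2 = 3*disc c0 c1 c2 c3 := by rw [hA', hC', hB]; unfold disc; ring
    linarith

lemma alg_backward (c0 c1 c2 c3 : ℝ) (hdisc : 0 < disc c0 c1 c2 c3) :
    ∃ a b d : ℝ, 0 < a ∧ 0 < a*d - b*b ∧
      3*c0*a + 2*c1*b + c2*d = 0 ∧ c1*a + 2*c2*b + 3*c3*d = 0 := by
  set w1 : ℝ := 6*c1*c3 - 2*c2^2 with hw1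
  set w2 : ℝ := c1*c2 - 9*c0*c3 with hw2
  set w3 : ℝ := 6*c0*c2 - 2*c1^2 with hw3
  have hprod : w1*w3 - w2*w2 = 3*disc c0 c1 c2 c3 := by
    rw [hw1, hw2, hw3]; unfold disc; ring
  have hpos : 0 < w1*w3 - w2*w2 := by linarith
  have he1 : 3*c0*w1 + 2*c1*w2 + c2*w3 = 0 := by rw [hw1, hw2, hw3]; ring
  have he2 : c1*w1 + 2*c2*w2 + 3*c3*w3 = 0 := by rw [hw1, hw2, hw3]; ring
  have hw1ne : w1 ≠ 0 := by
    intro h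
    rw [h] at hpos
    nlinarith [mul_self_nonneg w2]
  rcases lt_or_gt_of_ne hw1ne with h | h
  · exact ⟨-w1, -w2, -w3, by linarith, by nlinarith, by linarith, by linarith⟩
  · exact ⟨w1, w2, w3, h, by linarith, he1, he2⟩



lemma cubic_roots_monic (a b e : ℝ) (hdm : 0 < disc 1 a b e) :
    ∃ r1 r2 r3 : ℝ, r1 < r2 ∧ r2 < r3 ∧
      a = -(r1+r2+r3) ∧ b = r1*r2+r1*r3+r2*r3 ∧ e = -(r1*r2*r3) := by
  obtain ⟨P, hPdef⟩ : ∃ P : ℝ, P = b - a^2/3 := ⟨_, rfl⟩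
  obtain ⟨Q, hQdef⟩ : ∃ Q : ℝ, Q = 2*a^3/27 - a*b/3 + e := ⟨_, rfl⟩
  have hdm' : 0 < -4*P^3 - 27*Q^2 := by
    have : -4*P^3 - 27*Q^2 = disc 1 a b e := by rw [hPdef, hQdef]; unfold disc; ring
    linarith
  have hP : P < 0 := by nlinarith [sq_nonneg Q, sq_nonneg P, sq_nonneg (P+1), sq_nonneg (P-1)]
  obtain ⟨σ, hσdef⟩ : ∃ σ : ℝ, σ = Real.sqrt (-P/3) := ⟨_, rfl⟩
  have hσ2 : σ^2 = -P/3 := by rw [hσdef]; exact Real.sq_sqrt (by linarith)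
  have hσpos : 0 < σ := by rw [hσdef]; exact Real.sqrt_pos.mpr (by linarith)
  obtain ⟨f, hfdef⟩ : ∃ f : ℝ → ℝ, f = fun s => s^3 + P*s + Q := ⟨_, rfl⟩
  have hcont : Continuous f := by rw [hfdef]; fun_prop
  have hfσ : f σ = 2*P/3*σ + Q := by simp only [hfdef]; linear_combination σ*hσ2
  have hfmσ : f (-σ) = -(2*P/3*σ) + Q := by simp only [hfdef]; linear_combination -σ*hσ2
  have hprodneg : f σ * f (-σ) < 0 := by
    have h1 : f σ * f (-σ) = Q^2 + 4*P^3/27 := by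
      rw [hfσ, hfmσ]; linear_combination (-(4*P^2)/9)*hσ2
    nlinarith
  have hfσneg : f σ < 0 := by nlinarith [mul_pos (neg_pos.mpr hP) hσpos]
  have hfmσpos : 0 < f (-σ) := by nlinarith
  obtain ⟨M, hMdef⟩ : ∃ M : ℝ, M = 1 + |P| + |Q| + σ := ⟨_, rfl⟩
  have hM1 : 1 + σ ≤ M := by
    have := abs_nonneg P; have := abs_nonneg Q; rw [hMdef]; linarith
  have hMP : |P| ≤ M - 1 - σ := by have := abs_nonneg Q; rw [hMdef]; linarith
  have hMQ : |Q| ≤ M - 1 - σ := by have := abs_nonneg P; rw [hMdef]; linarith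
  have hσM : σ < M := by linarith
  have hfM : 0 < f M := by
    have h1 : -(M-1-σ) ≤ P := by have := neg_abs_le P; linarith
    have h2 : -(M-1-σ) ≤ Q := by have := neg_abs_le Q; linarith
    have hM0 : 1 ≤ M := by linarith
    simp only [hfdef]
    nlinarith [sq_nonneg (M-1), sq_nonneg M, mul_pos hσpos (lt_of_lt_of_le one_pos hM0), mul_nonneg (mul_nonneg hσpos.le hσpos.le) hσpos.le, mul_nonneg hσpos.le (sub_nonneg.2 hM0)]
  have hfmM : f (-M) < 0 := by
    have h1 : -(M-1-σ) ≤ P := by have := neg_abs_le P; linarith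
    have h2 : Q ≤ M-1-σ := by have := le_abs_self Q; linarith
    have hM0 : 1 ≤ M := by linarith
    simp only [hfdef]
    nlinarith [sq_nonneg (M-1), sq_nonneg M, mul_pos hσpos (lt_of_lt_of_le one_pos hM0)]
  obtain ⟨s1, hs1mem, hfs1⟩ := intermediate_value_Icc (by linarith : -M ≤ -σ)
    hcont.continuousOn (by constructor <;> [linarith; linarith] :
      (0:ℝ) ∈ Set.Icc (f (-M)) (f (-σ)))
  obtain ⟨s2, hs2mem, hfs2⟩ := intermediate_value_Icc' (by linarith : -σ ≤ σ)
    hcont.continuousOn (by constructor <;> [linarith; linarith] :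
      (0:ℝ) ∈ Set.Icc (f σ) (f (-σ)))
  obtain ⟨s3, hs3mem, hfs3⟩ := intermediate_value_Icc (by linarith : σ ≤ M)
    hcont.continuousOn (by constructor <;> [linarith; linarith] :
      (0:ℝ) ∈ Set.Icc (f σ) (f M))
  have hs1ne : s1 ≠ -σ := fun h => by rw [h] at hfs1; linarith
  have hs2ne : s2 ≠ -σ := fun h => by rw [h] at hfs2; linarith
  have hs2ne' : s2 ≠ σ := fun h => by rw [h] at hfs2; linarith
  have h12 : s1 < s2 := lt_of_lt_of_le (lt_of_le_of_ne hs1mem.2 hs1ne) hs2mem.1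
  have h23 : s2 < s3 := lt_of_lt_of_le (lt_of_le_of_ne hs2mem.2 hs2ne') hs3mem.1
  refine ⟨s1 - a/3, s2 - a/3, s3 - a/3, by linarith, by linarith, ?_, ?_, ?_⟩ <;>
  · have hg1 : (s1-a/3)^3 + a*(s1-a/3)^2 + b*(s1-a/3) + e = 0 := by
      have h := hfs1; simp only [hfdef, hPdef, hQdef] at h; linear_combination h
    have hg2 : (s2-a/3)^3 + a*(s2-a/3)^2 + b*(s2-a/3) + e = 0 := by
      have h := hfs2; simp only [hfdef, hPdef, hQdef] at h; linear_combination h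
    have hg3 : (s3-a/3)^3 + a*(s3-a/3)^2 + b*(s3-a/3) + e = 0 := by
      have h := hfs3; simp only [hfdef, hPdef, hQdef] at h; linear_combination h
    obtain ⟨r1, hr1⟩ : ∃ r : ℝ, r = s1 - a/3 := ⟨_, rfl⟩
    obtain ⟨r2, hr2⟩ : ∃ r : ℝ, r = s2 - a/3 := ⟨_, rfl⟩
    obtain ⟨r3, hr3⟩ : ∃ r : ℝ, r = s3 - a/3 := ⟨_, rfl⟩
    rw [← hr1] at hg1; rw [← hr2] at hg2; rw [← hr3] at hg3
    rw [← hr1, ← hr2, ← hr3]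
    have h12' : r1 - r2 ≠ 0 := sub_ne_zero.mpr (by rw [hr1, hr2]; intro h; linarith)
    have h23' : r2 - r3 ≠ 0 := sub_ne_zero.mpr (by rw [hr2, hr3]; intro h; linarith)
    have E12 : r1^2+r1*r2+r2^2+a*(r1+r2)+b = 0 := by
      have hfac : (r1 - r2) * (r1^2+r1*r2+r2^2+a*(r1+r2)+b) = 0 := by linear_combination hg1 - hg2
      exact (mul_eq_zero.mp hfac).resolve_left h12'
    have E13 : r1^2+r1*r3+r3^2+a*(r1+r3)+b = 0 := by
      have hfac : (r1 - r3) * (r1^2+r1*r3+r3^2+a*(r1+r3)+b) = 0 := by linear_combination hg1 - hg3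
      exact (mul_eq_zero.mp hfac).resolve_left (sub_ne_zero.mpr (by rw [hr1, hr3]; intro h; linarith))
    have hsum : r1+r2+r3+a = 0 := by
      have hfac : (r2 - r3) * (r1+r2+r3+a) = 0 := by linear_combination E12 - E13
      exact (mul_eq_zero.mp hfac).resolve_left h23'
    have hb : b = r1*r2+r1*r3+r2*r3 := by linear_combination E12 - (r1+r2)*hsum
    first
    | linarith [hsum]
    | exact hb
    | linear_combination hg1 - r1^2*hsum - r1*hb

lemma disc_of_prod (a0 a1 a2 b0 b1 b2 : ℝ) :
    disc (a0*a1*a2) (a0*a1*b2 + a0*b1*a2 + b0*a1*a2) (a0*b1*b2 + b0*a1*b2 + b0*b1*a2) (b0*b1*b2)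
      = ((a0*b1 - a1*b0)*(a0*b2 - a2*b0)*(a1*b2 - a2*b1))^2 := by
  unfold disc; ring

lemma disc_to_factor (c0 c1 c2 c3 : ℝ) (hdisc : 0 < disc c0 c1 c2 c3) :
    ∃ al be : Fin 3 → ℝ,
      al 0 * be 1 - al 1 * be 0 ≠ 0 ∧ al 0 * be 2 - al 2 * be 0 ≠ 0 ∧
      al 1 * be 2 - al 2 * be 1 ≠ 0 ∧
      c0 = al 0 * al 1 * al 2 ∧
      c1 = al 0 * al 1 * be 2 + al 0 * be 1 * al 2 + be 0 * al 1 * al 2 ∧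
      c2 = al 0 * be 1 * be 2 + be 0 * al 1 * be 2 + be 0 * be 1 * al 2 ∧
      c3 = be 0 * be 1 * be 2 := by
  by_cases hc0 : c0 = 0
  · subst hc0
    have hd' : disc 0 c1 c2 c3 = c1^2*(c2^2 - 4*c1*c3) := by unfold disc; ring
    rw [hd'] at hdisc
    have hc1 : c1 ≠ 0 := by intro h; rw [h] at hdisc; norm_num at hdisc
    have hD : 0 < c2^2 - 4*c1*c3 := by nlinarith [sq_nonneg c1, sq_nonneg c2]
    obtain ⟨s, hs2, hspos⟩ : ∃ s : ℝ, s^2 = c2^2-4*c1*c3 ∧ 0 < s :=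
      ⟨Real.sqrt _, Real.sq_sqrt hD.le, Real.sqrt_pos.mpr hD⟩
    refine ⟨![0, c1, 1], ![1, (c2+s)/2, (c2-s)/(2*c1)], ?_, ?_, ?_, ?_, ?_, ?_, ?_⟩ <;>
        simp only [Matrix.cons_val_zero, Matrix.cons_val_one, Matrix.head_cons,
          Matrix.cons_val_two, Matrix.tail_cons]
    · simpa using hc1
    · norm_num
    · intro h
      apply absurd hs2
      field_simp at h
      nlinarith [h, hspos]
    · ring
    · field_simp; ring
    · field_simp; ring
    · field_simp; linear_combination hs2
  · have hdm : 0 < disc 1 (c1/c0) (c2/c0) (c3/c0) := by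
      have h4 : disc 1 (c1/c0) (c2/c0) (c3/c0) = disc c0 c1 c2 c3 / c0^4 := by
        unfold disc; field_simp
      rw [h4]; exact div_pos hdisc (by positivity)
    obtain ⟨r1, r2, r3, h12, h23, ha, hb, he⟩ := cubic_roots_monic _ _ _ hdm
    have ha' : c1 = -(c0*(r1+r2+r3)) := by field_simp at ha; linarith
    have hb' : c2 = c0*(r1*r2+r1*r3+r2*r3) := by field_simp at hb; linarith
    have he' : c3 = -(c0*(r1*r2*r3)) := by field_simp at he; linarith
    refine ⟨![c0, 1, 1], ![-(c0*r1), -r2, -r3], ?_, ?_, ?_, ?_, ?_, ?_, ?_⟩ <;>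
        simp only [Matrix.cons_val_zero, Matrix.cons_val_one, Matrix.head_cons,
          Matrix.cons_val_two, Matrix.tail_cons]
    · intro h; apply hc0; have : c0*(r2 - r1) = 0 := by linear_combination -h
      rcases mul_eq_zero.mp this with h' | h'
      · exact h'
      · exfalso; have : r2 = r1 := by linarith
        linarith
    · intro h; apply hc0; have : c0*(r3 - r1) = 0 := by linear_combination -h
      rcases mul_eq_zero.mp this with h' | h'
      · exact h'
      · exfalso; have : r3 = r1 := by linarith
        linarith
    · intro h; have : r2 = r3 := by linarith
      linarith
    · ring
    · linear_combination ha'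
    · linear_combination hb'
    · linear_combination he'

def mk2 (x y : ℝ) : E2 := WithLp.toLp 2 ![x, y]

lemma mk2_apply0 (x y : ℝ) : mk2 x y 0 = x := rfl
lemma mk2_apply1 (x y : ℝ) : mk2 x y 1 = y := rfl

lemma inner2 (v u : E2) : ⟪v, u⟫ = v 0 * u 0 + v 1 * u 1 := by
  simp [PiLp.inner_apply, RCLike.inner_apply, Fin.sum_univ_two]
  ring

lemma coeff_ext (g0 g1 g2 g3 : ℝ)
    (h : ∀ x y : ℝ, g0*x^3 + g1*x^2*y + g2*x*y^2 + g3*y^3 = 0) :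
    g0 = 0 ∧ g1 = 0 ∧ g2 = 0 ∧ g3 = 0 := by
  have h10 := h 1 0
  have h01 := h 0 1
  have h11 := h 1 1
  have h1m := h 1 (-1)
  norm_num at h10 h01 h11 h1m
  refine ⟨h10, by linarith, by linarith, h01⟩

lemma li_of_det_ne (v w : E2) (h : v 0 * w 1 - v 1 * w 0 ≠ 0) :
    LinearIndependent ℝ ![v, w] := by
  rw [linearIndependent_fin2]
  simp only [Matrix.cons_val_one, Matrix.head_cons, Matrix.cons_val_zero]
  constructor
  · intro h0
    apply h
    have h1 : w 0 = 0 := by rw [h0]; rfl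
    have h2 : w 1 = 0 := by rw [h0]; rfl
    rw [h1, h2]; ring
  · intro s hs
    apply h
    have h1 : s * w 0 = v 0 := by rw [← hs]; rfl
    have h2 : s * w 1 = v 1 := by rw [← hs]; rfl
    rw [← h1, ← h2]; ring

lemma det_ne_of_li (v w : E2) (h : LinearIndependent ℝ ![v, w]) :
    v 0 * w 1 - v 1 * w 0 ≠ 0 := by
  rw [linearIndependent_fin2] at h
  simp only [Matrix.cons_val_one, Matrix.head_cons, Matrix.cons_val_zero] at h
  intro hd
  by_cases hw0 : w 0 = 0
  · by_cases hw1 : w 1 = 0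
    · apply h.1
      ext i
      fin_cases i
      · exact hw0
      · exact hw1
    · -- w 0 = 0, w 1 ≠ 0 : det = v 0 * w 1 = 0 so v 0 = 0; take s = v 1 / w 1
      apply h.2 (v 1 / w 1)
      have hv0 : v 0 = 0 := by
        have : v 0 * w 1 = 0 := by rw [hw0] at hd; linarith
        rcases mul_eq_zero.mp this with h' | h'
        · exact h'
        · exact absurd h' hw1
      ext i
      fin_cases i
      · show v 1 / w 1 * w 0 = v 0
        rw [hw0, hv0]; ring
      · show v 1 / w 1 * w 1 = v 1
        field_simp
  · apply h.2 (v 0 / w 0)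
    ext i
    fin_cases i
    · show v 0 / w 0 * w 0 = v 0
      field_simp
    · show v 0 / w 0 * w 1 = v 1
      field_simp
      linear_combination hd

lemma posdef_mk (a b d : ℝ) (ha : 0 < a) (hdet : 0 < a*d - b*b) :
    (!![a, b; b, d] : Matrix (Fin 2) (Fin 2) ℝ).PosDef := by
  have hd : 0 < d := by nlinarith [sq_nonneg b]
  rw [Matrix.posDef_iff_dotProduct_mulVec]
  constructor
  · ext i j
    fin_cases i <;> fin_cases j <;> simp [Matrix.conjTranspose_apply]
  · intro x hx
    have hx0 : x 0 ≠ 0 ∨ x 1 ≠ 0 := by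
      by_contra hcon
      push_neg at hcon
      apply hx
      funext i
      fin_cases i
      · exact hcon.1
      · exact hcon.2
    have e00 : (!![a, b; b, d] : Matrix (Fin 2) (Fin 2) ℝ) 0 0 = a := rfl
    have e01 : (!![a, b; b, d] : Matrix (Fin 2) (Fin 2) ℝ) 0 1 = b := rfl
    have e10 : (!![a, b; b, d] : Matrix (Fin 2) (Fin 2) ℝ) 1 0 = b := rfl
    have e11 : (!![a, b; b, d] : Matrix (Fin 2) (Fin 2) ℝ) 1 1 = d := rfl
    simp only [dotProduct, Matrix.mulVec, Fin.sum_univ_two, star_trivial,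
      e00, e01, e10, e11]
    by_cases hx1 : x 1 = 0
    · have hx0' : x 0 ≠ 0 := by
        intro h0
        apply hx
        funext i
        fin_cases i
        · exact h0
        · exact hx1
      rw [hx1]
      nlinarith [mul_pos ha (mul_self_pos.mpr hx0')]
    · nlinarith [sq_nonneg (a * x 0 + b * x 1), mul_pos hdet (mul_self_pos.mpr hx1), ha, hd]

/-- For a homogeneous cubic `p` on `ℝ²`, there is a symmetric positive definite `Q` with
`∇(∇ᵀQ∇)p ≡ 0` iff `p ≡ 0` or `p(u) = ∏_{i=1}^3 (aᵢᵀu)` with any two of `a₁, a₂, a₃`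
linearly independent. -/
theorem exists_posDef_gradient_LQ_eq_zero_iff_cubic (p : EuclideanSpace ℝ (Fin 2) → ℝ)
    (hp : ∃ c : Fin 4 → ℝ, ∀ u : EuclideanSpace ℝ (Fin 2),
      p u = c 0 * u 0 ^ 3 + c 1 * u 0 ^ 2 * u 1 + c 2 * u 0 * u 1 ^ 2 + c 3 * u 1 ^ 3) :
    (∃ Q : Matrix (Fin 2) (Fin 2) ℝ, Q.PosDef ∧ ∀ u, gradient (LQ Q p) u = 0) ↔
      ((∀ u, p u = 0) ∨
        ∃ a : Fin 3 → EuclideanSpace ℝ (Fin 2),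
          (∀ i j, i ≠ j → LinearIndependent ℝ ![a i, a j]) ∧
          ∀ u, p u = ∏ i, ⟪a i, u⟫) := by
  obtain ⟨c, hc⟩ := hp
  constructor
  · rintro ⟨Q, hQ, hgrad⟩
    obtain ⟨e1, e2⟩ := (grad_iff Q c p hc).mp hgrad
    by_cases hzero : c 0 = 0 ∧ c 1 = 0 ∧ c 2 = 0 ∧ c 3 = 0
    · left
      intro u
      rw [hc u, hzero.1, hzero.2.1, hzero.2.2.1, hzero.2.2.2]
      ring
    · right
      have hsym : Q 1 0 = Q 0 1 := by simpa using hQ.1.apply 0 1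
      have ha : 0 < Q 0 0 := by
        have hxne : (fun i : Fin 2 => if i = 0 then (1:ℝ) else 0) ≠ 0 := by
          intro h0
          have := congrFun h0 0
          norm_num at this
        have h := (Matrix.posDef_iff_dotProduct_mulVec.mp hQ).2 hxne
        simpa [dotProduct, Matrix.mulVec, Fin.sum_univ_two] using h
      have hdet : 0 < Q 0 0 * Q 1 1 - Q 0 1 * Q 0 1 := by
        have h := hQ.det_pos
        rw [Matrix.det_fin_two, hsym] at h
        linarith
      rw [hsym] at e1 e2
      have hdisc := alg_forward (Q 0 0) (Q 0 1) (Q 1 1) (c 0) (c 1) (c 2) (c 3) ha hdet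
        (by linear_combination e1) (by linear_combination e2) hzero
      obtain ⟨al, be, h01, h02, h12d, k0, k1, k2, k3⟩ := disc_to_factor _ _ _ _ hdisc
      refine ⟨fun i => mk2 (al i) (be i), ?_, ?_⟩
      · intro i j hij
        fin_cases i <;> fin_cases j
        · exact absurd rfl hij
        · apply li_of_det_ne
          show al 0 * be 1 - be 0 * al 1 ≠ 0
          exact fun h => h01 (by linear_combination h)
        · apply li_of_det_ne
          show al 0 * be 2 - be 0 * al 2 ≠ 0
          exact fun h => h02 (by linear_combination h)
        · apply li_of_det_ne
          show al 1 * be 0 - be 1 * al 0 ≠ 0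
          exact fun h => h01 (by linear_combination -h)
        · exact absurd rfl hij
        · apply li_of_det_ne
          show al 1 * be 2 - be 1 * al 2 ≠ 0
          exact fun h => h12d (by linear_combination h)
        · apply li_of_det_ne
          show al 2 * be 0 - be 2 * al 0 ≠ 0
          exact fun h => h02 (by linear_combination -h)
        · apply li_of_det_ne
          show al 2 * be 1 - be 2 * al 1 ≠ 0
          exact fun h => h12d (by linear_combination -h)
        · exact absurd rfl hij
      · intro u
        rw [hc u, Fin.prod_univ_three, inner2, inner2, inner2]
        simp only [mk2_apply0, mk2_apply1]
        rw [k0, k1, k2, k3]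
        ring
  · rintro (hz | ⟨a, hli, hfac⟩)
    · obtain ⟨h0, h1, h2, h3⟩ := coeff_ext (c 0) (c 1) (c 2) (c 3) (fun x y => by
        have h := (hc (mk2 x y)).symm.trans (hz (mk2 x y))
        simpa [mk2_apply0, mk2_apply1] using h)
      refine ⟨!![1, 0; 0, 1], posdef_mk 1 0 1 one_pos (by norm_num), ?_⟩
      apply (grad_iff _ c p hc).mpr
      rw [h0, h1, h2, h3]
      constructor <;> ring
    · have key : ∀ x y : ℝ,
          (c 0 - a 0 0*a 1 0*a 2 0)*x^3
          + (c 1 - (a 0 0*a 1 0*a 2 1 + a 0 0*a 1 1*a 2 0 + a 0 1*a 1 0*a 2 0))*x^2*y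
          + (c 2 - (a 0 0*a 1 1*a 2 1 + a 0 1*a 1 0*a 2 1 + a 0 1*a 1 1*a 2 0))*x*y^2
          + (c 3 - a 0 1*a 1 1*a 2 1)*y^3 = 0 := by
        intro x y
        have h1 := (hc (mk2 x y)).symm.trans (hfac (mk2 x y))
        rw [Fin.prod_univ_three, inner2, inner2, inner2] at h1
        simp only [mk2_apply0, mk2_apply1] at h1
        linear_combination h1
      obtain ⟨g0, g1, g2, g3⟩ := coeff_ext _ _ _ _ key
      have d01 := det_ne_of_li (a 0) (a 1) (hli 0 1 (by decide))
      have d02 := det_ne_of_li (a 0) (a 2) (hli 0 2 (by decide))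
      have d12 := det_ne_of_li (a 1) (a 2) (hli 1 2 (by decide))
      have d01' : a 0 0 * a 1 1 - a 1 0 * a 0 1 ≠ 0 := fun h => d01 (by linear_combination h)
      have d02' : a 0 0 * a 2 1 - a 2 0 * a 0 1 ≠ 0 := fun h => d02 (by linear_combination h)
      have d12' : a 1 0 * a 2 1 - a 2 0 * a 1 1 ≠ 0 := fun h => d12 (by linear_combination h)
      have hdisc : 0 < disc (c 0) (c 1) (c 2) (c 3) := by
        have hid : disc (c 0) (c 1) (c 2) (c 3)
            = ((a 0 0*a 1 1 - a 1 0*a 0 1)*(a 0 0*a 2 1 - a 2 0*a 0 1)*(a 1 0*a 2 1 - a 2 0*a 1 1))^2 := by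
          rw [show c 0 = a 0 0*a 1 0*a 2 0 from by linarith,
            show c 1 = a 0 0*a 1 0*a 2 1 + a 0 0*a 1 1*a 2 0 + a 0 1*a 1 0*a 2 0 from by linarith,
            show c 2 = a 0 0*a 1 1*a 2 1 + a 0 1*a 1 0*a 2 1 + a 0 1*a 1 1*a 2 0 from by linarith,
            show c 3 = a 0 1*a 1 1*a 2 1 from by linarith]
          exact disc_of_prod (a 0 0) (a 1 0) (a 2 0) (a 0 1) (a 1 1) (a 2 1)
        rw [hid]
        exact lt_of_le_of_ne (sq_nonneg _)
          (Ne.symm (pow_ne_zero 2 (mul_ne_zero (mul_ne_zero d01' d02') d12')))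
      obtain ⟨aa, bb, dd, haa, hdd, he1, he2⟩ := alg_backward _ _ _ _ hdisc
      refine ⟨!![aa, bb; bb, dd], posdef_mk aa bb dd haa hdd, ?_⟩
      apply (grad_iff _ c p hc).mpr
      have m00 : (!![aa, bb; bb, dd] : Matrix (Fin 2) (Fin 2) ℝ) 0 0 = aa := rfl
      have m01 : (!![aa, bb; bb, dd] : Matrix (Fin 2) (Fin 2) ℝ) 0 1 = bb := rfl
      have m10 : (!![aa, bb; bb, dd] : Matrix (Fin 2) (Fin 2) ℝ) 1 0 = bb := rfl
      have m11 : (!![aa, bb; bb, dd] : Matrix (Fin 2) (Fin 2) ℝ) 1 1 = dd := rfl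
      rw [m00, m01, m10, m11]
      exact ⟨by linear_combination he1, by linear_combination he2⟩
end

section
/- Let q ≥ 2 be an even integer, d ≥ 2, let a₁, a₂ ∈ ℝ^d be linearly independent vectors, and let Q be a symmetric positive definite d×d real matrix. Then for the polynomial p(u) = (a₁ᵀu)^q (a₂ᵀu) one has, at every u ∈ ℝ^d, the identity ∇(∇ᵀQ∇)^{q/2} p = q·q!·(a₁ᵀQa₁)^{q/2−1}(a₁ᵀQa₂)·a₁ + q!·(a₁ᵀQa₁)^{q/2}·a₂, and in particular this vector is nonzero. -/
open scoped RealInnerProductSpace Matrix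

noncomputable def T (a b : EuclideanSpace ℝ (Fin d)) (c : ℝ) (n m : ℕ) :
    EuclideanSpace ℝ (Fin d) → ℝ :=
  fun u => c * ⟪a, u⟫ ^ n * ⟪b, u⟫ ^ m

lemma hasFDerivAt_inner_pow (a : EuclideanSpace ℝ (Fin d)) (n : ℕ)
    (u : EuclideanSpace ℝ (Fin d)) :
    HasFDerivAt (fun v : EuclideanSpace ℝ (Fin d) => ⟪a, v⟫ ^ n)
      (((n : ℝ) * ⟪a, u⟫ ^ (n - 1)) • innerSL ℝ a) u := by
  induction n with
  | zero => simpa using hasFDerivAt_const (1 : ℝ) u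
  | succ n ih =>
    have h1 : HasFDerivAt (fun v : EuclideanSpace ℝ (Fin d) => ⟪a, v⟫) (innerSL ℝ a) u :=
      (innerSL ℝ a).hasFDerivAt
    have := ih.mul h1
    convert! this using 1
    ext w
    simp only [ContinuousLinearMap.smul_apply, ContinuousLinearMap.add_apply, smul_eq_mul]
    rcases Nat.eq_zero_or_pos n with hn | hn
    · subst hn; simp
    · obtain ⟨m, rfl⟩ := Nat.exists_eq_succ_of_ne_zero hn.ne'
      simp only [Nat.succ_sub_one, pow_succ]
      push_cast
      ring

lemma hasFDerivAt_T (a b : EuclideanSpace ℝ (Fin d)) (c : ℝ) (n m : ℕ)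
    (u : EuclideanSpace ℝ (Fin d)) :
    HasFDerivAt (T a b c n m)
      ((c * n * ⟪a, u⟫ ^ (n - 1) * ⟪b, u⟫ ^ m) • innerSL ℝ a
        + (c * m * ⟪a, u⟫ ^ n * ⟪b, u⟫ ^ (m - 1)) • innerSL ℝ b) u := by
  have h1 := (hasFDerivAt_inner_pow a n u).const_mul c
  have h2 := hasFDerivAt_inner_pow b m u
  have := h1.mul h2
  convert! this using 1
  ext w
  simp only [ContinuousLinearMap.smul_apply, ContinuousLinearMap.add_apply, smul_eq_mul]
  ring

lemma differentiable_T (a b : EuclideanSpace ℝ (Fin d)) (c : ℝ) (n m : ℕ) :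
    Differentiable ℝ (T a b c n m) :=
  fun u => (hasFDerivAt_T a b c n m u).differentiableAt

lemma pd_T (a b : EuclideanSpace ℝ (Fin d)) (c : ℝ) (n m : ℕ) (j : Fin d) :
    pd j (T a b c n m) = T a b (c * n * a j) (n - 1) m + T a b (c * m * b j) n (m - 1) := by
  funext u
  have := (hasFDerivAt_T a b c n m u).fderiv
  simp only [pd, this, T, Pi.add_apply, ContinuousLinearMap.add_apply,
    ContinuousLinearMap.smul_apply, smul_eq_mul, innerSL_apply_apply,
    EuclideanSpace.inner_single_right, RCLike.star_def, conj_trivial]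
  ring

lemma pd_add (f g : EuclideanSpace ℝ (Fin d) → ℝ) (hf : Differentiable ℝ f)
    (hg : Differentiable ℝ g) (j : Fin d) :
    pd j (f + g) = pd j f + pd j g := by
  funext u
  simp only [pd, Pi.add_apply, fderiv_add (hf u) (hg u), ContinuousLinearMap.add_apply]

lemma LQ_T (Q : Matrix (Fin d) (Fin d) ℝ) (a b : EuclideanSpace ℝ (Fin d)) (c : ℝ) (n m : ℕ) :
    LQ Q (T a b c n m)
      = T a b (c * n * (n - 1 : ℕ) * ((fun k => a k) ⬝ᵥ Q *ᵥ (fun k => a k))) (n - 2) m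
        + T a b (c * n * m * (((fun k => b k) ⬝ᵥ Q *ᵥ (fun k => a k))
            + ((fun k => a k) ⬝ᵥ Q *ᵥ (fun k => b k)))) (n - 1) (m - 1)
        + T a b (c * m * (m - 1 : ℕ) * ((fun k => b k) ⬝ᵥ Q *ᵥ (fun k => b k))) n (m - 2) := by
  have expand : ∀ (v w : Fin d → ℝ), v ⬝ᵥ Q *ᵥ w = ∑ i, ∑ j, v i * (Q i j * w j) := by
    intro v w; simp [dotProduct, Matrix.mulVec, Finset.mul_sum]
  funext x
  have h1 : ∀ j : Fin d, pd j (T a b c n m)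
      = T a b (c * n * a j) (n - 1) m + T a b (c * m * b j) n (m - 1) := fun j => pd_T a b c n m j
  simp only [LQ, h1]
  have h2 : ∀ i j : Fin d,
      pd i (T a b (c * n * a j) (n - 1) m + T a b (c * m * b j) n (m - 1))
        = (T a b (c * n * a j * (n-1 : ℕ) * a i) (n - 1 - 1) m
            + T a b (c * n * a j * m * b i) (n - 1) (m - 1))
          + (T a b (c * m * b j * n * a i) (n - 1) (m - 1)
            + T a b (c * m * b j * (m-1 : ℕ) * b i) n (m - 1 - 1)) := by
    intro i j
    rw [pd_add _ _ (differentiable_T _ _ _ _ _) (differentiable_T _ _ _ _ _), pd_T, pd_T]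
  simp only [h2, expand, T, Pi.add_apply, Nat.sub_sub]
  norm_num [Finset.mul_sum, Finset.sum_mul, ← Finset.sum_add_distrib]
  apply Finset.sum_congr rfl
  intro i _
  apply Finset.sum_congr rfl
  intro j _
  ring

lemma LQ_add_T (Q : Matrix (Fin d) (Fin d) ℝ) (a b : EuclideanSpace ℝ (Fin d))
    (c₁ : ℝ) (n₁ m₁ : ℕ) (c₂ : ℝ) (n₂ m₂ : ℕ) :
    LQ Q (T a b c₁ n₁ m₁ + T a b c₂ n₂ m₂)
      = LQ Q (T a b c₁ n₁ m₁) + LQ Q (T a b c₂ n₂ m₂) := by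
  funext x
  simp only [LQ, Pi.add_apply]
  rw [← Finset.sum_add_distrib]
  refine Finset.sum_congr rfl fun i _ => ?_
  rw [← Finset.sum_add_distrib]
  refine Finset.sum_congr rfl fun j _ => ?_
  have d1 : Differentiable ℝ (pd j (T a b c₁ n₁ m₁)) := by
    rw [pd_T]; exact (differentiable_T _ _ _ _ _).add (differentiable_T _ _ _ _ _)
  have d2 : Differentiable ℝ (pd j (T a b c₂ n₂ m₂)) := by
    rw [pd_T]; exact (differentiable_T _ _ _ _ _).add (differentiable_T _ _ _ _ _)
  rw [pd_add _ _ (differentiable_T _ _ _ _ _) (differentiable_T _ _ _ _ _),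
    pd_add _ _ d1 d2, Pi.add_apply, mul_add]

lemma key_iter (q : ℕ) (a₁ a₂ : EuclideanSpace ℝ (Fin d)) (Q : Matrix (Fin d) (Fin d) ℝ)
    (hsym : (fun k => a₂ k) ⬝ᵥ Q *ᵥ (fun k => a₁ k) = (fun k => a₁ k) ⬝ᵥ Q *ᵥ (fun k => a₂ k)) :
    ∀ k, 2 * k ≤ q → (LQ Q)^[k] (T a₁ a₂ 1 q 1)
      = T a₁ a₂ ((q.descFactorial (2*k) : ℝ)
            * ((fun k => a₁ k) ⬝ᵥ Q *ᵥ (fun k => a₁ k)) ^ k) (q - 2*k) 1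
        + T a₁ a₂ ((2*k : ℕ) * (q.descFactorial (2*k-1) : ℝ)
            * ((fun k => a₁ k) ⬝ᵥ Q *ᵥ (fun k => a₁ k)) ^ (k-1)
            * ((fun k => a₁ k) ⬝ᵥ Q *ᵥ (fun k => a₂ k))) (q - 2*k + 1) 0 := by
  set s := (fun k => a₁ k) ⬝ᵥ Q *ᵥ (fun k => a₁ k) with hs
  set t := (fun k => a₁ k) ⬝ᵥ Q *ᵥ (fun k => a₂ k) with ht
  intro k
  induction k with
  | zero =>
    intro _
    funext u
    simp [T]
  | succ k ih =>
    intro hk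
    have hk' : 2 * k ≤ q := by omega
    rw [Function.iterate_succ_apply', ih hk', LQ_add_T, LQ_T, LQ_T, hsym, ← hs, ← ht]
    obtain ⟨j, hj⟩ : ∃ j, q - 2*k = j + 2 := ⟨q - 2*k - 2, by omega⟩
    have e1 : q - 2*k - 2 = j := by omega
    have e2 : q - 2*k - 1 = j + 1 := by omega
    have e3 : q - 2*k + 1 - 2 = j + 1 := by omega
    have e4 : q - 2*k + 1 - 1 = j + 2 := by omega
    have e5 : q - 2*(k+1) = j := by omega
    have e6 : q - 2*(k+1) + 1 = j + 1 := by omega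
    have D1 : q.descFactorial (2*(k+1)) = (j+1) * ((j+2) * q.descFactorial (2*k)) := by
      have h1 : 2*(k+1) = (2*k+1) + 1 := by ring
      rw [h1, Nat.descFactorial_succ, Nat.descFactorial_succ,
        show q - (2*k+1) = j+1 from by omega, show q - 2*k = j+2 from hj]
    have D2 : q.descFactorial (2*(k+1) - 1) = (j+2) * q.descFactorial (2*k) := by
      have h1 : 2*(k+1) - 1 = 2*k + 1 := by omega
      rw [h1, Nat.descFactorial_succ, show q - 2*k = j+2 from hj]
    funext u
    rcases Nat.eq_zero_or_pos k with hk0 | hk0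
    · subst hk0
      simp only [T, Pi.add_apply, hj, e1, e2, e3, e4, e5, e6, D1, D2]
      push_cast
      ring
    · have D3 : q.descFactorial (2*k) = (j+3) * q.descFactorial (2*k - 1) := by
        have h1 : 2*k = (2*k - 1) + 1 := by omega
        conv_lhs => rw [h1]
        rw [Nat.descFactorial_succ, show q - (2*k-1) = j+3 from by omega]
      obtain ⟨k', rfl⟩ : ∃ k', k = k' + 1 := ⟨k - 1, by omega⟩
      simp only [T, Pi.add_apply, hj, e1, e2, e3, e4, e5, e6, D1, D2, D3, Nat.add_sub_cancel]
      push_cast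
      ring

/-- For `p(u) = (a₁ᵀu)^q (a₂ᵀu)` with `a₁, a₂` linearly independent and `Q` positive definite,
`∇(∇ᵀQ∇)^{q/2} p = q·q!·(a₁ᵀQa₁)^{q/2−1}(a₁ᵀQa₂)·a₁ + q!·(a₁ᵀQa₁)^{q/2}·a₂` everywhere,
and this vector is nonzero. -/
theorem gradient_iterate_pow_linear_mul_linear (d q : ℕ) (hd : 2 ≤ d) (hq : 2 ≤ q)
    (hqe : Even q) (a₁ a₂ : EuclideanSpace ℝ (Fin d))
    (ha : LinearIndependent ℝ ![a₁, a₂])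
    (Q : Matrix (Fin d) (Fin d) ℝ) (hQ : Q.PosDef) :
    (∀ u, gradient ((LQ Q)^[q / 2] fun v => (⟪a₁, v⟫) ^ q * ⟪a₂, v⟫) u
        = ((q : ℝ) * (Nat.factorial q : ℝ)
              * ((fun k => a₁ k) ⬝ᵥ Q.mulVec (fun k => a₁ k)) ^ (q / 2 - 1)
              * ((fun k => a₁ k) ⬝ᵥ Q.mulVec (fun k => a₂ k))) • a₁
          + ((Nat.factorial q : ℝ)
              * ((fun k => a₁ k) ⬝ᵥ Q.mulVec (fun k => a₁ k)) ^ (q / 2)) • a₂) ∧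
    ∀ u, gradient ((LQ Q)^[q / 2] fun v => (⟪a₁, v⟫) ^ q * ⟪a₂, v⟫) u ≠ 0 := by
  set s := (fun k => a₁ k) ⬝ᵥ Q *ᵥ (fun k => a₁ k) with hs
  set t := (fun k => a₁ k) ⬝ᵥ Q *ᵥ (fun k => a₂ k) with ht
  -- symmetry
  have hsym : (fun k => a₂ k) ⬝ᵥ Q *ᵥ (fun k => a₁ k) = t := by
    rw [ht]
    simp only [dotProduct, Matrix.mulVec, Finset.mul_sum]
    rw [Finset.sum_comm]
    refine Finset.sum_congr rfl fun i _ => Finset.sum_congr rfl fun j _ => ?_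
    have hQs : Q j i = Q i j := by
      conv_lhs => rw [← hQ.1]
      simp [Matrix.conjTranspose_apply]
    rw [hQs]; ring
  have hp : (fun v : EuclideanSpace ℝ (Fin d) => (⟪a₁, v⟫) ^ q * ⟪a₂, v⟫) = T a₁ a₂ 1 q 1 := by
    funext v; simp [T]
  have h2q : 2 * (q / 2) = q := by
    obtain ⟨c, rfl⟩ := hqe; omega
  have hiter := key_iter q a₁ a₂ Q hsym (q / 2) (by omega)
  rw [← hs, ← ht, h2q, Nat.sub_self, Nat.descFactorial_self] at hiter
  have hdesc : q.descFactorial (q - 1) = q.factorial := by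
    have h1 : q.descFactorial ((q-1)+1) = (q - (q-1)) * q.descFactorial (q-1) :=
      Nat.descFactorial_succ q (q-1)
    rw [show (q-1)+1 = q from by omega, Nat.descFactorial_self,
      show q - (q-1) = 1 from by omega, one_mul] at h1
    exact h1.symm
  rw [hdesc] at hiter
  -- the iterated function
  set F := (LQ Q)^[q / 2] (T a₁ a₂ 1 q 1) with hF
  set c₁ : ℝ := (q : ℝ) * (q.factorial : ℝ) * s ^ (q / 2 - 1) * t with hc₁
  set c₂ : ℝ := (q.factorial : ℝ) * s ^ (q / 2) with hc₂
  have hFe : F = T a₁ a₂ c₂ 0 1 + T a₁ a₂ c₁ 1 0 := by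
    rw [hiter]
  -- gradient computation
  have hgrad : ∀ u, gradient F u = c₁ • a₁ + c₂ • a₂ := by
    intro u
    have hg : HasGradientAt F (c₁ • a₁ + c₂ • a₂) u := by
      rw [hasGradientAt_iff_hasFDerivAt, hFe]
      have hd1 := (hasFDerivAt_T a₁ a₂ c₂ 0 1 u).add (hasFDerivAt_T a₁ a₂ c₁ 1 0 u)
      convert! hd1 using 1
      ext w
      simp only [InnerProductSpace.toDual_apply_apply, inner_add_left, real_inner_smul_left,
        ContinuousLinearMap.add_apply, ContinuousLinearMap.smul_apply, innerSL_apply_apply,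
        smul_eq_mul]
      ring
    exact hg.gradient
  have hs0 : 0 < s := by
    have ha1 : a₁ ≠ 0 := by
      have := ha.ne_zero 0
      simpa using this
    have hv : (fun k => a₁ k) ≠ 0 := by
      intro h
      apply ha1
      ext k
      exact congrFun h k
    have := hQ.dotProduct_mulVec_pos hv
    have hstar : star (fun k => a₁ k) = fun k => a₁ k := by
      funext k; simp
    exact this
  have hc₂0 : c₂ ≠ 0 := by
    have : (0:ℝ) < (q.factorial : ℝ) * s ^ (q / 2) :=
      mul_pos (by exact_mod_cast q.factorial_pos) (pow_pos hs0 _)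
    rw [hc₂]; exact ne_of_gt this
  constructor
  · intro u
    rw [hp, ← hF, hgrad u]
  · intro u
    rw [hp, ← hF, hgrad u]
    intro hzero
    obtain ⟨-, h2⟩ := LinearIndependent.pair_iff.mp ha c₁ c₂ hzero
    exact hc₂0 h2
end

section
/- Let k ≥ 1 and let S₁, …, S_k be Lebesgue-measurable subsets of [0,∞), each of positive Lebesgue measure, which are essentially ordered: for every i < j, x < y holds for almost every x ∈ S_i and almost every y ∈ S_j. Let w be a measurable function on [0,∞) such that on each S_j either w ≥ 0 almost everywhere or w ≤ 0 almost everywhere, with ∫_{S_j} w(x) dx ≠ 0, and with ∫_{S_j} |w(x)| x^{2(k−1)} dx < ∞ for each j. Then the k×k matrix M with entries M_{ij} = ∫_{S_j} w(x) x^{2(i−1)} dx (for i, j = 1, …, k) is nonsingular. -/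
open MeasureTheory Set

/-- If an integrable function has zero integral and is a.e. sign-constant, it is a.e. zero. -/
lemma aux_signconst_zero {μ : Measure ℝ} {f : ℝ → ℝ} (hf : Integrable f μ)
    (h0 : ∫ x, f x ∂μ = 0)
    (hs : (∀ᵐ x ∂μ, 0 ≤ f x) ∨ (∀ᵐ x ∂μ, f x ≤ 0)) : f =ᵐ[μ] 0 := by
  rcases hs with h | h
  · exact (integral_eq_zero_iff_of_nonneg_ae h hf).mp h0
  · have h0' : ∫ x, (-f) x ∂μ = 0 := by simp [integral_neg, h0]
    have : (-f) =ᵐ[μ] 0 := (integral_eq_zero_iff_of_nonneg_ae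
      (by filter_upwards [h] with x hx; simpa using hx) hf.neg).mp h0'
    filter_upwards [this] with x hx
    simpa [neg_eq_zero] using hx

/-- Removing a null set from a positive-measure set leaves it nonempty. -/
lemma aux_diff_nonempty {E Z : Set ℝ} (hZ : volume Z = 0) (hE : 0 < volume E) :
    (E \ Z).Nonempty := by
  apply nonempty_of_measure_ne_zero (μ := volume)
  intro hcontra
  have hle : volume E ≤ volume (E \ Z) + volume Z := by
    refine (measure_mono ?_).trans (measure_union_le _ _)
    intro x hx
    by_cases h : x ∈ Z
    · exact Or.inr h
    · exact Or.inl ⟨hx, h⟩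
  rw [hcontra, hZ] at hle
  simp at hle
  exact absurd hle hE.ne'

/-- If `w` is a.e. sign-constant with nonzero integral on `T`, `p` is a.e. sign-constant on `T`,
`p` vanishes only on a null set, and `∫_T w p = 0`, we get a contradiction. -/
lemma aux_sign {T : Set ℝ} (hT : MeasurableSet T) {w p : ℝ → ℝ}
    (hsign : (∀ᵐ x ∂(volume.restrict T), 0 ≤ w x) ∨ (∀ᵐ x ∂(volume.restrict T), w x ≤ 0))
    (hnz : (∫ x in T, w x) ≠ 0)
    (hi : IntegrableOn (fun x => w x * p x) T)
    (h0 : (∫ x in T, w x * p x) = 0)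
    (hpz : volume {x | p x = 0} = 0)
    (hps : (∀ᵐ x ∂(volume.restrict T), 0 ≤ p x) ∨ (∀ᵐ x ∂(volume.restrict T), p x ≤ 0)) :
    False := by
  clear hT
  have hconst : (∀ᵐ x ∂(volume.restrict T), 0 ≤ w x * p x) ∨
      (∀ᵐ x ∂(volume.restrict T), w x * p x ≤ 0) := by
    rcases hsign with h1 | h1 <;> rcases hps with h2 | h2
    · left
      filter_upwards [h1, h2] with x hx hy
      exact mul_nonneg hx hy
    · right
      filter_upwards [h1, h2] with x hx hy
      exact mul_nonpos_of_nonneg_of_nonpos hx hy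
    · right
      filter_upwards [h1, h2] with x hx hy
      exact mul_nonpos_of_nonpos_of_nonneg hx hy
    · left
      filter_upwards [h1, h2] with x hx hy
      nlinarith
  have hfz : (fun x => w x * p x) =ᵐ[volume.restrict T] 0 := aux_signconst_zero hi h0 hconst
  have hpne : ∀ᵐ x ∂(volume.restrict T), p x ≠ 0 := by
    have hglob : ∀ᵐ x ∂(volume : Measure ℝ), p x ≠ 0 := by
      rw [ae_iff]; simpa using hpz
    exact ae_restrict_of_ae hglob
  have hw0 : w =ᵐ[volume.restrict T] 0 := by
    filter_upwards [hfz, hpne] with x h1 h2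
    have h1' : w x * p x = 0 := h1
    simpa using (mul_eq_zero.mp h1').resolve_right h2
  exact hnz (by rw [integral_congr_ae hw0]; simp)

/-- Essentially ordered positive-measure sets can be separated by a threshold. -/
lemma aux_separator {A B : Set ℝ} (hA : MeasurableSet A) (hB : MeasurableSet B)
    (hA0 : 0 < volume A) (hB0 : 0 < volume B)
    (h : ∀ᵐ x ∂(volume.restrict A), ∀ᵐ y ∂(volume.restrict B), x < y) :
    ∃ t : ℝ, volume (A ∩ Ioi t) = 0 ∧ volume (B ∩ Iio t) = 0 := by
  set P : ℝ → Prop := fun x => ∀ᵐ y ∂(volume.restrict B), x < y with hP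
  have hN : volume ({x | ¬ P x} ∩ A) = 0 := by
    rw [← Measure.restrict_apply' hA]; exact ae_iff.mp h
  have hpick : ∀ s : ℝ, volume (A ∩ Ioi s) ≠ 0 → ∃ x, x ∈ A ∧ s < x ∧ P x := by
    intro s hs
    have h1 : volume ((A ∩ Ioi s) \ ({x | ¬ P x} ∩ A)) ≠ 0 := by
      intro hcontra
      apply hs
      have hsub : A ∩ Ioi s ⊆ ((A ∩ Ioi s) \ ({x | ¬ P x} ∩ A)) ∪ ({x | ¬ P x} ∩ A) := by
        intro x hx
        by_cases hxN : x ∈ {x | ¬ P x} ∩ A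
        · exact Or.inr hxN
        · exact Or.inl ⟨hx, hxN⟩
      refine le_antisymm ?_ zero_le
      calc volume (A ∩ Ioi s)
          ≤ volume (((A ∩ Ioi s) \ ({x | ¬ P x} ∩ A)) ∪ ({x | ¬ P x} ∩ A)) := measure_mono hsub
        _ ≤ volume ((A ∩ Ioi s) \ ({x | ¬ P x} ∩ A)) + volume ({x | ¬ P x} ∩ A) :=
            measure_union_le _ _
        _ = 0 := by rw [hcontra, hN]; simp
    obtain ⟨x, hx⟩ := nonempty_of_measure_ne_zero h1
    refine ⟨x, hx.1.1, hx.1.2, ?_⟩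
    by_contra hPx
    exact hx.2 ⟨hPx, hx.1.1⟩
  have hkill : ∀ s x : ℝ, s < x → P x → volume (B ∩ Iic s) = 0 := by
    intro s x hsx hPx
    have h2 : volume ({y | ¬ x < y} ∩ B) = 0 := by
      rw [← Measure.restrict_apply' hB]; exact ae_iff.mp hPx
    refine measure_mono_null ?_ h2
    intro y hy
    have hys : y ≤ s := hy.2
    exact ⟨by simp only [mem_setOf_eq, not_lt]; linarith, hy.1⟩
  set U : Set ℝ := {s | volume (A ∩ Ioi s) = 0} with hU
  have hUne : U.Nonempty := by
    by_contra hc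
    rw [Set.not_nonempty_iff_eq_empty] at hc
    have hc' : ∀ s : ℝ, volume (A ∩ Ioi s) ≠ 0 := by
      intro s hs
      exact absurd (show s ∈ (∅ : Set ℝ) by rw [← hc]; exact hs) (Set.notMem_empty s)
    choose x hxA hxgt hxP using fun n : ℕ => hpick n (hc' n)
    have hall : ∀ᵐ y ∂(volume.restrict B), ∀ n : ℕ, x n < y :=
      ae_all_iff.mpr fun n => hxP n
    have h2 : ∀ᵐ y ∂(volume.restrict B), False := by
      filter_upwards [hall] with y hy
      obtain ⟨n, hn⟩ := exists_nat_gt y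
      have := hy n
      linarith [hxgt n]
    have h3 := ae_iff.mp h2
    rw [Measure.restrict_apply' hB] at h3
    simp only [not_false_iff, setOf_true, univ_inter] at h3
    exact absurd h3 hB0.ne'
  have hUbdd : BddBelow U := by
    obtain ⟨s₀, hs₀⟩ : ∃ s₀ : ℝ, volume (A ∩ Ioi s₀) ≠ 0 := by
      by_contra hc
      push_neg at hc
      have hsub : A ⊆ ⋃ n : ℕ, A ∩ Ioi (-(n : ℝ)) := by
        intro x hx
        obtain ⟨n, hn⟩ := exists_nat_gt (-x)
        exact mem_iUnion.2 ⟨n, hx, by simp [mem_Ioi]; linarith⟩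
      have : volume A = 0 :=
        measure_mono_null hsub (measure_iUnion_null fun n => hc _)
      exact absurd this hA0.ne'
    refine ⟨s₀, fun u hu => ?_⟩
    by_contra hlt
    push_neg at hlt
    exact hs₀ (measure_mono_null (inter_subset_inter_right _ (Ioi_subset_Ioi hlt.le)) hu)
  refine ⟨sInf U, ?_, ?_⟩
  · have hsub : A ∩ Ioi (sInf U) ⊆ ⋃ n : ℕ, A ∩ Ioi (sInf U + 1 / (n + 1)) := by
      intro x hx
      obtain ⟨n, hn⟩ := exists_nat_one_div_lt (sub_pos.2 (hx.2 : sInf U < x) : (0:ℝ) < x - sInf U)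
      exact mem_iUnion.2 ⟨n, hx.1, by simp only [mem_Ioi]; linarith⟩
    refine measure_mono_null hsub (measure_iUnion_null fun n => ?_)
    have hlt : sInf U < sInf U + 1 / (n + 1) := by
      have : (0:ℝ) < 1 / ((n:ℝ) + 1) := by positivity
      linarith
    obtain ⟨u, huU, hu⟩ := (csInf_lt_iff hUbdd hUne).mp hlt
    exact measure_mono_null (inter_subset_inter_right _ (Ioi_subset_Ioi hu.le)) huU
  · have hsub : B ∩ Iio (sInf U) ⊆ ⋃ n : ℕ, B ∩ Iic (sInf U - 1 / (n + 1)) := by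
      intro y hy
      have h5 : y < sInf U := hy.2
      obtain ⟨n, hn⟩ := exists_nat_one_div_lt (sub_pos.2 h5 : (0:ℝ) < sInf U - y)
      exact mem_iUnion.2 ⟨n, hy.1, by simp only [mem_Iic]; linarith⟩
    refine measure_mono_null hsub (measure_iUnion_null fun n => ?_)
    have hslt : sInf U - 1 / (n + 1) < sInf U := by
      have : (0:ℝ) < 1 / ((n:ℝ) + 1) := by positivity
      linarith
    have hnotU : sInf U - 1 / (n + 1) ∉ U := fun hmem =>
      absurd (csInf_le hUbdd hmem) (by linarith)
    obtain ⟨x, _, hsx, hPx⟩ := hpick _ hnotU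
    exact hkill _ _ hsx hPx

/-- Essentially ordered sets, a sign-constant weight with nonzero integrals on each set:
the moment matrix `M_{ij} = ∫_{S_j} w(x) x^{2(i−1)} dx` is nonsingular. -/
theorem moment_matrix_nonsingular (k : ℕ) (hk : 1 ≤ k) (S : Fin k → Set ℝ)
    (hSmeas : ∀ j, MeasurableSet (S j)) (hSsub : ∀ j, S j ⊆ Ici (0 : ℝ))
    (hSpos : ∀ j, 0 < volume (S j))
    (horder : ∀ i j : Fin k, i < j →
      ∀ᵐ x ∂(volume.restrict (S i)), ∀ᵐ y ∂(volume.restrict (S j)), x < y)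
    (w : ℝ → ℝ) (hw : Measurable w)
    (hsign : ∀ j, (∀ᵐ x ∂(volume.restrict (S j)), 0 ≤ w x) ∨
      (∀ᵐ x ∂(volume.restrict (S j)), w x ≤ 0))
    (hnz : ∀ j, (∫ x in S j, w x) ≠ 0)
    (hint : ∀ j, IntegrableOn (fun x => |w x| * x ^ (2 * (k - 1))) (S j)) :
    (Matrix.of fun i j : Fin k => ∫ x in S j, w x * x ^ (2 * (i : ℕ))).det ≠ 0 := by
  intro hdet
  obtain ⟨c, hc0, hc⟩ := Matrix.exists_vecMul_eq_zero_iff.mpr hdet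
  -- the polynomial in `y = x²` and the corresponding function of `x`
  set q : Polynomial ℝ := ∑ i : Fin k, Polynomial.C (c i) * Polynomial.X ^ (i : ℕ) with hq
  set p : ℝ → ℝ := fun x => ∑ i : Fin k, c i * x ^ (2 * (i : ℕ)) with hp
  have hqeval : ∀ x : ℝ, q.eval (x ^ 2) = p x := by
    intro x
    simp [hq, hp, Polynomial.eval_finset_sum, pow_mul]
  have hq0 : q ≠ 0 := by
    obtain ⟨i, hi⟩ := Function.ne_iff.mp hc0
    intro hqz
    apply hi
    have hco : q.coeff (i : ℕ) = c i := by
      rw [hq, Polynomial.finset_sum_coeff, Finset.sum_eq_single i]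
      · simp
      · intro b _ hb
        simp only [Polynomial.coeff_C_mul, Polynomial.coeff_X_pow]
        rw [if_neg (fun h : (i : ℕ) = (b : ℕ) => hb (Fin.val_injective h.symm))]
        ring
      · intro h
        exact absurd (Finset.mem_univ i) h
    rw [hqz] at hco
    simpa using hco.symm
  have hdeg : q.natDegree ≤ k - 1 := by
    rw [hq]
    apply Polynomial.natDegree_sum_le_of_forall_le
    intro i _
    calc (Polynomial.C (c i) * Polynomial.X ^ (i : ℕ)).natDegree
        ≤ (Polynomial.X ^ (i : ℕ) : Polynomial ℝ).natDegree := Polynomial.natDegree_C_mul_le _ _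
      _ = (i : ℕ) := Polynomial.natDegree_X_pow _
      _ ≤ k - 1 := by omega
  -- p is continuous
  have hpc : Continuous p := by
    rw [hp]
    exact continuous_finset_sum _ fun i _ => continuous_const.mul (continuous_pow _)
  -- p vanishes only on a null set
  have hpz : volume {x : ℝ | p x = 0} = 0 := by
    have hcomp : q.comp (Polynomial.X ^ 2) ≠ 0 := by
      intro h0'
      rcases Polynomial.comp_eq_zero_iff.mp h0' with h | ⟨_, h2⟩
      · exact hq0 h
      · have hcoeff : ((Polynomial.X : Polynomial ℝ) ^ 2).coeff 0 = 0 := by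
          simp [Polynomial.coeff_X_pow]
        rw [hcoeff, map_zero] at h2
        exact absurd h2 (pow_ne_zero 2 Polynomial.X_ne_zero)
    have hfin : {x : ℝ | p x = 0}.Finite := by
      refine (Polynomial.finite_setOf_isRoot hcomp).subset ?_
      intro x hx
      simp only [mem_setOf_eq, Polynomial.IsRoot, Polynomial.eval_comp, Polynomial.eval_pow,
        Polynomial.eval_X]
      rw [hqeval x]
      exact hx
    exact hfin.measure_zero _
  -- integrability facts
  have hwint : ∀ j, IntegrableOn w (S j) := by
    intro j
    by_contra hcon
    exact hnz j (integral_undef hcon)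
  have hI : ∀ (j i : Fin k), IntegrableOn (fun x => w x * x ^ (2 * (i : ℕ))) (S j) := by
    intro j i
    have hbound : Integrable (fun x => |w x| + |w x| * x ^ (2 * (k - 1)))
        (volume.restrict (S j)) := (hwint j).abs.add (hint j)
    refine Integrable.mono' hbound
      ((hw.mul (measurable_id.pow_const _)).aestronglyMeasurable) ?_
    filter_upwards [ae_restrict_mem (hSmeas j)] with x hx
    have hx0 : 0 ≤ x := hSsub j hx
    have hle : x ^ (2 * (i : ℕ)) ≤ 1 + x ^ (2 * (k - 1)) := by
      rcases le_total x 1 with hx1 | hx1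
      · have h1 : x ^ (2 * (i : ℕ)) ≤ 1 := pow_le_one₀ hx0 hx1
        have h2 : (0:ℝ) ≤ x ^ (2 * (k - 1)) := pow_nonneg hx0 _
        linarith
      · have h1 : x ^ (2 * (i : ℕ)) ≤ x ^ (2 * (k - 1)) := by
          apply pow_le_pow_right₀ hx1
          have := i.isLt
          omega
        linarith
    have hxm : (0:ℝ) ≤ x ^ (2 * (i : ℕ)) := pow_nonneg hx0 _
    calc ‖w x * x ^ (2 * (i : ℕ))‖ = |w x| * x ^ (2 * (i : ℕ)) := by
          rw [Real.norm_eq_abs, abs_mul, abs_of_nonneg hxm]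
      _ ≤ |w x| * (1 + x ^ (2 * (k - 1))) := mul_le_mul_of_nonneg_left hle (abs_nonneg _)
      _ = |w x| + |w x| * x ^ (2 * (k - 1)) := by ring
  have hwp : ∀ x : ℝ, w x * p x = ∑ i : Fin k, c i * (w x * x ^ (2 * (i : ℕ))) := by
    intro x
    rw [hp, Finset.mul_sum]
    exact Finset.sum_congr rfl fun i _ => by ring
  have hpI : ∀ j, IntegrableOn (fun x => w x * p x) (S j) := by
    intro j
    have heq : (fun x => w x * p x) = fun x => ∑ i : Fin k, c i * (w x * x ^ (2 * (i : ℕ))) :=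
      funext hwp
    rw [heq]
    exact integrable_finset_sum _ fun i _ => (hI j i).const_mul (c i)
  -- orthogonality: ∫_{S j} w p = 0
  have hzero : ∀ j, (∫ x in S j, w x * p x) = 0 := by
    intro j
    have h1 : (∫ x in S j, w x * p x)
        = ∑ i : Fin k, c i * ∫ x in S j, w x * x ^ (2 * (i : ℕ)) := by
      simp_rw [hwp]
      rw [integral_finset_sum _ fun i _ => (hI j i).const_mul (c i)]
      simp_rw [integral_const_mul]
    rw [h1]
    have h2 := congrFun hc j
    simpa [Matrix.vecMul, dotProduct] using h2
  -- both sign sets of p have positive measure inside each S j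
  have hAB : ∀ j, 0 < volume (S j ∩ {x | 0 < p x}) ∧ 0 < volume (S j ∩ {x | p x < 0}) := by
    intro j
    constructor
    · by_contra h
      have h0 : volume (S j ∩ {x | 0 < p x}) = 0 := le_zero_iff.mp (not_lt.mp h)
      have hps : ∀ᵐ x ∂(volume.restrict (S j)), p x ≤ 0 := by
        rw [ae_iff, Measure.restrict_apply' (hSmeas j)]
        refine measure_mono_null ?_ h0
        intro x hx
        exact ⟨hx.2, by simpa using hx.1⟩
      exact aux_sign (hSmeas j) (hsign j) (hnz j) (hpI j) (hzero j) hpz (Or.inr hps)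
    · by_contra h
      have h0 : volume (S j ∩ {x | p x < 0}) = 0 := le_zero_iff.mp (not_lt.mp h)
      have hps : ∀ᵐ x ∂(volume.restrict (S j)), 0 ≤ p x := by
        rw [ae_iff, Measure.restrict_apply' (hSmeas j)]
        refine measure_mono_null ?_ h0
        intro x hx
        exact ⟨hx.2, by simpa using hx.1⟩
      exact aux_sign (hSmeas j) (hsign j) (hnz j) (hpI j) (hzero j) hpz (Or.inl hps)
  -- separating thresholds
  have hsep : ∀ i j : Fin k, i < j →
      ∃ t : ℝ, volume (S i ∩ Ioi t) = 0 ∧ volume (S j ∩ Iio t) = 0 := fun i j hij =>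
    aux_separator (hSmeas i) (hSmeas j) (hSpos i) (hSpos j) (horder i j hij)
  choose t ht1 ht2 using hsep
  -- the per-index null sets
  set N : Fin k → Set ℝ := fun j =>
    (⋃ i, ⋃ h : i < j, S j ∩ Iio (t i j h)) ∪ (⋃ l, ⋃ h : j < l, S j ∩ Ioi (t j l h)) with hNdef
  have hNnull : ∀ j, volume (N j) = 0 := by
    intro j
    apply measure_union_null
    · exact measure_iUnion_null fun i => measure_iUnion_null fun h => ht2 i j h
    · exact measure_iUnion_null fun l => measure_iUnion_null fun h => ht1 j l h
  have hbnd : ∀ (j : Fin k) (x : ℝ), x ∈ S j → x ∉ N j →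
      (∀ (i : Fin k) (h : i < j), t i j h ≤ x) ∧ (∀ (l : Fin k) (h : j < l), x ≤ t j l h) := by
    intro j x hxS hxN
    constructor
    · intro i h
      by_contra hlt
      push_neg at hlt
      exact hxN (Or.inl (mem_iUnion.2 ⟨i, mem_iUnion.2 ⟨h, hxS, hlt⟩⟩))
    · intro l h
      by_contra hlt
      push_neg at hlt
      exact hxN (Or.inr (mem_iUnion.2 ⟨l, mem_iUnion.2 ⟨h, hxS, hlt⟩⟩))
  -- a nonnegative root of p strictly between the thresholds, for each j
  have hex : ∀ j : Fin k, ∃ r : ℝ, 0 ≤ r ∧ p r = 0 ∧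
      (∀ (i : Fin k) (h : i < j), t i j h < r) ∧ (∀ (l : Fin k) (h : j < l), r < t j l h) := by
    intro j
    obtain ⟨a, haE, haN⟩ := aux_diff_nonempty (hNnull j) (hAB j).1
    obtain ⟨b, hbE, hbN⟩ := aux_diff_nonempty (hNnull j) (hAB j).2
    have haS : a ∈ S j := haE.1
    have hbS : b ∈ S j := hbE.1
    have hap : 0 < p a := haE.2
    have hbp : p b < 0 := hbE.2
    obtain ⟨ha1, ha2⟩ := hbnd j a haS haN
    obtain ⟨hb1, hb2⟩ := hbnd j b hbS hbN
    have hroot : ∃ r, r ∈ Ioo (min a b) (max a b) ∧ p r = 0 := by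
      rcases le_total a b with hab | hab
      · have h1 : (0:ℝ) ∈ Ioo (p b) (p a) := ⟨hbp, hap⟩
        obtain ⟨r, hr, hr0⟩ := intermediate_value_Ioo' hab hpc.continuousOn h1
        exact ⟨r, by rwa [min_eq_left hab, max_eq_right hab], hr0⟩
      · have h1 : (0:ℝ) ∈ Ioo (p b) (p a) := ⟨hbp, hap⟩
        obtain ⟨r, hr, hr0⟩ := intermediate_value_Ioo hab hpc.continuousOn h1
        exact ⟨r, by rwa [min_eq_right hab, max_eq_left hab], hr0⟩
    obtain ⟨r, hrI, hr0⟩ := hroot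
    have h0a : 0 ≤ a := hSsub j haS
    have h0b : 0 ≤ b := hSsub j hbS
    refine ⟨r, le_of_lt (lt_of_le_of_lt (le_min h0a h0b) hrI.1), hr0, ?_, ?_⟩
    · intro i h
      exact lt_of_le_of_lt (le_min (ha1 i h) (hb1 i h)) hrI.1
    · intro l h
      exact lt_of_lt_of_le hrI.2 (max_le (ha2 l h) (hb2 l h))
  choose r hr0 hrz hrlow hrhigh using hex
  have hmono : ∀ i j : Fin k, i < j → r i < r j := fun i j hij =>
    lt_trans (hrhigh i j hij) (hrlow j i hij)
  have hsm : StrictMono fun j : Fin k => (r j) ^ 2 :=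
    fun i j h => pow_lt_pow_left₀ (hmono i j h) (hr0 i) two_ne_zero
  have hroots : ∀ j : Fin k, ((r j) ^ 2) ∈ q.roots := by
    intro j
    rw [Polynomial.mem_roots hq0]
    show q.eval ((r j) ^ 2) = 0
    rw [hqeval (r j)]
    exact hrz j
  have h1 : (Finset.univ.image fun j : Fin k => (r j) ^ 2) ⊆ q.roots.toFinset := by
    intro x hx
    obtain ⟨j, _, rfl⟩ := Finset.mem_image.mp hx
    exact Multiset.mem_toFinset.2 (hroots j)
  have h2 : k ≤ q.roots.toFinset.card := by
    calc k = (Finset.univ.image fun j : Fin k => (r j) ^ 2).card := by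
          rw [Finset.card_image_of_injective _ hsm.injective, Finset.card_univ, Fintype.card_fin]
      _ ≤ q.roots.toFinset.card := Finset.card_le_card h1
  have h3 : q.roots.toFinset.card ≤ k - 1 :=
    le_trans (Multiset.toFinset_card_le _) (le_trans (Polynomial.card_roots' q) hdeg)
  omega
end

section
/- Let d ≥ 1 be an integer and q ≥ 2 an even integer, and let g : [0,∞) → ℝ be measurable with ∫₀^∞ x^{d−1+i}|g(x)| dx < ∞ for all 0 ≤ i ≤ q+1. Suppose that either (a) B_{d,0}(g) = 1/b_d, B_{d,i}(g) = 0 for every even i with 2 ≤ i ≤ q−2, and B_{d,q}(g) ≠ 0, or (b) B_{d,1}(g) = −d/b_d, B_{d,i}(g) = 0 for every odd i with 3 ≤ i ≤ q−1, and B_{d,q+1}(g) ≠ 0. If g changes its sign exactly k times on [0,∞), then k ≥ q/2 − 1; that is, g changes its sign at least q/2 − 1 times on [0,∞). -/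
open MeasureTheory Set Filter Topology

lemma altern (k : ℕ) (s : Fin (k + 1) → ℝ)
    (halt : ∀ j : Fin k, s j.succ = - s j.castSucc) :
    ∀ n (hn : n < k + 1), s ⟨n, hn⟩ = s 0 * (-1 : ℝ) ^ n := by
  intro n
  induction n with
  | zero => intro hn; simp
  | succ n ih =>
    intro hn
    have hnk : n < k := by omega
    have h1 : (⟨n + 1, hn⟩ : Fin (k + 1)) = (⟨n, hnk⟩ : Fin k).succ := rfl
    have h2 : ((⟨n, hnk⟩ : Fin k).castSucc : Fin (k + 1)) = ⟨n, by omega⟩ := rfl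
    rw [h1, halt, h2, ih (by omega)]
    ring

lemma signprod : ∀ (k j : ℕ), j ≤ k → ∀ f : Fin k → ℝ,
    (∀ m : Fin k, (m : ℕ) < j → 0 ≤ f m) →
    (∀ m : Fin k, j ≤ (m : ℕ) → f m ≤ 0) →
    0 ≤ (-1 : ℝ) ^ (k + j) * ∏ m, f m := by
  intro k
  induction k with
  | zero =>
    intro j hj f h1 h2
    interval_cases j
    simp
  | succ k ih =>
    intro j hj f h1 h2
    rcases Nat.lt_or_ge j (k + 1) with h | h
    · have hjk : j ≤ k := by omega
      have hlast : f (Fin.last k) ≤ 0 := h2 _ (by simp [Fin.last]; omega)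
      have hih := ih j hjk (fun m => f m.castSucc)
        (fun m hm => h1 _ (by simpa using hm))
        (fun m hm => h2 _ (by simpa using hm))
      have hexpand : (-1 : ℝ) ^ (k + 1 + j) * ∏ m : Fin (k + 1), f m
          = ((-1 : ℝ) ^ (k + j) * ∏ m : Fin k, f m.castSucc) * (- f (Fin.last k)) := by
        rw [Fin.prod_univ_castSucc, show k + 1 + j = (k + j) + 1 by omega, pow_succ]
        ring
      rw [hexpand]
      exact mul_nonneg hih (by linarith)
    · have hje : j = k + 1 := by omega
      subst hje
      have hnn : 0 ≤ ∏ m : Fin (k + 1), f m :=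
        Finset.prod_nonneg (fun m _ => h1 m m.isLt)
      have hpow : (-1 : ℝ) ^ (k + 1 + (k + 1)) = 1 := Even.neg_one_pow ⟨k + 1, rfl⟩
      rw [hpow, one_mul]
      exact hnn

lemma key_lemma (d c k : ℕ) (g : ℝ → ℝ) (hmeas : Measurable g)
    (hint : ∀ i ≤ k, IntegrableOn (fun x => x ^ (d - 1 + (c + 2 * i)) * |g x|) (Ioi 0))
    (hzero : ∀ i ≤ k, Bmom d (c + 2 * i) g = 0)
    (hk : ChangesSign g k) :
    ∀ᵐ x ∂(volume.restrict (Ioi (0 : ℝ))), g x = 0 := by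
  classical
  obtain ⟨t, s, hmono, ht0, htop, hs, halt, hsign⟩ := hk
  -- interior breakpoints are finite positive reals
  have hrex : ∀ m : Fin k, ∃ rm : ℝ, 0 < rm ∧ t m.succ.castSucc = (rm : EReal) := by
    intro m
    have h0 : (0 : Fin (k + 2)) < m.succ.castSucc := by
      rw [Fin.lt_def]; simp
    have hlt1 : t 0 < t m.succ.castSucc := hmono h0
    rw [ht0] at hlt1
    have hlt2 : t m.succ.castSucc < t (Fin.last (k + 1)) := by
      apply hmono
      rw [Fin.lt_def]
      simp only [Fin.coe_castSucc, Fin.val_succ, Fin.val_last]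
      have := m.isLt; omega
    rw [htop] at hlt2
    refine ⟨(t m.succ.castSucc).toReal, ?_, (EReal.coe_toReal hlt2.ne (ne_bot_of_gt hlt1)).symm⟩
    have := EReal.coe_toReal hlt2.ne (ne_bot_of_gt hlt1)
    rw [← EReal.coe_lt_coe_iff, this, EReal.coe_zero]
    exact hlt1
  choose r hrpos hrt using hrex
  -- locate any positive real in one of the sign intervals
  have hmem : ∀ x : ℝ, 0 < x →
      ∃ j : Fin (k + 1), t j.castSucc ≤ (x : EReal) ∧ (x : EReal) ≤ t j.succ := by
    intro x hx
    classical
    set S : Finset (Fin (k + 1)) :=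
      Finset.univ.filter (fun j : Fin (k + 1) => t j.castSucc ≤ (x : EReal)) with hS
    have h0S : (0 : Fin (k + 1)) ∈ S := by
      simp only [hS, Finset.mem_filter, Finset.mem_univ, true_and]
      have h0 : ((0 : Fin (k + 1)).castSucc : Fin (k + 2)) = 0 := rfl
      rw [h0, ht0, ← EReal.coe_zero, EReal.coe_le_coe_iff]
      exact hx.le
    have hne : S.Nonempty := ⟨0, h0S⟩
    refine ⟨S.max' hne, ?_, ?_⟩
    · have := S.max'_mem hne
      simp only [hS, Finset.mem_filter, Finset.mem_univ, true_and] at this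
      exact this
    · by_contra hcon
      push_neg at hcon
      set j := S.max' hne with hj
      rcases Nat.lt_or_ge (j : ℕ) k with h | h
      · set j' : Fin (k + 1) := ⟨(j : ℕ) + 1, by omega⟩ with hj'
        have hcast : (j'.castSucc : Fin (k + 2)) = j.succ := by
          apply Fin.ext; simp [hj']
        have hj'S : j' ∈ S := by
          simp only [hS, Finset.mem_filter, Finset.mem_univ, true_and]
          rw [hcast]
          exact hcon.le
        have hle := S.le_max' j' hj'S
        rw [Fin.le_def] at hle
        simp [hj'] at hle
        exact lt_irrefl _ hle
      · have hjlast : j = Fin.last k := by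
          apply Fin.ext; simp [Fin.last]; omega
        have hsucc : (j.succ : Fin (k + 2)) = Fin.last (k + 1) := by
          rw [hjlast]; rfl
        rw [hsucc, htop] at hcon
        exact absurd hcon not_top_lt
  -- sign of the auxiliary integrand
  have hstep : ∀ x : ℝ, 0 < x →
      0 ≤ (s 0 * (-1 : ℝ) ^ k) * ((∏ m, (x ^ 2 - r m ^ 2)) * g x) := by
    intro x hx
    obtain ⟨j, hj1, hj2⟩ := hmem x hx
    have hgs : 0 ≤ s j * g x := (hsign j).1 x hj1 hj2
    have hpos : ∀ m : Fin k, (m : ℕ) < (j : ℕ) → 0 ≤ x ^ 2 - r m ^ 2 := by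
      intro m hm
      have hle : t m.succ.castSucc ≤ t j.castSucc := by
        apply hmono.monotone
        rw [Fin.le_def]; simp; omega
      rw [hrt m] at hle
      have hrx : r m ≤ x := by
        rw [← EReal.coe_le_coe_iff]
        exact hle.trans hj1
      nlinarith [hrpos m]
    have hneg : ∀ m : Fin k, (j : ℕ) ≤ (m : ℕ) → x ^ 2 - r m ^ 2 ≤ 0 := by
      intro m hm
      have hle : t j.succ ≤ t m.succ.castSucc := by
        apply hmono.monotone
        rw [Fin.le_def]; simp; omega
      rw [hrt m] at hle
      have hrx : x ≤ r m := by
        rw [← EReal.coe_le_coe_iff]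
        exact hj2.trans hle
      nlinarith [hrpos m]
    have hprod := signprod k (j : ℕ) (by omega) (fun m => x ^ 2 - r m ^ 2) hpos hneg
    have hsj : s j = s 0 * (-1 : ℝ) ^ (j : ℕ) := by
      have := altern k s halt (j : ℕ) j.isLt
      simpa using this
    have hsq : ((-1 : ℝ) ^ (j : ℕ)) * ((-1 : ℝ) ^ (j : ℕ)) = 1 := by
      rw [← pow_add]
      exact Even.neg_one_pow ⟨(j : ℕ), rfl⟩
    have heq : (s 0 * (-1 : ℝ) ^ k) * ((∏ m, (x ^ 2 - r m ^ 2)) * g x)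
        = (s j * g x) * ((-1 : ℝ) ^ (k + (j : ℕ)) * ∏ m, (x ^ 2 - r m ^ 2)) := by
      rw [hsj, pow_add]
      linear_combination (-(s 0 * (-1 : ℝ) ^ k * (∏ m, (x ^ 2 - r m ^ 2)) * g x)) * hsq
    rw [heq]
    exact mul_nonneg hgs hprod
  -- integrability and vanishing integral of each monomial term
  have hterm : ∀ T ∈ (Finset.univ : Finset (Fin k)).powerset,
      IntegrableOn (fun x => x ^ (d - 1 + (c + 2 * T.card)) * g x) (Ioi 0) volume := by
    intro T hT
    have hTk : T.card ≤ k := by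
      have := Finset.card_le_card (Finset.mem_powerset.mp hT)
      simpa using this
    apply MeasureTheory.Integrable.mono' (hint T.card hTk)
    · exact ((measurable_id.pow_const _).mul hmeas).aestronglyMeasurable
    · filter_upwards [MeasureTheory.ae_restrict_mem measurableSet_Ioi] with x hx
      have hx0 : (0 : ℝ) < x := hx
      rw [Real.norm_eq_abs, abs_mul, abs_pow, abs_of_pos hx0]
  -- expansion of the polynomial integrand
  have hexp : ∀ x : ℝ, x ^ (d - 1) * (x ^ c * ((∏ m, (x ^ 2 - r m ^ 2)) * g x))
      = ∑ T ∈ (Finset.univ : Finset (Fin k)).powerset,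
          (∏ m ∈ Finset.univ \ T, (-(r m ^ 2))) *
            (x ^ (d - 1 + (c + 2 * T.card)) * g x) := by
    intro x
    have h1 : (∏ m, (x ^ 2 - r m ^ 2))
        = ∑ T ∈ (Finset.univ : Finset (Fin k)).powerset,
            (x ^ 2) ^ T.card * ∏ m ∈ Finset.univ \ T, (-(r m ^ 2)) := by
      have h2 := Finset.prod_add (fun _ : Fin k => x ^ 2) (fun m => -(r m ^ 2)) Finset.univ
      simp only [sub_eq_add_neg]
      rw [h2]
      refine Finset.sum_congr rfl (fun T hT => ?_)
      rw [Finset.prod_const]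
    rw [h1, Finset.sum_mul, Finset.mul_sum, Finset.mul_sum]
    refine Finset.sum_congr rfl (fun T hT => ?_)
    rw [pow_add, pow_add, pow_mul]
    ring
  have hFint : IntegrableOn
      (fun x => x ^ (d - 1) * (x ^ c * ((∏ m, (x ^ 2 - r m ^ 2)) * g x))) (Ioi 0) volume := by
    rw [show (fun x : ℝ => x ^ (d - 1) * (x ^ c * ((∏ m, (x ^ 2 - r m ^ 2)) * g x)))
        = fun x => ∑ T ∈ (Finset.univ : Finset (Fin k)).powerset,
            (∏ m ∈ Finset.univ \ T, (-(r m ^ 2))) *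
              (x ^ (d - 1 + (c + 2 * T.card)) * g x) from funext hexp]
    exact MeasureTheory.integrable_finset_sum _ (fun T hT => (hterm T hT).const_mul _)
  have hFzero : ∫ x in Ioi (0 : ℝ),
      x ^ (d - 1) * (x ^ c * ((∏ m, (x ^ 2 - r m ^ 2)) * g x)) = 0 := by
    rw [show (fun x : ℝ => x ^ (d - 1) * (x ^ c * ((∏ m, (x ^ 2 - r m ^ 2)) * g x)))
        = fun x => ∑ T ∈ (Finset.univ : Finset (Fin k)).powerset,
            (∏ m ∈ Finset.univ \ T, (-(r m ^ 2))) *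
              (x ^ (d - 1 + (c + 2 * T.card)) * g x) from funext hexp]
    rw [MeasureTheory.integral_finset_sum _ (fun T hT => (hterm T hT).const_mul _)]
    apply Finset.sum_eq_zero
    intro T hT
    have hTk : T.card ≤ k := by
      have := Finset.card_le_card (Finset.mem_powerset.mp hT)
      simpa using this
    rw [MeasureTheory.integral_const_mul]
    have hB : ∫ x in Ioi (0 : ℝ), x ^ (d - 1 + (c + 2 * T.card)) * g x
        = Bmom d (c + 2 * T.card) g := rfl
    rw [hB, hzero _ hTk, mul_zero]
  -- the full integrand vanishes a.e.
  have hεne : (s 0 * (-1 : ℝ) ^ k) ≠ 0 := by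
    apply mul_ne_zero
    · rcases hs 0 with h | h <;> rw [h] <;> norm_num
    · exact pow_ne_zero _ (by norm_num)
  have hstep2 : ∀ x : ℝ, 0 < x →
      0 ≤ (s 0 * (-1 : ℝ) ^ k) *
        (x ^ (d - 1) * (x ^ c * ((∏ m, (x ^ 2 - r m ^ 2)) * g x))) := by
    intro x hx
    have h1 := hstep x hx
    have h2 : 0 ≤ x ^ (d - 1) * x ^ c := by positivity
    calc (0 : ℝ) = (x ^ (d - 1) * x ^ c) * 0 := by ring
    _ ≤ (x ^ (d - 1) * x ^ c) *
        ((s 0 * (-1 : ℝ) ^ k) * ((∏ m, (x ^ 2 - r m ^ 2)) * g x)) := by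
        exact mul_le_mul_of_nonneg_left h1 h2
    _ = (s 0 * (-1 : ℝ) ^ k) *
        (x ^ (d - 1) * (x ^ c * ((∏ m, (x ^ 2 - r m ^ 2)) * g x))) := by ring
  have hnn : (0 : ℝ → ℝ) ≤ᵐ[volume.restrict (Ioi (0 : ℝ))]
      fun x => (s 0 * (-1 : ℝ) ^ k) *
        (x ^ (d - 1) * (x ^ c * ((∏ m, (x ^ 2 - r m ^ 2)) * g x))) := by
    filter_upwards [MeasureTheory.ae_restrict_mem measurableSet_Ioi] with x hx
    simpa using hstep2 x hx
  have hFae : (fun x => (s 0 * (-1 : ℝ) ^ k) *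
        (x ^ (d - 1) * (x ^ c * ((∏ m, (x ^ 2 - r m ^ 2)) * g x))))
      =ᵐ[volume.restrict (Ioi (0 : ℝ))] 0 := by
    refine (MeasureTheory.integral_eq_zero_iff_of_nonneg_ae hnn (hFint.const_mul _)).mp ?_
    rw [MeasureTheory.integral_const_mul, hFzero, mul_zero]
  have hr_ae : ∀ᵐ x ∂(volume.restrict (Ioi (0 : ℝ))), ∀ m : Fin k, x ≠ r m := by
    apply MeasureTheory.ae_restrict_of_ae
    rw [MeasureTheory.ae_all_iff]
    intro m
    have h0 : volume ({r m} : Set ℝ) = 0 := MeasureTheory.measure_singleton _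
    rw [MeasureTheory.ae_iff]
    convert h0 using 2
    ext x
    simp
  filter_upwards [hFae, hr_ae, MeasureTheory.ae_restrict_mem measurableSet_Ioi]
    with x hF0 hxr hx
  have hx0 : (0 : ℝ) < x := hx
  simp only [Pi.zero_apply] at hF0
  have hprodne : (∏ m, (x ^ 2 - r m ^ 2)) ≠ 0 := by
    rw [Finset.prod_ne_zero_iff]
    intro m _ hcon
    have h2 : (x - r m) * (x + r m) = 0 := by linear_combination hcon
    rcases mul_eq_zero.mp h2 with h | h
    · exact hxr m (by linarith)
    · linarith [hrpos m]
  by_contra hg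
  exact (mul_ne_zero hεne (mul_ne_zero (pow_ne_zero _ hx0.ne')
    (mul_ne_zero (pow_ne_zero _ hx0.ne') (mul_ne_zero hprodne hg)))) hF0

/-- A kernel whose radial moments satisfy either the even-moment conditions (a) up to
order `q` or the odd-moment conditions (b) up to order `q+1` must change its sign at least
`q/2 − 1` times on `[0,∞)`. -/
theorem min_sign_changes (d q : ℕ) (hd : 1 ≤ d) (hq : 2 ≤ q) (hqe : Even q)
    (g : ℝ → ℝ) (hmeas : Measurable g)
    (hint : ∀ i ≤ q + 1, IntegrableOn (fun x => x ^ (d - 1 + i) * |g x|) (Ioi 0))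
    (hmom :
      (Bmom d 0 g = (bconst d)⁻¹ ∧
        (∀ i, Even i → 2 ≤ i → i ≤ q - 2 → Bmom d i g = 0) ∧ Bmom d q g ≠ 0) ∨
      (Bmom d 1 g = -(d : ℝ) / bconst d ∧
        (∀ i, Odd i → 3 ≤ i → i ≤ q - 1 → Bmom d i g = 0) ∧ Bmom d (q + 1) g ≠ 0))
    (k : ℕ) (hk : ChangesSign g k) :
    q / 2 - 1 ≤ k := by
  by_contra hcon
  push_neg at hcon
  have hk2 : 2 * k + 4 ≤ q := by
    obtain ⟨m, hm⟩ := hqe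
    omega
  have hdpos : (0 : ℝ) < d := by exact_mod_cast Nat.lt_of_lt_of_le Nat.zero_lt_one hd
  have hΓ : 0 < Real.Gamma ((d : ℝ) / 2) := Real.Gamma_pos_of_pos (by positivity)
  have hbpos : 0 < bconst d := by
    unfold bconst
    apply div_pos _ hΓ
    have := Real.pi_pos
    positivity
  rcases hmom with ⟨h0, hz, -⟩ | ⟨h1, hz, -⟩
  · have hg0 := key_lemma d 2 k g hmeas
      (fun i hi => hint (2 + 2 * i) (by omega))
      (fun i hi => hz (2 + 2 * i) ⟨1 + i, by ring⟩ (by omega) (by omega))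
      hk
    have hzero0 : Bmom d 0 g = 0 := by
      unfold Bmom
      apply MeasureTheory.integral_eq_zero_of_ae
      filter_upwards [hg0] with x hx
      simp [hx]
    rw [h0] at hzero0
    exact (inv_ne_zero hbpos.ne') hzero0
  · have hg0 := key_lemma d 3 k g hmeas
      (fun i hi => hint (3 + 2 * i) (by omega))
      (fun i hi => hz (3 + 2 * i) ⟨1 + i, by ring⟩ (by omega) (by omega))
      hk
    have hzero1 : Bmom d 1 g = 0 := by
      unfold Bmom
      apply MeasureTheory.integral_eq_zero_of_ae
      filter_upwards [hg0] with x hx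
      simp [hx]
    rw [h1, div_eq_zero_iff] at hzero1
    rcases hzero1 with h | h
    · linarith
    · exact hbpos.ne' h
end

section
/- Let d ≥ 1 be an integer and let G : [0,∞) → ℝ satisfy the q-th order radial moment condition for q ∈ {2, 4}, with ∫₀^∞ x^{d−1+i}|G(x)| dx < ∞ for 0 ≤ i ≤ q. (i) If q = 2 and G changes its sign 0 times on [0,∞) (i.e., G is of one weak sign and not identically zero), then G ≥ 0 on [0,∞) and B_{d,2}(G) > 0. (ii) If q = 4 and G changes its sign exactly once on [0,∞), at a point ρ > 0 (G is of one weak sign on [0,ρ] and of the opposite weak sign on [ρ,∞)), then G ≥ 0 on [0,ρ], G ≤ 0 on [ρ,∞), and B_{d,4}(G) < 0. In both cases the sign of B_{d,q}(G) equals (−1)^{q/2+1}. -/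
open MeasureTheory Set Filter Topology

/-- Sign structure of minimum-sign-change kernels of order `q ∈ {2,4}`.
(i) A 2nd-order kernel of constant weak sign (not identically zero) is nonnegative and has
`B_{d,2}(G) > 0`. (ii) A 4th-order kernel changing its sign exactly once, at `ρ > 0`, is
nonnegative on `[0,ρ]`, nonpositive on `[ρ,∞)`, and has `B_{d,4}(G) < 0`.
In both cases the sign of `B_{d,q}(G)` is `(−1)^{q/2+1}`. -/
theorem sign_structure_min_sign_change_kernels (d : ℕ) (hd : 1 ≤ d) :
    (∀ G : ℝ → ℝ,
      (∀ i ≤ 2, IntegrableOn (fun x => x ^ (d - 1 + i) * |G x|) (Ioi 0)) →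
      MomentCond d 2 G →
      ChangesSign G 0 →
      (∀ x : ℝ, 0 ≤ x → 0 ≤ G x) ∧ 0 < Bmom d 2 G) ∧
    (∀ G : ℝ → ℝ,
      (∀ i ≤ 4, IntegrableOn (fun x => x ^ (d - 1 + i) * |G x|) (Ioi 0)) →
      MomentCond d 4 G →
      ∀ ρ : ℝ, 0 < ρ →
        ((∀ x ∈ Icc (0 : ℝ) ρ, 0 ≤ G x) ∨ (∀ x ∈ Icc (0 : ℝ) ρ, G x ≤ 0)) →
        ((∀ x ∈ Ici ρ, 0 ≤ G x) ∨ (∀ x ∈ Ici ρ, G x ≤ 0)) →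
        (∃ x ∈ Icc (0 : ℝ) ρ, G x ≠ 0) →
        (∃ x ∈ Ici ρ, G x ≠ 0) →
        (∀ x ∈ Icc (0 : ℝ) ρ, ∀ y ∈ Ici ρ, G x * G y ≤ 0) →
        (∀ x ∈ Icc (0 : ℝ) ρ, 0 ≤ G x) ∧ (∀ x ∈ Ici ρ, G x ≤ 0) ∧ Bmom d 4 G < 0) := by
  have hdpos : (0 : ℝ) < d := by exact_mod_cast hd
  have hb : 0 < bconst d := by
    unfold bconst
    have h1 : 0 < Real.Gamma ((d : ℝ) / 2) := Real.Gamma_pos_of_pos (by positivity)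
    positivity
  have hbinv : 0 < (bconst d)⁻¹ := inv_pos.mpr hb
  constructor
  · intro G _ hM hS
    obtain ⟨hI, h0, _, h2ne⟩ := hM
    obtain ⟨t, s, _, ht0, htlast, hs1, _, hsign⟩ := hS
    have hpos := (hsign 0).1
    have e1 : t ((0 : Fin 1).castSucc) = (0 : EReal) := by
      rw [show ((0 : Fin 1).castSucc) = 0 from rfl, ht0]
    have e2 : t ((0 : Fin 1).succ) = ⊤ := by
      rw [show ((0 : Fin 1).succ) = Fin.last 1 from rfl, htlast]
    have hsg : ∀ x : ℝ, 0 ≤ x → 0 ≤ s 0 * G x := by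
      intro x hx
      exact hpos x (by rw [e1]; exact_mod_cast hx) (by rw [e2]; exact le_top)
    have hsval : s 0 = 1 := by
      rcases hs1 0 with h | h
      · exact h
      · exfalso
        have hneg : ∀ x ∈ Ioi (0 : ℝ), x ^ (d - 1 + 0) * G x ≤ 0 := by
          intro x hx
          have := hsg x (le_of_lt hx)
          rw [h] at this
          have hGx : G x ≤ 0 := by linarith
          have hx0 : (0:ℝ) < x := hx
          exact mul_nonpos_of_nonneg_of_nonpos (by positivity) hGx
        have : Bmom d 0 G ≤ 0 := setIntegral_nonpos measurableSet_Ioi hneg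
        rw [h0] at this
        linarith
    have hGnn : ∀ x : ℝ, 0 ≤ x → 0 ≤ G x := by
      intro x hx
      have := hsg x hx
      rw [hsval] at this; linarith
    refine ⟨hGnn, ?_⟩
    have hnn : 0 ≤ Bmom d 2 G := by
      apply setIntegral_nonneg measurableSet_Ioi
      intro x hx
      have hx0 : (0:ℝ) < x := hx
      exact mul_nonneg (by positivity) (hGnn x (le_of_lt hx0))
    exact lt_of_le_of_ne hnn (Ne.symm h2ne)
  · intro G _ hM ρ hρ hA hB hxA hxB hcross
    obtain ⟨hI, h0, h2, h4ne⟩ := hM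
    have hI0 := hI 0 Even.zero (by norm_num)
    have hI2 := hI 2 (by decide) (by norm_num)
    have hI4 := hI 4 (by decide) (by norm_num)
    have hB2 : Bmom d 2 G = 0 := h2 2 (by decide) le_rfl (by norm_num)
    -- key integral identities
    have feq2 : (fun x : ℝ => x ^ (d - 1) * (x ^ 2 - ρ ^ 2) * G x)
        = fun x : ℝ => x ^ (d - 1 + 2) * G x - ρ ^ 2 * (x ^ (d - 1 + 0) * G x) := by
      funext x; rw [pow_add, pow_add]; ring
    have feq4 : (fun x : ℝ => x ^ (d - 1 + 2) * (x ^ 2 - ρ ^ 2) * G x)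
        = fun x : ℝ => x ^ (d - 1 + 4) * G x - ρ ^ 2 * (x ^ (d - 1 + 2) * G x) := by
      funext x; rw [pow_add, pow_add]; ring
    have key2 : ∫ x in Ioi (0 : ℝ), x ^ (d - 1) * (x ^ 2 - ρ ^ 2) * G x
        = Bmom d 2 G - ρ ^ 2 * Bmom d 0 G := by
      rw [feq2, integral_sub hI2 (hI0.const_mul _), integral_const_mul]
      rfl
    have key4 : ∫ x in Ioi (0 : ℝ), x ^ (d - 1 + 2) * (x ^ 2 - ρ ^ 2) * G x
        = Bmom d 4 G - ρ ^ 2 * Bmom d 2 G := by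
      rw [feq4, integral_sub hI4 (hI2.const_mul _), integral_const_mul]
      rfl
    -- determine signs on the two intervals
    obtain ⟨xa, hxaI, hxane⟩ := hxA
    obtain ⟨xb, hxbI, hxbne⟩ := hxB
    have hmain : (∀ x ∈ Icc (0 : ℝ) ρ, 0 ≤ G x) ∧ (∀ x ∈ Ici ρ, G x ≤ 0) := by
      rcases hA with hA | hA <;> rcases hB with hB | hB
      · exfalso
        have hxa : 0 < G xa := lt_of_le_of_ne (hA xa hxaI) (Ne.symm hxane)
        have hxb : 0 < G xb := lt_of_le_of_ne (hB xb hxbI) (Ne.symm hxbne)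
        have := hcross xa hxaI xb hxbI
        nlinarith
      · exact ⟨hA, hB⟩
      · exfalso
        -- G ≤ 0 on [0,ρ], G ≥ 0 on [ρ,∞): integrand of key2 is ≥ 0 on (0,∞)
        have hnn : ∀ x ∈ Ioi (0 : ℝ), 0 ≤ x ^ (d - 1) * (x ^ 2 - ρ ^ 2) * G x := by
          intro x hx
          have hx0 : (0 : ℝ) < x := hx
          rcases le_or_gt x ρ with hle | hlt
          · have hG : G x ≤ 0 := hA x ⟨le_of_lt hx0, hle⟩
            have hq : x ^ 2 - ρ ^ 2 ≤ 0 := by nlinarith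
            have : 0 ≤ (x ^ 2 - ρ ^ 2) * G x := by nlinarith
            rw [mul_assoc]
            exact mul_nonneg (by positivity) this
          · have hG : 0 ≤ G x := hB x (le_of_lt hlt)
            have hq : 0 ≤ x ^ 2 - ρ ^ 2 := by nlinarith
            rw [mul_assoc]
            exact mul_nonneg (by positivity) (mul_nonneg hq hG)
        have h1 : 0 ≤ Bmom d 2 G - ρ ^ 2 * Bmom d 0 G := by
          rw [← key2]; exact setIntegral_nonneg measurableSet_Ioi hnn
        rw [hB2, h0] at h1
        nlinarith [mul_pos (pow_pos hρ 2) hbinv]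
      · exfalso
        have hxa : G xa < 0 := lt_of_le_of_ne (hA xa hxaI) hxane
        have hxb : G xb < 0 := lt_of_le_of_ne (hB xb hxbI) hxbne
        have := hcross xa hxaI xb hxbI
        nlinarith
    obtain ⟨hGp, hGn⟩ := hmain
    refine ⟨hGp, hGn, ?_⟩
    have hnp : ∀ x ∈ Ioi (0 : ℝ), x ^ (d - 1 + 2) * (x ^ 2 - ρ ^ 2) * G x ≤ 0 := by
      intro x hx
      have hx0 : (0 : ℝ) < x := hx
      rcases le_or_gt x ρ with hle | hlt
      · have hG : 0 ≤ G x := hGp x ⟨le_of_lt hx0, hle⟩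
        have hq : x ^ 2 - ρ ^ 2 ≤ 0 := by nlinarith
        rw [mul_assoc]
        exact mul_nonpos_of_nonneg_of_nonpos (by positivity)
          (mul_nonpos_of_nonpos_of_nonneg hq hG)
      · have hG : G x ≤ 0 := hGn x (le_of_lt hlt)
        have hq : 0 ≤ x ^ 2 - ρ ^ 2 := by nlinarith
        rw [mul_assoc]
        exact mul_nonpos_of_nonneg_of_nonpos (by positivity)
          (mul_nonpos_of_nonneg_of_nonpos hq hG)
    have h1 : Bmom d 4 G - ρ ^ 2 * Bmom d 2 G ≤ 0 := by
      rw [← key4]; exact setIntegral_nonpos measurableSet_Ioi hnp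
    rw [hB2] at h1
    have h2' : Bmom d 4 G ≤ 0 := by linarith
    exact lt_of_le_of_ne h2' h4ne
end
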